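/- arXiv:2103.10152 — 3 statements merged into one kernel-verified Lean document; each statement's English description precedes it below -/
import Mathlib

section
/- Let f:(0,∞)→(0,∞) be a function such that there exist constants c₁,p>0 with s^p f(s) ≤ c₁ t^p f(t) for all 0<s≤t. Suppose (Poly-R₁) holds. Then for every T>0 there exists a constant C=C(T,c₁,p)>0 such that for all t∈(0,T] and all 0<r≤1/φ^{−1}(1/t), E[f(S_t); S_t≤r] ≤ C f(r) exp(−(t/2)(H∘σ)(t,r)). Moreover, if (Poly-∞) holds, then there exists C=C(c₁,p)>0 such that the inequality holds for all t>0 and all 0<r≤1/φ^{−1}(1/t). -/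
open MeasureTheory Real Set
open scoped ENNReal

/-- Tail of the Lévy measure: `w(r) = ν((r,∞))`. -/
noncomputable def levyTail (ν : Measure ℝ) (r : ℝ) : ℝ := (ν (Set.Ioi r)).toReal

/-- Laplace exponent `φ(λ) = ∫ (1 - e^{-λ s}) ν(ds)`. -/
noncomputable def laplaceExp (ν : Measure ℝ) (lam : ℝ) : ℝ :=
  ∫ s, (1 - Real.exp (-(lam * s))) ∂ν

/-- Condition (Poly-R₁); (Poly-∞) is the case `R₁ = ⊤`. -/
def PolyCond (ν : Measure ℝ) (R₁ : ℝ≥0∞) (c c' β₁ β₂ : ℝ) : Prop :=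
  ∀ r R : ℝ, 0 < r → r ≤ R → ENNReal.ofReal R < R₁ →
    c * (R / r) ^ β₁ ≤ levyTail ν r / levyTail ν R ∧
      levyTail ν r / levyTail ν R ≤ c' * (R / r) ^ β₂

/-- `ν` is the Lévy measure of a driftless subordinator. -/
structure IsLevyMeasure (ν : Measure ℝ) : Prop where
  supp : ν (Set.Iic 0) = 0
  tail_fin : ∀ r : ℝ, 0 < r → ν (Set.Ioi r) < ⊤
  integ : IntegrableOn (fun s => s) (Set.Ioc (0:ℝ) 1) ν

/-- `μ t` is the law of `S_t` for the driftless subordinator with Lévy measure `ν`. -/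
structure IsSubordinatorLaw (ν : Measure ℝ) (μ : ℝ → Measure ℝ) : Prop where
  levy : IsLevyMeasure ν
  prob : ∀ t : ℝ, 0 < t → IsProbabilityMeasure (μ t)
  nonneg : ∀ t : ℝ, 0 < t → μ t (Set.Iio 0) = 0
  laplace : ∀ t lam : ℝ, 0 < t → 0 ≤ lam →
    (∫ s, Real.exp (-(lam * s)) ∂(μ t)) = Real.exp (-(t * laplaceExp ν lam))

/-- `H(λ) = φ(λ) - λ φ'(λ)`. -/
noncomputable def Hfun (ν : Measure ℝ) (lam : ℝ) : ℝ :=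
  laplaceExp ν lam - lam * deriv (laplaceExp ν) lam

/-- `σ(t,s) = (φ')⁻¹(s/t)` if `s/t < φ'(0+)`, and `σ(t,s) = 0` otherwise. -/
def IsSigmaFun (ν : Measure ℝ) (σ : ℝ → ℝ → ℝ) : Prop :=
  ∀ t s : ℝ, 0 < t → 0 < s →
    ((∃ lam : ℝ, 0 < lam ∧ s / t < deriv (laplaceExp ν) lam) →
      0 < σ t s ∧ deriv (laplaceExp ν) (σ t s) = s / t) ∧
    ((∀ lam : ℝ, 0 < lam → deriv (laplaceExp ν) lam ≤ s / t) → σ t s = 0)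

/-- `φInv` is the inverse of the Laplace exponent `φ` on `(0,∞)`. -/
def IsPhiInv (ν : Measure ℝ) (φInv : ℝ → ℝ) : Prop :=
  ∀ u : ℝ, 0 < u → 0 < φInv u ∧ laplaceExp ν (φInv u) = u

/-- `HInv` is the inverse of `H` on `(0,∞)`. -/
def IsHInv (ν : Measure ℝ) (HInv : ℝ → ℝ) : Prop :=
  ∀ u : ℝ, 0 < u → 0 < HInv u ∧ Hfun ν (HInv u) = u


open Filter
open scoped Topology








section Basic
variable {ν : Measure ℝ} (hν : IsLevyMeasure ν)

lemma one_sub_exp_neg_le (x : ℝ) : 1 - Real.exp (-x) ≤ x := by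
  have := Real.add_one_le_exp (-x)
  linarith

lemma one_sub_exp_neg_nonneg {x : ℝ} (hx : 0 ≤ x) : 0 ≤ 1 - Real.exp (-x) := by
  have : Real.exp (-x) ≤ 1 := Real.exp_le_one_iff.mpr (by linarith)
  linarith

lemma one_sub_exp_neg_le_one {x : ℝ} (hx : 0 ≤ x) : 1 - Real.exp (-x) ≤ 1 := by
  have : 0 ≤ Real.exp (-x) := (Real.exp_pos _).le
  linarith

lemma ge_of_one_sub_exp_neg {x : ℝ} (hx : 0 ≤ x) (hx1 : x ≤ 1) :
    x * (Real.exp 1)⁻¹ ≤ 1 - Real.exp (-x) := by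
  have h1 : x * Real.exp (-x) ≤ 1 - Real.exp (-x) := by
    have := Real.add_one_le_exp x
    have hpos : (0:ℝ) < Real.exp (-x) := Real.exp_pos _
    have : (x + 1) * Real.exp (-x) ≤ 1 := by
      have := mul_le_mul_of_nonneg_right (Real.add_one_le_exp x) hpos.le
      rwa [← Real.exp_add, add_neg_cancel, Real.exp_zero] at this
    nlinarith
  have h2 : (Real.exp 1)⁻¹ ≤ Real.exp (-x) := by
    rw [← Real.exp_neg]
    exact Real.exp_le_exp.mpr (by linarith)
  calc x * (Real.exp 1)⁻¹ ≤ x * Real.exp (-x) := by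
        exact mul_le_mul_of_nonneg_left h2 hx
    _ ≤ 1 - Real.exp (-x) := h1

lemma one_sub_exp_neg_one_le {x : ℝ} (hx : 1 ≤ x) :
    1 - (Real.exp 1)⁻¹ ≤ 1 - Real.exp (-x) := by
  have : Real.exp (-x) ≤ (Real.exp 1)⁻¹ := by
    rw [← Real.exp_neg]; exact Real.exp_le_exp.mpr (by linarith)
  linarith

include hν

lemma nu_ae_pos : ∀ᵐ s ∂ν, 0 < s := by
  rw [ae_iff]
  have : {s : ℝ | ¬ 0 < s} = Set.Iic 0 := by ext s; simp
  rw [this]; exact hν.supp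

lemma nu_restrict_Ioi : ν.restrict (Set.Ioi 0) = ν := by
  rw [Measure.restrict_eq_self_of_ae_mem]
  filter_upwards [nu_ae_pos hν] with s hs using hs

end Basic

section Integrab
variable {ν : Measure ℝ} (hν : IsLevyMeasure ν)
include hν

lemma integrableOn_id_Ioc {a : ℝ} (ha : 0 < a) :
    IntegrableOn (fun s => s) (Set.Ioc (0:ℝ) a) ν := by
  rcases le_or_gt a 1 with h | h
  · exact hν.integ.mono_set (Set.Ioc_subset_Ioc le_rfl h)
  · have : Set.Ioc (0:ℝ) a = Set.Ioc 0 1 ∪ Set.Ioc 1 a := (Set.Ioc_union_Ioc_eq_Ioc zero_le_one h.le).symm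
    rw [this]
    refine (hν.integ).union ?_
    have hfin : ν (Set.Ioc (1:ℝ) a) < ⊤ :=
      lt_of_le_of_lt (measure_mono Set.Ioc_subset_Ioi_self) (hν.tail_fin 1 one_pos)
    have : IntegrableOn (fun _ => a) (Set.Ioc (1:ℝ) a) ν :=
      integrableOn_const hfin.ne
    refine Integrable.mono this (measurable_id.aestronglyMeasurable) ?_
    filter_upwards [ae_restrict_mem measurableSet_Ioc] with s hs
    simp only [Real.norm_eq_abs]
    rw [abs_of_pos (lt_trans one_pos hs.1), abs_of_pos (lt_trans one_pos (lt_of_lt_of_le hs.1 hs.2))]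
    exact hs.2

/-- integrability of `1 - e^{-λ s}` -/
lemma integrable_one_sub_exp {lam : ℝ} (hlam : 0 ≤ lam) :
    Integrable (fun s => 1 - Real.exp (-(lam * s))) ν := by
  set g : ℝ → ℝ := (Set.Ioc (0:ℝ) 1).indicator (fun s => lam * s) +
      (Set.Ioi (1:ℝ)).indicator (fun _ => 1) with hg
  have hgint : Integrable g ν := by
    refine Integrable.add ?_ ?_
    · rw [integrable_indicator_iff measurableSet_Ioc]
      exact (hν.integ).const_mul lam
    · rw [integrable_indicator_iff measurableSet_Ioi]
      exact integrableOn_const (hν.tail_fin 1 one_pos).ne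
  refine Integrable.mono' hgint ?_ ?_
  · exact (Continuous.aestronglyMeasurable (by continuity))
  · filter_upwards [nu_ae_pos hν] with s hs
    have hls : 0 ≤ lam * s := mul_nonneg hlam hs.le
    rw [Real.norm_eq_abs, abs_of_nonneg (one_sub_exp_neg_nonneg hls)]
    rcases le_or_gt s 1 with h1 | h1
    · have hmem : s ∈ Set.Ioc (0:ℝ) 1 := Set.mem_Ioc.mpr ⟨hs, h1⟩
      have hnmem : s ∉ Set.Ioi (1:ℝ) := by simp [not_lt.mpr h1]
      have : g s = lam * s := by
        simp [hg, Set.indicator_of_mem hmem, Set.indicator_of_notMem hnmem]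
      rw [this]
      exact one_sub_exp_neg_le _
    · have hnmem : s ∉ Set.Ioc (0:ℝ) 1 := fun h => absurd h.2 (not_le.mpr h1)
      have : g s = 1 := by
        simp [hg, Set.indicator_of_notMem hnmem, Set.indicator_of_mem (Set.mem_Ioi.mpr h1)]
      rw [this]
      exact one_sub_exp_neg_le_one hls

/-- integrability of `s e^{-b s}` for `b > 0` -/
lemma integrable_mul_exp {b : ℝ} (hb : 0 < b) :
    Integrable (fun s => s * Real.exp (-(b * s))) ν := by
  set g : ℝ → ℝ := (Set.Ioc (0:ℝ) 1).indicator (fun s => s) +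
      (Set.Ioi (1:ℝ)).indicator (fun _ => b⁻¹) with hg
  have hgint : Integrable g ν := by
    refine Integrable.add ?_ ?_
    · rw [integrable_indicator_iff measurableSet_Ioc]; exact hν.integ
    · rw [integrable_indicator_iff measurableSet_Ioi]
      exact integrableOn_const (hν.tail_fin 1 one_pos).ne
  refine Integrable.mono' hgint ?_ ?_
  · exact (Continuous.aestronglyMeasurable (by continuity))
  · filter_upwards [nu_ae_pos hν] with s hs
    have he1 : Real.exp (-(b*s)) ≤ 1 := Real.exp_le_one_iff.mpr (by nlinarith)
    have he0 : 0 < Real.exp (-(b*s)) := Real.exp_pos _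
    rw [Real.norm_eq_abs, abs_of_nonneg (by positivity)]
    rcases le_or_gt s 1 with h1 | h1
    · have hmem : s ∈ Set.Ioc (0:ℝ) 1 := Set.mem_Ioc.mpr ⟨hs, h1⟩
      have hnmem : s ∉ Set.Ioi (1:ℝ) := by simp [not_lt.mpr h1]
      have : g s = s := by
        simp [hg, Set.indicator_of_mem hmem, Set.indicator_of_notMem hnmem]
      rw [this]
      nlinarith
    · have hnmem : s ∉ Set.Ioc (0:ℝ) 1 := fun h => absurd h.2 (not_le.mpr h1)
      have : g s = b⁻¹ := by
        simp [hg, Set.indicator_of_notMem hnmem, Set.indicator_of_mem (Set.mem_Ioi.mpr h1)]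
      rw [this]
      -- s e^{-bs} ≤ 1/b  since  bs e^{-bs} ≤ 1
      have key : b * s * Real.exp (-(b*s)) ≤ 1 := by
        have := Real.add_one_le_exp (b*s)
        have : (b*s) * Real.exp (-(b*s)) ≤ (b*s+1) * Real.exp (-(b*s)) - Real.exp (-(b*s)) := by ring_nf; nlinarith [Real.exp_pos (-(b*s))]
        have h2 : (b*s+1) * Real.exp (-(b*s)) ≤ 1 := by
          have := mul_le_mul_of_nonneg_right (Real.add_one_le_exp (b*s)) he0.le
          rwa [← Real.exp_add, add_neg_cancel, Real.exp_zero] at this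
        nlinarith [Real.exp_pos (-(b*s))]
      rw [← mul_le_mul_iff_right₀ hb]
      calc b * (s * Real.exp (-(b*s))) = b * s * Real.exp (-(b*s)) := by ring
        _ ≤ 1 := key
        _ = b * b⁻¹ := by rw [mul_inv_cancel₀ hb.ne']
  
end Integrab

section Phi
variable {ν : Measure ℝ} (hν : IsLevyMeasure ν)

/-- candidate derivative -/
noncomputable def Dfun (ν : Measure ℝ) (b : ℝ) : ℝ := ∫ s, s * Real.exp (-(b * s)) ∂ν

lemma laplaceExp_zero : laplaceExp ν 0 = 0 := by
  unfold laplaceExp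
  simp

include hν

lemma laplaceExp_nonneg {lam : ℝ} (hlam : 0 ≤ lam) : 0 ≤ laplaceExp ν lam := by
  refine integral_nonneg_of_ae ?_
  filter_upwards [nu_ae_pos hν] with s hs
  exact one_sub_exp_neg_nonneg (mul_nonneg hlam hs.le)

lemma laplaceExp_mono {a b : ℝ} (ha : 0 ≤ a) (hab : a ≤ b) :
    laplaceExp ν a ≤ laplaceExp ν b := by
  refine integral_mono_ae (integrable_one_sub_exp hν ha) (integrable_one_sub_exp hν (le_trans ha hab)) ?_
  filter_upwards [nu_ae_pos hν] with s hs
  have h1 : a * s ≤ b * s := mul_le_mul_of_nonneg_right hab hs.le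
  have h2 := Real.exp_le_exp.mpr (neg_le_neg h1)
  linarith

lemma hasDerivAt_laplaceExp {b : ℝ} (hb : 0 < b) :
    HasDerivAt (laplaceExp ν) (Dfun ν b) b := by
  have key := hasDerivAt_integral_of_dominated_loc_of_deriv_le
    (F := fun lam s => 1 - Real.exp (-(lam * s)))
    (F' := fun lam s => s * Real.exp (-(lam * s)))
    (x₀ := b) (s := Metric.ball b (b/2)) (μ := ν)
    (bound := fun s => |s| * Real.exp (-(b/2 * s)))
    (Metric.ball_mem_nhds b (by positivity))
    ?_ (integrable_one_sub_exp hν hb.le) ?_ ?_ ?_ ?_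
  · exact key.2
  · filter_upwards with lam
    exact (Continuous.aestronglyMeasurable (by continuity))
  · exact (Continuous.aestronglyMeasurable (by continuity))
  · filter_upwards [nu_ae_pos hν] with s hs lam hlam
    have h2 : b/2 < lam := by
      have := abs_lt.mp (mem_ball_iff_norm.mp hlam)
      linarith [this.1]
    have : Real.exp (-(lam * s)) ≤ Real.exp (-(b/2 * s)) := by
      refine Real.exp_le_exp.mpr (neg_le_neg ?_)
      exact mul_le_mul_of_nonneg_right h2.le hs.le
    rw [Real.norm_eq_abs, abs_mul, abs_of_pos (Real.exp_pos _)]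
    exact mul_le_mul_of_nonneg_left this (abs_nonneg _)
  · -- integrable bound
    have := integrable_mul_exp hν (b := b/2) (by positivity)
    refine this.congr ?_
    filter_upwards [nu_ae_pos hν] with s hs
    rw [abs_of_pos hs]
  · filter_upwards with s lam hlam
    -- d/dlam (1 - exp(-(lam s))) = s exp(-(lam s))
    have h1 : HasDerivAt (fun lam : ℝ => lam * s) s lam := by
      simpa using (hasDerivAt_id lam).mul_const s
    have h2 : HasDerivAt (fun lam : ℝ => -(lam * s)) (-s) lam := h1.neg
    have h3 : HasDerivAt (fun lam : ℝ => Real.exp (-(lam * s))) (Real.exp (-(lam*s)) * (-s)) lam := h2.exp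
    have h4 := (h3.const_sub 1)
    convert h4 using 1
    ring

lemma deriv_laplaceExp {b : ℝ} (hb : 0 < b) :
    deriv (laplaceExp ν) b = Dfun ν b := (hasDerivAt_laplaceExp hν hb).deriv

/-- gradient inequality: φ(a) ≤ φ(b) + (a-b) φ'(b) for a ≥ 0, b > 0 -/
lemma laplaceExp_grad_ineq {a b : ℝ} (ha : 0 ≤ a) (hb : 0 < b) :
    laplaceExp ν a ≤ laplaceExp ν b + (a - b) * Dfun ν b := by
  have hint1 : Integrable (fun s => 1 - Real.exp (-(a * s))) ν := integrable_one_sub_exp hν ha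
  have hint2 : Integrable (fun s => (1 - Real.exp (-(b * s))) + (a - b) * (s * Real.exp (-(b * s)))) ν :=
    (integrable_one_sub_exp hν hb.le).add ((integrable_mul_exp hν hb).const_mul _)
  have hmono : ∀ s : ℝ, 1 - Real.exp (-(a * s)) ≤
      (1 - Real.exp (-(b * s))) + (a - b) * (s * Real.exp (-(b * s))) := by
    intro s
    have key : 1 - Real.exp (-((a-b) * s)) ≤ (a-b) * s := one_sub_exp_neg_le _
    have hpos : 0 < Real.exp (-(b*s)) := Real.exp_pos _
    have := mul_le_mul_of_nonneg_right key hpos.le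
    have hexp : Real.exp (-((a-b)*s)) * Real.exp (-(b*s)) = Real.exp (-(a*s)) := by
      rw [← Real.exp_add]; ring_nf
    nlinarith [hexp]
  calc laplaceExp ν a ≤ ∫ s, ((1 - Real.exp (-(b * s))) + (a - b) * (s * Real.exp (-(b * s)))) ∂ν :=
        integral_mono hint1 hint2 hmono
    _ = laplaceExp ν b + (a - b) * Dfun ν b := by
        rw [integral_add (integrable_one_sub_exp hν hb.le) ((integrable_mul_exp hν hb).const_mul _),
          integral_const_mul]
        rfl

end Phi

section ENNStuff
variable {ν : Measure ℝ} (hν : IsLevyMeasure ν)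

noncomputable def phiE (ν : Measure ℝ) (lam : ℝ) : ℝ≥0∞ :=
  ∫⁻ s, ENNReal.ofReal (1 - Real.exp (-(lam * s))) ∂ν

noncomputable def mE (ν : Measure ℝ) (a : ℝ) : ℝ≥0∞ :=
  ∫⁻ s in Set.Ioc 0 a, ENNReal.ofReal s ∂ν

noncomputable def IE (ν : Measure ℝ) (a : ℝ) : ℝ≥0∞ :=
  ∫⁻ u in Set.Ioo 0 a, ν (Set.Ioi u) ∂volume

lemma wE_antitone : Antitone (fun u : ℝ => ν (Set.Ioi u)) :=
  fun _ _ h => measure_mono (Set.Ioi_subset_Ioi h)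

lemma wE_measurable : Measurable (fun u : ℝ => ν (Set.Ioi u)) :=
  (wE_antitone (ν := ν)).measurable

include hν

lemma phiE_lt_top {lam : ℝ} (hlam : 0 ≤ lam) : phiE ν lam < ⊤ :=
  (integrable_one_sub_exp hν hlam).lintegral_lt_top

lemma laplaceExp_eq_toReal {lam : ℝ} (hlam : 0 ≤ lam) :
    laplaceExp ν lam = (phiE ν lam).toReal := by
  unfold laplaceExp phiE
  rw [integral_eq_lintegral_of_nonneg_ae]
  · filter_upwards [nu_ae_pos hν] with s hs
    exact one_sub_exp_neg_nonneg (mul_nonneg hlam hs.le)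
  · exact (Continuous.aestronglyMeasurable (by continuity))

lemma mE_eq_layercake {a : ℝ} (ha : 0 < a) :
    mE ν a = ∫⁻ u in Set.Ioo 0 a, ν (Set.Ioc u a) ∂volume := by
  have key := lintegral_eq_lintegral_meas_lt (ν.restrict (Set.Ioc 0 a))
      (f := fun s => s) ?_ aemeasurable_id
  · rw [mE, key]
    -- RHS: ∫⁻ u in Ioi 0, ν.restrict (Ioc 0 a) {s | u < s}
    have h1 : ∀ u : ℝ, 0 < u → (ν.restrict (Set.Ioc 0 a)) {s : ℝ | u < s} = ν (Set.Ioc u a) := by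
      intro u hu
      rw [show {s : ℝ | u < s} = Set.Ioi u from rfl,
        Measure.restrict_apply (measurableSet_Ioi (a := u))]
      congr 1
      ext s; simp only [Set.mem_inter_iff, Set.mem_Ioi, Set.mem_Ioc, Set.mem_setOf_eq]
      constructor
      · rintro ⟨h1, _, h3⟩; exact ⟨h1, h3⟩
      · rintro ⟨h1, h2⟩; exact ⟨h1, lt_trans hu h1, h2⟩
    have h2 : Set.Ioi (0:ℝ) = Set.Ioo 0 a ∪ Set.Ici a ∩ Set.Ioi 0 := by
      ext u; simp only [Set.mem_Ioi, Set.mem_union, Set.mem_Ioo, Set.mem_inter_iff, Set.mem_Ici]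
      constructor
      · intro h; rcases lt_or_ge u a with h' | h'
        · exact Or.inl ⟨h, h'⟩
        · exact Or.inr ⟨h', h⟩
      · rintro (⟨h, _⟩ | ⟨_, h⟩) <;> exact h
    rw [h2, lintegral_union (measurableSet_Ici.inter measurableSet_Ioi) ?_]
    · have hz : ∫⁻ u in Set.Ici a ∩ Set.Ioi 0, (ν.restrict (Set.Ioc 0 a)) {s : ℝ | u < s} ∂volume = 0 := by
        rw [← lintegral_zero (μ := volume.restrict (Set.Ici a ∩ Set.Ioi 0))]
        refine setLIntegral_congr_fun (measurableSet_Ici.inter measurableSet_Ioi) ?_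
        intro u hu
        dsimp only
        rw [h1 u hu.2]
        rw [Set.Ioc_eq_empty (by exact not_lt.mpr hu.1), measure_empty]
      rw [hz, add_zero]
      refine setLIntegral_congr_fun measurableSet_Ioo ?_
      intro u hu
      exact h1 u hu.1
    · refine Set.disjoint_left.mpr ?_
      rintro u ⟨_, h2⟩ ⟨h3, _⟩
      exact absurd h3 (not_le.mpr h2)
  · filter_upwards [ae_restrict_mem measurableSet_Ioc] with s hs
    exact hs.1.le

lemma IE_eq {a : ℝ} (ha : 0 < a) :
    IE ν a = mE ν a + ENNReal.ofReal a * ν (Set.Ioi a) := by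
  rw [IE, mE_eq_layercake hν ha]
  have : ∀ u ∈ Set.Ioo (0:ℝ) a, ν (Set.Ioi u) = ν (Set.Ioc u a) + ν (Set.Ioi a) := by
    intro u hu
    rw [← measure_union ?_ measurableSet_Ioi]
    · congr 1
      exact (Set.Ioc_union_Ioi_eq_Ioi hu.2.le).symm
    · exact Set.disjoint_left.mpr (fun s hs hs' => absurd (Set.mem_Ioi.mp hs') (not_lt.mpr hs.2))
  have step1 : ∫⁻ u in Set.Ioo 0 a, ν (Set.Ioi u) ∂volume =
      ∫⁻ u in Set.Ioo 0 a, (ν (Set.Ioc u a) + ν (Set.Ioi a)) ∂volume := by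
    refine setLIntegral_congr_fun measurableSet_Ioo ?_
    intro u hu
    exact this u hu
  rw [step1, lintegral_add_right _ measurable_const, setLIntegral_const,
    Real.volume_Ioo]
  congr 1
  rw [mul_comm]
  norm_num

end ENNStuff

section PhiEbounds
variable {ν : Measure ℝ} (hν : IsLevyMeasure ν)
include hν

lemma lintegral_eq_Ioi (g : ℝ → ℝ≥0∞) :
    ∫⁻ s, g s ∂ν = ∫⁻ s in Set.Ioi 0, g s ∂ν := by
  conv_lhs => rw [← nu_restrict_Ioi hν]

lemma phiE_le {lam : ℝ} (hlam : 0 < lam) :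
    phiE ν lam ≤ ENNReal.ofReal lam * IE ν (1/lam) := by
  set a := 1/lam with ha
  have ha0 : 0 < a := by positivity
  rw [IE_eq hν ha0, mul_add, ← mul_assoc, ← ENNReal.ofReal_mul hlam.le]
  have hla : lam * a = 1 := by rw [ha]; field_simp
  rw [hla, ENNReal.ofReal_one, one_mul]
  rw [phiE, lintegral_eq_Ioi hν]
  have hsplit : Set.Ioi (0:ℝ) = Set.Ioc 0 a ∪ Set.Ioi a := (Set.Ioc_union_Ioi_eq_Ioi ha0.le).symm
  rw [hsplit, lintegral_union measurableSet_Ioi Set.Ioc_disjoint_Ioi_same]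
  gcongr
  · rw [mE, ← lintegral_const_mul' _ _ ENNReal.ofReal_ne_top]
    refine setLIntegral_mono' measurableSet_Ioc ?_
    intro s hs
    rw [← ENNReal.ofReal_mul hlam.le]
    exact ENNReal.ofReal_le_ofReal (one_sub_exp_neg_le _)
  · calc ∫⁻ s in Set.Ioi a, ENNReal.ofReal (1 - Real.exp (-(lam * s))) ∂ν
        ≤ ∫⁻ _ in Set.Ioi a, 1 ∂ν := by
          refine setLIntegral_mono' measurableSet_Ioi ?_
          intro s hs
          have hls : 0 ≤ lam * s := mul_nonneg hlam.le (le_trans ha0.le (Set.mem_Ioi.mp hs).le)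
          exact ENNReal.ofReal_le_one.mpr (one_sub_exp_neg_le_one hls)
      _ = ν (Set.Ioi a) := by rw [setLIntegral_const, one_mul]

lemma phiE_ge {lam : ℝ} (hlam : 0 < lam) :
    ENNReal.ofReal ((2*Real.exp 1)⁻¹) * (ENNReal.ofReal lam * IE ν (1/lam)) ≤ phiE ν lam := by
  set a := 1/lam with ha
  have ha0 : 0 < a := by positivity
  have hlam_a : lam * a = 1 := by rw [ha]; field_simp
  have hLo2 : ENNReal.ofReal ((Real.exp 1)⁻¹) * (ENNReal.ofReal lam * mE ν a) ≤ phiE ν lam := by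
    have h0 : ENNReal.ofReal ((Real.exp 1)⁻¹) * (ENNReal.ofReal lam * mE ν a)
        = ∫⁻ s in Set.Ioc 0 a, ENNReal.ofReal ((Real.exp 1)⁻¹) * (ENNReal.ofReal lam * ENNReal.ofReal s) ∂ν := by
      rw [mE, ← lintegral_const_mul' (ENNReal.ofReal lam) _ ENNReal.ofReal_ne_top,
        ← lintegral_const_mul' (ENNReal.ofReal ((Real.exp 1)⁻¹)) _ ENNReal.ofReal_ne_top]
    rw [h0, phiE, lintegral_eq_Ioi hν (fun s => ENNReal.ofReal (1 - Real.exp (-(lam * s))))]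
    refine le_trans (b := ∫⁻ s in Set.Ioc 0 a, ENNReal.ofReal (1 - Real.exp (-(lam * s))) ∂ν)
      (setLIntegral_mono' measurableSet_Ioc ?_) (lintegral_mono_set Set.Ioc_subset_Ioi_self)
    intro s hs
    rw [← ENNReal.ofReal_mul hlam.le, ← ENNReal.ofReal_mul (by positivity)]
    refine ENNReal.ofReal_le_ofReal ?_
    have h1 : 0 ≤ lam * s := mul_nonneg hlam.le (le_of_lt hs.1)
    have h2 : lam * s ≤ 1 := by
      calc lam * s ≤ lam * a := mul_le_mul_of_nonneg_left hs.2 hlam.le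
        _ = 1 := hlam_a
    calc (Real.exp 1)⁻¹ * (lam * s) = (lam * s) * (Real.exp 1)⁻¹ := mul_comm _ _
      _ ≤ 1 - Real.exp (-(lam * s)) := ge_of_one_sub_exp_neg h1 h2
  have hLo1 : ENNReal.ofReal (1 - (Real.exp 1)⁻¹) * ν (Set.Ioi a) ≤ phiE ν lam := by
    rw [phiE, lintegral_eq_Ioi hν (fun s => ENNReal.ofReal (1 - Real.exp (-(lam * s))))]
    refine le_trans (b := ∫⁻ s in Set.Ioi a, ENNReal.ofReal (1 - Real.exp (-(lam * s))) ∂ν)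
      ?_ (lintegral_mono_set (Set.Ioi_subset_Ioi ha0.le))
    rw [show ENNReal.ofReal (1 - (Real.exp 1)⁻¹) * ν (Set.Ioi a) =
      ∫⁻ _ in Set.Ioi a, ENNReal.ofReal (1 - (Real.exp 1)⁻¹) ∂ν from (setLIntegral_const _ _).symm]
    refine setLIntegral_mono' measurableSet_Ioi ?_
    intro s hs
    refine ENNReal.ofReal_le_ofReal ?_
    refine one_sub_exp_neg_one_le ?_
    rw [← hlam_a]
    exact mul_le_mul_of_nonneg_left (Set.mem_Ioi.mp hs).le hlam.le
  have hmul : ((2:ℝ)*Real.exp 1)⁻¹ = 2⁻¹ * (Real.exp 1)⁻¹ := mul_inv _ _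
  have he : (2:ℝ) < Real.exp 1 := by
    have := Real.exp_one_gt_d9
    linarith
  rw [IE_eq hν ha0, mul_add, mul_add]
  have hkey1 : ENNReal.ofReal ((2*Real.exp 1)⁻¹) * (ENNReal.ofReal lam * mE ν a)
      ≤ ENNReal.ofReal (2⁻¹) * phiE ν lam := by
    rw [hmul, ENNReal.ofReal_mul (by norm_num), mul_assoc]
    exact mul_le_mul_right hLo2 _
  have hkey2 : ENNReal.ofReal ((2*Real.exp 1)⁻¹) * (ENNReal.ofReal lam * (ENNReal.ofReal a * ν (Set.Ioi a)))
      ≤ ENNReal.ofReal (2⁻¹) * phiE ν lam := by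
    have hh : ENNReal.ofReal lam * (ENNReal.ofReal a * ν (Set.Ioi a)) = ν (Set.Ioi a) := by
      rw [← mul_assoc, ← ENNReal.ofReal_mul hlam.le, hlam_a, ENNReal.ofReal_one, one_mul]
    rw [hh]
    have hr : ((2:ℝ)*Real.exp 1)⁻¹ ≤ 2⁻¹ * (1 - (Real.exp 1)⁻¹) := by
      rw [hmul]
      have h1 : (Real.exp 1)⁻¹ ≤ 2⁻¹ := by
        rw [inv_le_inv₀ (by positivity) (by norm_num)]
        exact he.le
      have h2 : (Real.exp 1)⁻¹ ≤ 1 - (Real.exp 1)⁻¹ := by linarith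
      exact mul_le_mul_of_nonneg_left h2 (by norm_num)
    calc ENNReal.ofReal ((2*Real.exp 1)⁻¹) * ν (Set.Ioi a)
        ≤ ENNReal.ofReal (2⁻¹ * (1 - (Real.exp 1)⁻¹)) * ν (Set.Ioi a) :=
          mul_le_mul_left (ENNReal.ofReal_le_ofReal hr) _
      _ ≤ ENNReal.ofReal (2⁻¹) * phiE ν lam := by
          rw [ENNReal.ofReal_mul (by norm_num), mul_assoc]
          exact mul_le_mul_right hLo1 _
  calc ENNReal.ofReal ((2*Real.exp 1)⁻¹) * (ENNReal.ofReal lam * mE ν a) +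
        ENNReal.ofReal ((2*Real.exp 1)⁻¹) * (ENNReal.ofReal lam * (ENNReal.ofReal a * ν (Set.Ioi a)))
      ≤ ENNReal.ofReal (2⁻¹) * phiE ν lam + ENNReal.ofReal (2⁻¹) * phiE ν lam :=
        add_le_add hkey1 hkey2
    _ = phiE ν lam := by
        rw [← add_mul, ← ENNReal.ofReal_add (by norm_num) (by norm_num)]
        norm_num

end PhiEbounds



section Scaling
variable {ν : Measure ℝ} (hν : IsLevyMeasure ν)
  {R₁ : ℝ≥0∞} {c c' β₁ β₂ : ℝ}
  (hpoly : PolyCond ν R₁ c c' β₁ β₂) (hc : 0 < c) (hβ₁ : 0 < β₁)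

/-- change of variables for the scaling step -/
lemma lintegral_Ioo_scale (g : ℝ → ℝ≥0∞) (hg : Measurable g) {K a : ℝ} (hK : 0 < K) :
    ∫⁻ v in Set.Ioo 0 a, g (v / K) ∂volume
      = ENNReal.ofReal K * ∫⁻ u in Set.Ioo 0 (a/K), g u ∂volume := by
  have hKinv : (K⁻¹ : ℝ) ≠ 0 := by positivity
  have hmap : Measure.map (fun v : ℝ => K⁻¹ * v) volume = ENNReal.ofReal K • volume := by
    rw [Real.map_volume_mul_left hKinv]
    congr 1
    rw [inv_inv, abs_of_pos hK]
  have hpre : (fun v : ℝ => K⁻¹ * v) ⁻¹' (Set.Ioo 0 (a/K)) = Set.Ioo 0 a := by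
    ext v
    simp only [Set.mem_preimage, Set.mem_Ioo]
    constructor
    · rintro ⟨h1, h2⟩
      constructor
      · nlinarith [inv_pos.mpr hK]
      · calc v = K * (K⁻¹ * v) := by field_simp
          _ < K * (a/K) := by exact mul_lt_mul_of_pos_left h2 hK
          _ = a := by field_simp
    · rintro ⟨h1, h2⟩
      constructor
      · positivity
      · rw [div_eq_inv_mul]
        exact mul_lt_mul_of_pos_left h2 (inv_pos.mpr hK)
  calc ∫⁻ v in Set.Ioo 0 a, g (v / K) ∂volume
      = ∫⁻ v in (fun v : ℝ => K⁻¹ * v) ⁻¹' (Set.Ioo 0 (a/K)), g (K⁻¹ * v) ∂volume := by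
        rw [hpre]
        refine setLIntegral_congr_fun measurableSet_Ioo ?_
        intro v _
        dsimp only
        rw [div_eq_inv_mul]
    _ = ∫⁻ u in Set.Ioo 0 (a/K), g u ∂(Measure.map (fun v : ℝ => K⁻¹ * v) volume) := by
        rw [setLIntegral_map measurableSet_Ioo hg (measurable_const_mul _)]
    _ = ENNReal.ofReal K * ∫⁻ u in Set.Ioo 0 (a/K), g u ∂volume := by
        rw [hmap, Measure.restrict_smul, lintegral_smul_measure, smul_eq_mul]

include hpoly hc hβ₁

lemma levyTail_pos {v : ℝ} (hv : 0 < v) (hvR : ENNReal.ofReal v < R₁) :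
    0 < levyTail ν v := by
  obtain ⟨h1, _⟩ := hpoly v v hv le_rfl hvR
  rw [div_self (ne_of_gt hv), Real.one_rpow, mul_one] at h1
  rcases lt_or_ge 0 (levyTail ν v) with h | h
  · exact h
  · exfalso
    have h0 : levyTail ν v = 0 := le_antisymm h ENNReal.toReal_nonneg
    rw [h0, div_zero] at h1
    linarith

include hν

lemma IE_scale_step {K : ℝ} (hK : 1 ≤ K) {a : ℝ} (ha : 0 < a) (haR : ENNReal.ofReal a < R₁) :
    IE ν a ≤ ENNReal.ofReal (K / (c * K ^ β₁)) * IE ν (a/K) := by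
  have hK0 : (0:ℝ) < K := lt_of_lt_of_le one_pos hK
  have hcK : (0:ℝ) < c * K ^ β₁ := by positivity
  have hpt : ∀ v ∈ Set.Ioo (0:ℝ) a, ν (Set.Ioi v) ≤
      ENNReal.ofReal ((c * K ^ β₁)⁻¹) * ν (Set.Ioi (v / K)) := by
    intro v hv
    have hv0 : 0 < v := hv.1
    have hvK : 0 < v / K := by positivity
    have hvR : ENNReal.ofReal v < R₁ :=
      lt_of_le_of_lt (ENNReal.ofReal_le_ofReal hv.2.le) haR
    obtain ⟨h1, _⟩ := hpoly (v/K) v hvK (by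
      rw [div_le_iff₀ hK0]
      nlinarith) hvR
    rw [show v / (v/K) = K by field_simp] at h1
    have hwv : 0 < levyTail ν v := levyTail_pos hpoly hc hβ₁ hv0 hvR
    have h2 : c * K ^ β₁ * levyTail ν v ≤ levyTail ν (v/K) := (le_div_iff₀ hwv).mp h1
    have h3 : levyTail ν v ≤ (c * K ^ β₁)⁻¹ * levyTail ν (v/K) := by
      rw [le_inv_mul_iff₀ hcK]
      linarith
    have hfin1 : ν (Set.Ioi v) ≠ ⊤ := (hν.tail_fin v hv0).ne
    have hfin2 : ν (Set.Ioi (v/K)) ≠ ⊤ := (hν.tail_fin _ hvK).ne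
    have hofr1 : ENNReal.ofReal (levyTail ν v) = ν (Set.Ioi v) := by
      rw [levyTail]; exact ENNReal.ofReal_toReal hfin1
    have hofr2 : ENNReal.ofReal (levyTail ν (v/K)) = ν (Set.Ioi (v/K)) := by
      rw [levyTail]; exact ENNReal.ofReal_toReal hfin2
    calc ν (Set.Ioi v) = ENNReal.ofReal (levyTail ν v) := hofr1.symm
      _ ≤ ENNReal.ofReal ((c * K ^ β₁)⁻¹ * levyTail ν (v/K)) := ENNReal.ofReal_le_ofReal h3
      _ = ENNReal.ofReal ((c * K ^ β₁)⁻¹) * ENNReal.ofReal (levyTail ν (v/K)) :=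
          ENNReal.ofReal_mul (by positivity)
      _ = ENNReal.ofReal ((c * K ^ β₁)⁻¹) * ν (Set.Ioi (v/K)) := by rw [hofr2]
  calc IE ν a ≤ ∫⁻ v in Set.Ioo 0 a, ENNReal.ofReal ((c * K ^ β₁)⁻¹) * ν (Set.Ioi (v / K)) ∂volume := by
        rw [IE]
        exact setLIntegral_mono' measurableSet_Ioo hpt
    _ = ENNReal.ofReal ((c * K ^ β₁)⁻¹) * ∫⁻ v in Set.Ioo 0 a, ν (Set.Ioi (v / K)) ∂volume := by
        rw [lintegral_const_mul' _ _ ENNReal.ofReal_ne_top]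
    _ = ENNReal.ofReal ((c * K ^ β₁)⁻¹) * (ENNReal.ofReal K * IE ν (a/K)) := by
        rw [lintegral_Ioo_scale (fun u => ν (Set.Ioi u)) wE_measurable hK0]
        rfl
    _ = ENNReal.ofReal (K / (c * K ^ β₁)) * IE ν (a/K) := by
        rw [← mul_assoc, ← ENNReal.ofReal_mul (by positivity)]
        congr 2
        field_simp

lemma IE_scale_iter {K : ℝ} (hK : 1 ≤ K) {a : ℝ} (ha : 0 < a) (haR : ENNReal.ofReal a < R₁)
    (j : ℕ) :
    IE ν a ≤ (ENNReal.ofReal (K / (c * K ^ β₁)))^j * IE ν (a / K^j) := by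
  have hK0 : (0:ℝ) < K := lt_of_lt_of_le one_pos hK
  induction j with
  | zero => simp
  | succ n ih =>
    refine le_trans ih ?_
    have hstep : IE ν (a / K^n) ≤ ENNReal.ofReal (K / (c * K ^ β₁)) * IE ν (a / K^n / K) := by
      refine IE_scale_step hν hpoly hc hβ₁ hK (by positivity) ?_
      refine lt_of_le_of_lt (ENNReal.ofReal_le_ofReal ?_) haR
      calc a / K^n ≤ a / 1 := by
            refine div_le_div_of_nonneg_left ha.le one_pos ?_
            exact one_le_pow₀ hK
        _ = a := div_one a
    have heq : a / K^n / K = a / K^(n+1) := by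
      rw [div_div, pow_succ]
    rw [heq] at hstep
    calc (ENNReal.ofReal (K / (c * K ^ β₁)))^n * IE ν (a / K^n)
        ≤ (ENNReal.ofReal (K / (c * K ^ β₁)))^n *
          (ENNReal.ofReal (K / (c * K ^ β₁)) * IE ν (a / K^(n+1))) := mul_le_mul_right hstep _
      _ = (ENNReal.ofReal (K / (c * K ^ β₁)))^(n+1) * IE ν (a / K^(n+1)) := by
          rw [pow_succ]
          ring

/-- polynomial lower scaling of φ -/
lemma phi_scale {K : ℝ} (hK : 1 ≤ K) {lam : ℝ} (hlam : 0 < lam)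
    (hR : ENNReal.ofReal (1/lam) < R₁) (j : ℕ) :
    (2*Real.exp 1)⁻¹ * (c * K ^ β₁)^j * laplaceExp ν lam ≤ laplaceExp ν (K^j * lam) := by
  have hK0 : (0:ℝ) < K := lt_of_lt_of_le one_pos hK
  have hcK : (0:ℝ) < c * K ^ β₁ := by positivity
  have hKj : (0:ℝ) < K^j := by positivity
  set M := K / (c * K ^ β₁) with hM
  have hM0 : 0 < M := by positivity
  set X := IE ν (1/(K^j * lam)) with hX
  have h1 : phiE ν (K^j * lam) ≥ ENNReal.ofReal ((2*Real.exp 1)⁻¹) *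
      (ENNReal.ofReal (K^j * lam) * X) := phiE_ge hν (by positivity)
  have h2 : phiE ν lam ≤ ENNReal.ofReal lam * ((ENNReal.ofReal M)^j * X) := by
    refine le_trans (phiE_le hν hlam) ?_
    refine mul_le_mul_right ?_ _
    have := IE_scale_iter hν hpoly hc hβ₁ hK (a := 1/lam) (by positivity) hR j
    rw [show (1:ℝ)/lam / K^j = 1/(K^j * lam) by rw [div_div, mul_comm]] at this
    exact this
  -- key ENNReal inequality
  have hkey : ENNReal.ofReal ((2*Real.exp 1)⁻¹ * (c * K ^ β₁)^j) * phiE ν lam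
      ≤ phiE ν (K^j * lam) := by
    calc ENNReal.ofReal ((2*Real.exp 1)⁻¹ * (c * K ^ β₁)^j) * phiE ν lam
        ≤ ENNReal.ofReal ((2*Real.exp 1)⁻¹ * (c * K ^ β₁)^j) *
            (ENNReal.ofReal lam * ((ENNReal.ofReal M)^j * X)) := mul_le_mul_right h2 _
      _ = ENNReal.ofReal ((2*Real.exp 1)⁻¹ * (c * K ^ β₁)^j * (lam * M^j)) * X := by
          rw [← ENNReal.ofReal_pow hM0.le, ← mul_assoc (ENNReal.ofReal lam),
            ← ENNReal.ofReal_mul hlam.le, ← mul_assoc, ← ENNReal.ofReal_mul (by positivity)]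
      _ = ENNReal.ofReal ((2*Real.exp 1)⁻¹ * (K^j * lam)) * X := by
          congr 2
          rw [hM, div_pow]
          field_simp
      _ = ENNReal.ofReal ((2*Real.exp 1)⁻¹) * (ENNReal.ofReal (K^j * lam) * X) := by
          rw [ENNReal.ofReal_mul (by positivity), mul_assoc]
      _ ≤ phiE ν (K^j * lam) := h1
  -- convert to real
  have hfin : phiE ν (K^j * lam) ≠ ⊤ := (phiE_lt_top hν (by positivity)).ne
  have := ENNReal.toReal_mono hfin hkey
  rw [ENNReal.toReal_mul, ENNReal.toReal_ofReal (by positivity)] at this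
  rw [laplaceExp_eq_toReal hν hlam.le, laplaceExp_eq_toReal hν (by positivity)]
  exact this

end Scaling







section Prob
variable {ν : Measure ℝ} {μ : ℝ → Measure ℝ} (hsub : IsSubordinatorLaw ν μ)
  {σ : ℝ → ℝ → ℝ} (hσ : IsSigmaFun ν σ)

lemma Hfun_zero : Hfun ν 0 = 0 := by
  rw [Hfun, laplaceExp_zero]
  ring

include hsub

lemma mu_ae_nonneg {t : ℝ} (ht : 0 < t) : ∀ᵐ s ∂(μ t), 0 ≤ s := by
  rw [ae_iff]
  have : {s : ℝ | ¬ 0 ≤ s} = Set.Iio 0 := by ext s; simp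
  rw [this]
  exact hsub.nonneg t ht

lemma integrable_exp_mu {t lam : ℝ} (ht : 0 < t) (hlam : 0 ≤ lam) :
    Integrable (fun s => Real.exp (-(lam * s))) (μ t) := by
  haveI := hsub.prob t ht
  refine Integrable.mono' (integrable_const 1) (Continuous.aestronglyMeasurable (by continuity)) ?_
  filter_upwards [mu_ae_nonneg hsub ht] with s hs
  rw [Real.norm_eq_abs, abs_of_pos (Real.exp_pos _)]
  exact Real.exp_le_one_iff.mpr (by nlinarith)

lemma chernoff {t lam ρ : ℝ} (ht : 0 < t) (hlam : 0 ≤ lam) (hρ : 0 < ρ) :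
    ((μ t) (Set.Ioc 0 ρ)).toReal ≤ Real.exp (lam * ρ - t * laplaceExp ν lam) := by
  haveI := hsub.prob t ht
  have hint := integrable_exp_mu hsub ht hlam
  have h1 : Real.exp (-(lam * ρ)) * ((μ t) (Set.Ioc 0 ρ)).toReal
      ≤ ∫ s in Set.Ioc 0 ρ, Real.exp (-(lam * s)) ∂(μ t) := by
    have := setIntegral_mono_on (s := Set.Ioc 0 ρ) (μ := μ t)
      (f := fun _ => Real.exp (-(lam * ρ))) (g := fun s => Real.exp (-(lam * s)))
      (integrableOn_const (measure_ne_top _ _)) (hint.integrableOn)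
      measurableSet_Ioc ?_
    · rw [setIntegral_const, measureReal_def] at this
      calc Real.exp (-(lam * ρ)) * ((μ t) (Set.Ioc 0 ρ)).toReal
          = ((μ t) (Set.Ioc 0 ρ)).toReal • Real.exp (-(lam * ρ)) := by
            rw [smul_eq_mul]; ring
        _ ≤ _ := this
    · intro s hs
      exact Real.exp_le_exp.mpr (neg_le_neg (mul_le_mul_of_nonneg_left hs.2 hlam))
  have h2 : ∫ s in Set.Ioc 0 ρ, Real.exp (-(lam * s)) ∂(μ t) ≤ Real.exp (-(t * laplaceExp ν lam)) := by
    rw [← hsub.laplace t lam ht hlam]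
    exact setIntegral_le_integral hint (Eventually.of_forall (fun s => (Real.exp_pos _).le))
  have h3 : Real.exp (-(lam * ρ)) * ((μ t) (Set.Ioc 0 ρ)).toReal ≤ Real.exp (-(t * laplaceExp ν lam)) :=
    le_trans h1 h2
  have hepos : (0:ℝ) < Real.exp (-(lam * ρ)) := Real.exp_pos _
  rw [show lam * ρ - t * laplaceExp ν lam = -(t * laplaceExp ν lam) - (-(lam * ρ)) by ring,
    Real.exp_sub, le_div_iff₀ hepos, mul_comm ((μ t) (Set.Ioc 0 ρ)).toReal]
  exact h3

variable (hν : IsLevyMeasure ν)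
include hν hσ

lemma sigma_cases {t ρ : ℝ} (ht : 0 < t) (hρ : 0 < ρ) :
    (0 < σ t ρ ∧ deriv (laplaceExp ν) (σ t ρ) = ρ/t) ∨
    (σ t ρ = 0 ∧ ∀ lam : ℝ, 0 < lam → Dfun ν lam ≤ ρ/t) := by
  by_cases h : ∃ lam : ℝ, 0 < lam ∧ ρ/t < deriv (laplaceExp ν) lam
  · exact Or.inl ((hσ t ρ ht hρ).1 h)
  · right
    push_neg at h
    refine ⟨(hσ t ρ ht hρ).2 (fun lam hl => h lam hl), fun lam hl => ?_⟩
    rw [← deriv_laplaceExp hν hl]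
    exact h lam hl

lemma laplaceExp_tendsto_zero :
    Tendsto (fun n : ℕ => laplaceExp ν (1/(n+1))) atTop (𝓝 0) := by
  have h0 : (0:ℝ) = ∫ s, (0:ℝ) ∂ν := by rw [integral_zero]
  rw [h0]
  refine tendsto_integral_of_dominated_convergence (fun s => 1 - Real.exp (-(1 * s))) ?_
    (integrable_one_sub_exp hν zero_le_one) ?_ ?_
  · intro n
    exact (Continuous.aestronglyMeasurable (by continuity))
  · intro n
    filter_upwards [nu_ae_pos hν] with s hs
    have hn : (0:ℝ) < 1/((n:ℝ)+1) := by positivity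
    have hn1 : 1/((n:ℝ)+1) ≤ 1 := by
      rw [div_le_one (by positivity)]
      linarith [Nat.cast_nonneg (α := ℝ) n]
    rw [Real.norm_eq_abs, abs_of_nonneg (one_sub_exp_neg_nonneg (by positivity))]
    have : (1/((n:ℝ)+1)) * s ≤ 1 * s := mul_le_mul_of_nonneg_right hn1 hs.le
    have := Real.exp_le_exp.mpr (neg_le_neg this)
    linarith
  · filter_upwards with s
    have : Tendsto (fun n : ℕ => 1/((n:ℝ)+1)) atTop (𝓝 0) := tendsto_one_div_add_atTop_nhds_zero_nat
    have h1 : Tendsto (fun n : ℕ => -(1/((n:ℝ)+1) * s)) atTop (𝓝 0) := by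
      have := (this.mul_const s).neg
      simpa using this
    have h2 := (Real.continuous_exp.tendsto 0).comp h1
    rw [Real.exp_zero] at h2
    have := h2.const_sub 1
    simpa using this

/-- Legendre-type bound: tφ(λ) - λρ ≤ t H(σ(t,ρ)) -/
lemma legendre {t ρ lam : ℝ} (ht : 0 < t) (hρ : 0 < ρ) (hlam : 0 ≤ lam) :
    t * laplaceExp ν lam - lam * ρ ≤ t * Hfun ν (σ t ρ) := by
  rcases sigma_cases hsub hσ hν ht hρ with ⟨hσpos, hσeq⟩ | ⟨hσ0, hall⟩
  · have hD : Dfun ν (σ t ρ) = ρ/t := by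
      rw [← deriv_laplaceExp hν hσpos]
      exact hσeq
    have h := laplaceExp_grad_ineq hν hlam hσpos (a := lam) (b := σ t ρ)
    rw [hD] at h
    have hHeq : Hfun ν (σ t ρ) = laplaceExp ν (σ t ρ) - (σ t ρ) * (ρ/t) := by
      rw [Hfun, hσeq]
    rw [hHeq]
    have hρt : t * (ρ/t) = ρ := by field_simp
    have h2 : t * laplaceExp ν lam ≤ t * laplaceExp ν (σ t ρ) + (lam - σ t ρ) * ρ := by
      have := mul_le_mul_of_nonneg_left h ht.le
      calc t * laplaceExp ν lam ≤ t * (laplaceExp ν (σ t ρ) + (lam - σ t ρ) * (ρ/t)) := this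
        _ = t * laplaceExp ν (σ t ρ) + (lam - σ t ρ) * (t * (ρ/t)) := by ring
        _ = t * laplaceExp ν (σ t ρ) + (lam - σ t ρ) * ρ := by rw [hρt]
    have h3 : t * (laplaceExp ν (σ t ρ) - (σ t ρ) * (ρ/t))
        = t * laplaceExp ν (σ t ρ) - (σ t ρ) * ρ := by
      rw [mul_sub]
      congr 1
      rw [show t * (σ t ρ * (ρ/t)) = σ t ρ * (t * (ρ/t)) by ring, hρt]
    rw [h3]
    linarith
  · rw [hσ0, Hfun_zero, mul_zero]
    rcases eq_or_lt_of_le hlam with heq | hlam0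
    · rw [← heq, laplaceExp_zero]
      simp
    · -- use b = 1/(n+1) and take limits
      have hev : ∀ᶠ n : ℕ in atTop,
          t * laplaceExp ν lam - lam * ρ ≤ t * laplaceExp ν (1/(n+1)) := by
        have harch : ∀ᶠ n : ℕ in atTop, 1/((n:ℝ)+1) ≤ lam := by
          have := tendsto_one_div_add_atTop_nhds_zero_nat (𝕜 := ℝ)
          exact this.eventually_le_const hlam0
        filter_upwards [harch] with n hn
        have hb : (0:ℝ) < 1/((n:ℝ)+1) := by positivity
        have h := laplaceExp_grad_ineq hν hlam hb (a := lam) (b := 1/((n:ℝ)+1))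
        have hDb : Dfun ν (1/((n:ℝ)+1)) ≤ ρ/t := hall _ hb
        have h2 : laplaceExp ν lam ≤ laplaceExp ν (1/((n:ℝ)+1)) + (lam - 1/((n:ℝ)+1)) * (ρ/t) := by
          have hmul : (lam - 1/((n:ℝ)+1)) * Dfun ν (1/((n:ℝ)+1)) ≤ (lam - 1/((n:ℝ)+1)) * (ρ/t) :=
            mul_le_mul_of_nonneg_left hDb (by linarith)
          push_cast at h hmul ⊢
          linarith
        have h3 := mul_le_mul_of_nonneg_left h2 ht.le
        have hρt : t * (ρ/t) = ρ := by field_simp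
        have h4 : t * (laplaceExp ν (1/((n:ℝ)+1)) + (lam - 1/((n:ℝ)+1)) * (ρ/t))
            = t * laplaceExp ν (1/((n:ℝ)+1)) + (lam - 1/((n:ℝ)+1)) * ρ := by
          rw [mul_add, show t * ((lam - 1/((n:ℝ)+1)) * (ρ/t)) = (lam - 1/((n:ℝ)+1)) * (t * (ρ/t)) by ring, hρt]
        rw [h4] at h3
        have h5 : (lam - 1/((n:ℝ)+1)) * ρ ≤ lam * ρ := by
          have : (0:ℝ) < 1/((n:ℝ)+1) := by positivity
          nlinarith
        push_cast
        linarith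
      have hlim : Tendsto (fun n : ℕ => t * laplaceExp ν (1/(n+1))) atTop (𝓝 0) := by
        have := (laplaceExp_tendsto_zero hsub hσ hν).const_mul t
        simpa using this
      exact ge_of_tendsto hlim hev

/-- optimal Chernoff bound -/
lemma mu_CH {t ρ : ℝ} (ht : 0 < t) (hρ : 0 < ρ) :
    ((μ t) (Set.Ioc 0 ρ)).toReal ≤ Real.exp (-(t * Hfun ν (σ t ρ))) := by
  rcases sigma_cases hsub hσ hν ht hρ with ⟨hσpos, hσeq⟩ | ⟨hσ0, _⟩
  · have := chernoff hsub ht hσpos.le hρ (lam := σ t ρ)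
    have heq : σ t ρ * ρ - t * laplaceExp ν (σ t ρ) = -(t * Hfun ν (σ t ρ)) := by
      rw [Hfun, hσeq, mul_sub]
      have : t * (σ t ρ * (ρ/t)) = σ t ρ * ρ := by field_simp
      rw [this]
      ring
    rwa [heq] at this
  · rw [hσ0, Hfun_zero, mul_zero, neg_zero, Real.exp_zero]
    haveI := hsub.prob t ht
    exact ENNReal.toReal_le_of_le_ofReal zero_le_one (by simpa using prob_le_one)

end Prob

noncomputable def vmaj (K Q η p : ℝ) (n₀ n : ℕ) : ℝ :=
  (K^n) ^ p * Real.exp 1 * Real.exp (-(η/2) * Q^(n - n₀))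

lemma vmaj_pos {K Q η p : ℝ} (hK : 0 < K) (n₀ n : ℕ) : 0 < vmaj K Q η p n₀ n := by
  unfold vmaj
  have : (0:ℝ) < (K^n) ^ p := Real.rpow_pos_of_pos (pow_pos hK n) p
  positivity

lemma vmaj_summable {K Q η p : ℝ} (hK : 2 ≤ K) (hQ : 1 < Q) (hη : 0 < η) (n₀ : ℕ) :
    Summable (vmaj K Q η p n₀) := by
  have hK0 : (0:ℝ) < K := by linarith
  have hQ0 : (0:ℝ) < Q := by linarith
  have hKp : (0:ℝ) < K ^ p := Real.rpow_pos_of_pos hK0 p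
  -- eventually ratio ≤ 1/2
  have hgrow : Tendsto (fun n : ℕ => (η/2) * (Q - 1) * Q^(n - n₀)) atTop atTop := by
    have h1 : Tendsto (fun k : ℕ => Q^k) atTop atTop := tendsto_pow_atTop_atTop_of_one_lt hQ
    have h2 : Tendsto (fun n : ℕ => n - n₀) atTop atTop := tendsto_sub_atTop_nat n₀
    exact (h1.comp h2).const_mul_atTop (mul_pos (by positivity) (by linarith))
  have hev : ∀ᶠ n : ℕ in atTop, Real.log (2 * K ^ p) ≤ (η/2) * (Q - 1) * Q^(n - n₀) :=
    hgrow.eventually_ge_atTop _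
  have hev2 : ∀ᶠ n : ℕ in atTop, n₀ ≤ n := eventually_ge_atTop n₀
  refine summable_of_ratio_norm_eventually_le (r := 1/2) (by norm_num) ?_
  filter_upwards [hev, hev2] with n hn hn0
  have hsub1 : n + 1 - n₀ = (n - n₀) + 1 := by omega
  have hvpos := vmaj_pos (Q := Q) (η := η) (p := p) hK0 n₀ n
  rw [Real.norm_eq_abs, Real.norm_eq_abs, abs_of_pos (vmaj_pos hK0 n₀ (n+1)), abs_of_pos hvpos]
  unfold vmaj
  have e1 : (K^(n+1) : ℝ) ^ p = (K^n) ^ p * K ^ p := by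
    rw [pow_succ, Real.mul_rpow (pow_pos hK0 n).le hK0.le]
  have e2 : Real.exp (-(η/2) * Q^(n + 1 - n₀)) =
      Real.exp (-(η/2) * Q^(n - n₀)) * Real.exp (-((η/2) * (Q-1) * Q^(n - n₀))) := by
    rw [← Real.exp_add]
    congr 1
    rw [hsub1, pow_succ]
    ring
  rw [e1, e2]
  have hbound : Real.exp (-((η/2) * (Q-1) * Q^(n - n₀))) ≤ (2 * K ^ p)⁻¹ := by
    have h2K : (0:ℝ) < 2 * K ^ p := by positivity
    calc Real.exp (-((η/2) * (Q-1) * Q^(n - n₀)))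
        ≤ Real.exp (-(Real.log (2 * K ^ p))) := Real.exp_le_exp.mpr (by linarith)
      _ = (2 * K ^ p)⁻¹ := by rw [Real.exp_neg, Real.exp_log h2K]
  calc (K ^ n) ^ p * K ^ p * Real.exp 1 *
        (Real.exp (-(η / 2) * Q ^ (n - n₀)) * Real.exp (-(η / 2 * (Q - 1) * Q ^ (n - n₀))))
      ≤ (K ^ n) ^ p * K ^ p * Real.exp 1 *
        (Real.exp (-(η / 2) * Q ^ (n - n₀)) * (2 * K ^ p)⁻¹) := by
        have hge : (0:ℝ) ≤ (K ^ n) ^ p * K ^ p * Real.exp 1 := by positivity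
        refine mul_le_mul_of_nonneg_left ?_ hge
        exact mul_le_mul_of_nonneg_left hbound (Real.exp_pos _).le
    _ = 1/2 * ((K ^ n) ^ p * Real.exp 1 * Real.exp (-(η / 2) * Q ^ (n - n₀))) := by
        field_simp

section Core
variable {ν : Measure ℝ} {μ : ℝ → Measure ℝ} (hsub : IsSubordinatorLaw ν μ)
  {σ : ℝ → ℝ → ℝ} (hσ : IsSigmaFun ν σ)
  {f : ℝ → ℝ} (hf_meas : Measurable f) (hf_pos : ∀ s : ℝ, 0 < s → 0 < f s)
  {c₁ p : ℝ} (hc₁ : 0 < c₁) (hp : 0 < p)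
  (hf : ∀ s t : ℝ, 0 < s → s ≤ t → s ^ p * f s ≤ c₁ * (t ^ p * f t))

include hsub hσ hf_meas hf_pos hc₁ hp hf

lemma core_bound {K Q η : ℝ} (hK : 2 ≤ K) (hQ : 1 < Q) (hη : 0 < η) (n₀ : ℕ)
    {t r : ℝ} (ht : 0 < t) (hr : 0 < r)
    (hG : ∀ n : ℕ, η * Q ^ (n - n₀) ≤ t * laplaceExp ν (K^n / r) + 1) :
    (∫ s in Set.Ioc (0:ℝ) r, f s ∂(μ t)) ≤
      (c₁ * K^p * ∑' n, vmaj K Q η p n₀ n) * (f r * Real.exp (-(t / 2 * Hfun ν (σ t r)))) := by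
  classical
  have hν := hsub.levy
  haveI := hsub.prob t ht
  have hK0 : (0:ℝ) < K := by linarith
  have hK1 : (1:ℝ) ≤ K := by linarith
  have hKp : (0:ℝ) < K ^ p := Real.rpow_pos_of_pos hK0 p
  have hKn : ∀ n : ℕ, (0:ℝ) < K^n := fun n => pow_pos hK0 n
  have hρ : ∀ n : ℕ, (0:ℝ) < r / K^n := fun n => div_pos hr (hKn n)
  have hρ_le : ∀ n : ℕ, r / K^n ≤ r := by
    intro n
    calc r / K^n ≤ r / 1 := div_le_div_of_nonneg_left hr.le one_pos (one_le_pow₀ hK1)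
      _ = r := div_one r
  have hρ_mono : ∀ n : ℕ, r / K^(n+1) ≤ r / K^n := by
    intro n
    refine div_le_div_of_nonneg_left hr.le (hKn n) ?_
    calc (K:ℝ)^n = K^n * 1 := (mul_one _).symm
      _ ≤ K^n * K := mul_le_mul_of_nonneg_left hK1 (hKn n).le
      _ = K^(n+1) := (pow_succ K n).symm
  set A : ℕ → ℝ := fun n => t * Hfun ν (σ t (r / K^n)) with hA
  have hρ0 : r / K^0 = r := by simp
  -- A 0 ≤ A n
  have hA0n : ∀ n : ℕ, A 0 ≤ A n := by
    intro n
    rcases sigma_cases hsub hσ hν ht hr with ⟨hσpos, hσeq⟩ | ⟨hσz, _⟩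
    · have hA0eq : A 0 = t * laplaceExp ν (σ t r) - (σ t r) * r := by
        rw [hA]
        simp only [hρ0]
        rw [Hfun, hσeq, mul_sub]
        congr 1
        field_simp
      have hlegn := legendre hsub hσ hν ht (hρ n) hσpos.le (lam := σ t r) (ρ := r / K^n)
      have : t * laplaceExp ν (σ t r) - σ t r * r ≤
          t * laplaceExp ν (σ t r) - σ t r * (r / K^n) := by
        have := mul_le_mul_of_nonneg_left (hρ_le n) hσpos.le
        linarith
      rw [hA0eq]
      exact le_trans this hlegn
    · have hA0eq : A 0 = 0 := by
        rw [hA]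
        simp only [hρ0]
        rw [hσz, Hfun_zero, mul_zero]
      rw [hA0eq]
      have := legendre hsub hσ hν ht (hρ n) le_rfl (lam := 0) (ρ := r / K^n)
      rw [laplaceExp_zero] at this
      simpa using this
  -- A n ≥ t φ(K^n/r) - 1
  have hAn : ∀ n : ℕ, t * laplaceExp ν (K^n / r) - 1 ≤ A n := by
    intro n
    have := legendre hsub hσ hν ht (hρ n) (le_of_lt (div_pos (hKn n) hr)) (lam := K^n / r) (ρ := r / K^n)
    have heq : (K^n / r) * (r / K^n) = 1 := by field_simp
    rw [heq] at this
    exact this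
  -- measure bound
  have hμn : ∀ n : ℕ, ((μ t) (Set.Ioc 0 (r / K^n))).toReal ≤ Real.exp (-(A n)) :=
    fun n => mu_CH hsub hσ hν ht (hρ n)
  -- pointwise f bound on annuli
  have hfb : ∀ n : ℕ, ∀ s ∈ Set.Ioc (r/K^(n+1)) (r/K^n), f s ≤ c₁ * (K^(n+1))^p * f r := by
    intro n s hs
    have hs0 : 0 < s := lt_trans (hρ (n+1)) hs.1
    have hsr : s ≤ r := le_trans hs.2 (hρ_le n)
    have hsp : 0 < s ^ p := Real.rpow_pos_of_pos hs0 p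
    have hbp : 0 < (r/K^(n+1)) ^ p := Real.rpow_pos_of_pos (hρ (n+1)) p
    have h1 : f s * s ^ p ≤ c₁ * (r ^ p * f r) := by
      rw [mul_comm]
      exact hf s r hs0 hsr
    have h2 : f s ≤ c₁ * (r ^ p * f r) / s ^ p := (le_div_iff₀ hsp).mpr h1
    have h3 : c₁ * (r ^ p * f r) / s ^ p ≤ c₁ * (r ^ p * f r) / (r/K^(n+1)) ^ p := by
      refine div_le_div_of_nonneg_left ?_ hbp ?_
      · have := (hf_pos r hr).le
        positivity
      · exact Real.rpow_le_rpow (hρ (n+1)).le hs.1.le hp.le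
    have h4 : c₁ * (r ^ p * f r) / (r/K^(n+1)) ^ p = c₁ * (K^(n+1))^p * f r := by
      rw [Real.div_rpow hr.le (hKn (n+1)).le]
      have hrp : (0:ℝ) < r ^ p := Real.rpow_pos_of_pos hr p
      have hKnp : (0:ℝ) < (K^(n+1) : ℝ) ^ p := Real.rpow_pos_of_pos (hKn (n+1)) p
      field_simp
    linarith
  -- constant
  set B : ℝ := c₁ * K^p * (∑' n, vmaj K Q η p n₀ n) * (f r * Real.exp (-(A 0)/2)) with hB
  have hRHSeq : (c₁ * K^p * ∑' n, vmaj K Q η p n₀ n) * (f r * Real.exp (-(t / 2 * Hfun ν (σ t r)))) = B := by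
    rw [hB]
    congr 2
    rw [hA]
    simp only [hρ0]
    congr 1
    ring
  rw [hRHSeq]
  by_cases hint : IntegrableOn f (Set.Ioc 0 r) (μ t)
  case neg =>
    rw [integral_undef hint]
    rw [hB]
    have h1 : (0:ℝ) ≤ ∑' n, vmaj K Q η p n₀ n :=
      tsum_nonneg (fun n => (vmaj_pos hK0 n₀ n).le)
    have h2 := (hf_pos r hr).le
    positivity
  case pos =>
  -- piece bounds
  have hpiece : ∀ n : ℕ, (∫ s in Set.Ioc (r/K^(n+1)) (r/K^n), f s ∂(μ t))
      ≤ c₁ * (K^(n+1))^p * f r * Real.exp (-(A n)) := by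
    intro n
    have hsubset : Set.Ioc (r/K^(n+1)) (r/K^n) ⊆ Set.Ioc 0 r :=
      Set.Ioc_subset_Ioc (hρ (n+1)).le (hρ_le n)
    have hconst : (0:ℝ) ≤ c₁ * (K^(n+1))^p * f r := by
      have := (hf_pos r hr).le
      have := (Real.rpow_pos_of_pos (hKn (n+1)) p).le
      positivity
    calc (∫ s in Set.Ioc (r/K^(n+1)) (r/K^n), f s ∂(μ t))
        ≤ ∫ _ in Set.Ioc (r/K^(n+1)) (r/K^n), c₁ * (K^(n+1))^p * f r ∂(μ t) := by
          refine setIntegral_mono_on (hint.mono_set hsubset)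
            (integrableOn_const (measure_ne_top _ _)) measurableSet_Ioc ?_
          exact hfb n
      _ = ((μ t) (Set.Ioc (r/K^(n+1)) (r/K^n))).toReal * (c₁ * (K^(n+1))^p * f r) := by
          rw [setIntegral_const, measureReal_def, smul_eq_mul]
      _ ≤ ((μ t) (Set.Ioc 0 (r/K^n))).toReal * (c₁ * (K^(n+1))^p * f r) := by
          refine mul_le_mul_of_nonneg_right ?_ hconst
          refine ENNReal.toReal_mono (measure_ne_top _ _) ?_
          exact measure_mono (Set.Ioc_subset_Ioc (hρ (n+1)).le le_rfl)
      _ ≤ Real.exp (-(A n)) * (c₁ * (K^(n+1))^p * f r) :=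
          mul_le_mul_of_nonneg_right (hμn n) hconst
      _ = c₁ * (K^(n+1))^p * f r * Real.exp (-(A n)) := by ring
  -- bound each piece by B-summand
  have hvb : ∀ n : ℕ, c₁ * (K^(n+1))^p * f r * Real.exp (-(A n)) ≤
      c₁ * K^p * f r * Real.exp (-(A 0)/2) * vmaj K Q η p n₀ n := by
    intro n
    have hexp1 : Real.exp (-(A n)) ≤ Real.exp (-(A 0)/2) * Real.exp (-(A n)/2) := by
      rw [← Real.exp_add]
      refine Real.exp_le_exp.mpr ?_
      have := hA0n n
      linarith
    have hexp2 : Real.exp (-(A n)/2) ≤ Real.exp 1 * Real.exp (-(η/2) * Q^(n - n₀)) := by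
      rw [← Real.exp_add]
      refine Real.exp_le_exp.mpr ?_
      have h1 := hG n
      have h2 := hAn n
      linarith
    have e1 : (K^(n+1) : ℝ) ^ p = (K^n) ^ p * K ^ p := by
      rw [pow_succ, Real.mul_rpow (hKn n).le hK0.le]
    have hKnp : (0:ℝ) < (K^n : ℝ) ^ p := Real.rpow_pos_of_pos (hKn n) p
    have hfr := hf_pos r hr
    calc c₁ * (K^(n+1))^p * f r * Real.exp (-(A n))
        ≤ c₁ * (K^(n+1))^p * f r * (Real.exp (-(A 0)/2) * Real.exp (-(A n)/2)) := by
          refine mul_le_mul_of_nonneg_left hexp1 ?_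
          have := (Real.rpow_pos_of_pos (hKn (n+1)) p).le
          positivity
      _ ≤ c₁ * (K^(n+1))^p * f r * (Real.exp (-(A 0)/2) * (Real.exp 1 * Real.exp (-(η/2) * Q^(n - n₀)))) := by
          refine mul_le_mul_of_nonneg_left (mul_le_mul_of_nonneg_left hexp2 (Real.exp_pos _).le) ?_
          have := (Real.rpow_pos_of_pos (hKn (n+1)) p).le
          positivity
      _ = c₁ * K^p * f r * Real.exp (-(A 0)/2) * vmaj K Q η p n₀ n := by
          rw [e1, vmaj]
          ring
  -- decomposition
  have hdecomp : ∀ N : ℕ, (∫ s in Set.Ioc (0:ℝ) r, f s ∂(μ t)) =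
      (∫ s in Set.Ioc (0:ℝ) (r/K^N), f s ∂(μ t)) +
      ∑ n ∈ Finset.range N, (∫ s in Set.Ioc (r/K^(n+1)) (r/K^n), f s ∂(μ t)) := by
    intro N
    induction N with
    | zero => simp [hρ0]
    | succ N ih =>
      rw [ih, Finset.sum_range_succ]
      have hsplit : Set.Ioc (0:ℝ) (r/K^N) = Set.Ioc 0 (r/K^(N+1)) ∪ Set.Ioc (r/K^(N+1)) (r/K^N) :=
        (Set.Ioc_union_Ioc_eq_Ioc (hρ (N+1)).le (hρ_mono N)).symm
      have hiN : IntegrableOn f (Set.Ioc 0 (r/K^(N+1))) (μ t) :=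
        hint.mono_set (Set.Ioc_subset_Ioc le_rfl (hρ_le (N+1)))
      have hiP : IntegrableOn f (Set.Ioc (r/K^(N+1)) (r/K^N)) (μ t) :=
        hint.mono_set (Set.Ioc_subset_Ioc (hρ (N+1)).le (hρ_le N))
      rw [hsplit, setIntegral_union (Set.Ioc_disjoint_Ioc_of_le le_rfl) measurableSet_Ioc hiN hiP]
      ring
  -- tail tends to zero
  have htail : Tendsto (fun N : ℕ => (∫ s in Set.Ioc (0:ℝ) (r/K^N), f s ∂(μ t))) atTop (𝓝 0) := by
    have h0 : (0:ℝ) = ∫ s, (0:ℝ) ∂(μ t) := by rw [integral_zero]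
    have heqN : ∀ N : ℕ, (∫ s in Set.Ioc (0:ℝ) (r/K^N), f s ∂(μ t)) =
        ∫ s, (Set.Ioc (0:ℝ) (r/K^N)).indicator f s ∂(μ t) := by
      intro N
      rw [integral_indicator measurableSet_Ioc]
    have key : Tendsto (fun N : ℕ => ∫ s, (Set.Ioc (0:ℝ) (r/K^N)).indicator f s ∂(μ t)) atTop
        (𝓝 (∫ s, (0:ℝ) ∂(μ t))) := by
      refine tendsto_integral_of_dominated_convergence ((Set.Ioc (0:ℝ) r).indicator fun s => |f s|) ?_ ?_ ?_ ?_
      · intro N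
        exact ((hf_meas.indicator measurableSet_Ioc).aestronglyMeasurable)
      · rw [integrable_indicator_iff measurableSet_Ioc]
        exact hint.abs
      · intro N
        filter_upwards with s
        by_cases hsN : s ∈ Set.Ioc (0:ℝ) (r/K^N)
        · rw [Set.indicator_of_mem hsN]
          have hs2 : s ∈ Set.Ioc (0:ℝ) r := ⟨hsN.1, le_trans hsN.2 (hρ_le N)⟩
          rw [Set.indicator_of_mem hs2]
          rw [Real.norm_eq_abs]
        · rw [Set.indicator_of_notMem hsN]
          simp only [norm_zero]
          by_cases hs2 : s ∈ Set.Ioc (0:ℝ) r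
          · rw [Set.indicator_of_mem hs2]; positivity
          · rw [Set.indicator_of_notMem hs2]
      · filter_upwards with s
        by_cases hs0 : 0 < s
        · have hlim : Tendsto (fun N : ℕ => r / K^N) atTop (𝓝 0) := by
            have h1 : Tendsto (fun N : ℕ => (K⁻¹)^N) atTop (𝓝 0) :=
              tendsto_pow_atTop_nhds_zero_of_lt_one (by positivity) (by
                rw [inv_lt_one_iff₀]
                right
                linarith)
            have := h1.const_mul r
            simp only [mul_zero] at this
            refine this.congr ?_
            intro N
            rw [inv_pow, div_eq_mul_inv]
          have hev : ∀ᶠ N : ℕ in atTop, (Set.Ioc (0:ℝ) (r/K^N)).indicator f s = 0 := by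
            filter_upwards [hlim.eventually_lt_const hs0] with N hN
            refine Set.indicator_of_notMem ?_ f
            intro hmem
            exact absurd hmem.2 (not_le.mpr hN)
          exact Tendsto.congr' (hev.mono fun N hN => hN.symm) tendsto_const_nhds
        · have : ∀ N : ℕ, (Set.Ioc (0:ℝ) (r/K^N)).indicator f s = 0 := by
            intro N
            refine Set.indicator_of_notMem (fun hmem => hs0 hmem.1) f
          simp only [this]
          exact tendsto_const_nhds
    rw [integral_zero] at key
    refine key.congr ?_
    intro N
    exact (heqN N).symm
  -- combine
  have hmain : ∀ N : ℕ, (∫ s in Set.Ioc (0:ℝ) r, f s ∂(μ t)) ≤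
      B + (∫ s in Set.Ioc (0:ℝ) (r/K^N), f s ∂(μ t)) := by
    intro N
    rw [hdecomp N]
    have hsum : ∑ n ∈ Finset.range N, (∫ s in Set.Ioc (r/K^(n+1)) (r/K^n), f s ∂(μ t)) ≤ B := by
      have hsummable := vmaj_summable (p := p) hK hQ hη n₀
      calc ∑ n ∈ Finset.range N, (∫ s in Set.Ioc (r/K^(n+1)) (r/K^n), f s ∂(μ t))
          ≤ ∑ n ∈ Finset.range N, c₁ * K^p * f r * Real.exp (-(A 0)/2) * vmaj K Q η p n₀ n := by
            refine Finset.sum_le_sum ?_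
            intro n _
            exact le_trans (hpiece n) (hvb n)
        _ = (c₁ * K^p * f r * Real.exp (-(A 0)/2)) * ∑ n ∈ Finset.range N, vmaj K Q η p n₀ n := by
            rw [Finset.mul_sum]
        _ ≤ (c₁ * K^p * f r * Real.exp (-(A 0)/2)) * ∑' n, vmaj K Q η p n₀ n := by
            refine mul_le_mul_of_nonneg_left ?_ ?_
            · exact Summable.sum_le_tsum _ (fun n _ => (vmaj_pos hK0 n₀ n).le) hsummable
            · have := (hf_pos r hr).le
              positivity
        _ = B := by rw [hB]; ring
    linarith
  have hBlim : Tendsto (fun N : ℕ => B + (∫ s in Set.Ioc (0:ℝ) (r/K^N), f s ∂(μ t))) atTop (𝓝 B) := by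
    have := tendsto_const_nhds (x := B) (f := atTop (α := ℕ)).add htail
    simpa using this
  exact ge_of_tendsto hBlim (Eventually.of_forall hmain)

end Core



section Main
variable {ν : Measure ℝ} (hν : IsLevyMeasure ν)

lemma inv_swap {x y : ℝ} (hx : 0 < x) (hy : 0 < y) (h : x ≤ y⁻¹) : y ≤ x⁻¹ := by
  have h1 : y * x ≤ 1 := by
    have := mul_le_mul_of_nonneg_left h hy.le
    rwa [mul_inv_cancel₀ hy.ne'] at this
  rw [← one_div, le_div_iff₀ hx]
  exact h1

include hν

lemma phiInv_mono {φInv : ℝ → ℝ} (hφInv : IsPhiInv ν φInv) {u v : ℝ}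
    (hu : 0 < u) (huv : u ≤ v) : φInv u ≤ φInv v := by
  by_contra h
  push_neg at h
  have h1 := laplaceExp_mono hν (hφInv v (lt_of_lt_of_le hu huv)).1.le h.le
  rw [(hφInv v (lt_of_lt_of_le hu huv)).2, (hφInv u hu).2] at h1
  have : u = v := le_antisymm huv h1
  rw [this] at h
  exact absurd rfl (ne_of_gt h)

end Main




/-- Lemma 2.6: under (Poly-R₁), for `f` with `s^p f(s) ≤ c₁ t^p f(t)` for `0 < s ≤ t`,
and for every `T > 0`, `E[f(S_t); S_t ≤ r] ≤ C f(r) exp(-(t/2) H(σ(t,r)))` for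
`t ∈ (0,T]` and `0 < r ≤ 1/φ⁻¹(1/t)`; under (Poly-∞) this holds for all `t > 0`. -/
theorem left_integral_bound
    (ν : Measure ℝ) (μ : ℝ → Measure ℝ) (hsub : IsSubordinatorLaw ν μ)
    (σ : ℝ → ℝ → ℝ) (hσ : IsSigmaFun ν σ)
    (φInv : ℝ → ℝ) (hφInv : IsPhiInv ν φInv)
    (R₁ : ℝ≥0∞) (c c' β₁ β₂ : ℝ)
    (hR₁ : 0 < R₁) (hc : 0 < c) (hc' : 0 < c') (hβ₁ : 0 < β₁) (hβ : β₁ ≤ β₂)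
    (hpoly : PolyCond ν R₁ c c' β₁ β₂)
    (f : ℝ → ℝ) (hf_meas : Measurable f) (hf_pos : ∀ s : ℝ, 0 < s → 0 < f s)
    (c₁ p : ℝ) (hc₁ : 0 < c₁) (hp : 0 < p)
    (hf : ∀ s t : ℝ, 0 < s → s ≤ t → s ^ p * f s ≤ c₁ * (t ^ p * f t)) :
    (∀ T : ℝ, 0 < T → ∃ C : ℝ, 0 < C ∧
      ∀ t r : ℝ, 0 < t → t ≤ T → 0 < r → r ≤ (φInv (t⁻¹))⁻¹ →
        (∫ s in Set.Ioc (0:ℝ) r, f s ∂(μ t)) ≤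
          C * (f r * Real.exp (-(t / 2 * Hfun ν (σ t r))))) ∧
    (R₁ = ⊤ → ∃ C : ℝ, 0 < C ∧
      ∀ t r : ℝ, 0 < t → 0 < r → r ≤ (φInv (t⁻¹))⁻¹ →
        (∫ s in Set.Ioc (0:ℝ) r, f s ∂(μ t)) ≤
          C * (f r * Real.exp (-(t / 2 * Hfun ν (σ t r))))) := by
  have hν := hsub.levy
  -- choice of K, Q, η
  set K : ℝ := max 2 ((2/c) ^ (1/β₁)) with hKdef
  have hK2 : (2:ℝ) ≤ K := le_max_left _ _
  have hK0 : (0:ℝ) < K := by linarith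
  have hK1 : (1:ℝ) ≤ K := by linarith
  have hK1' : (1:ℝ) < K := by linarith
  set Q : ℝ := c * K ^ β₁ with hQdef
  have hQ2 : (2:ℝ) ≤ Q := by
    have h1 : ((2/c) ^ (1/β₁) : ℝ) ≤ K := le_max_right _ _
    have h2 : ((2/c) ^ (1/β₁) : ℝ) ^ β₁ ≤ K ^ β₁ :=
      Real.rpow_le_rpow (Real.rpow_nonneg (by positivity) _) h1 hβ₁.le
    have h3 : ((2/c) ^ (1/β₁) : ℝ) ^ β₁ = 2/c := by
      rw [← Real.rpow_mul (by positivity), one_div, inv_mul_cancel₀ hβ₁.ne', Real.rpow_one]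
    rw [h3] at h2
    have := mul_le_mul_of_nonneg_left h2 hc.le
    rw [hQdef]
    calc (2:ℝ) = c * (2/c) := by field_simp
      _ ≤ c * K ^ β₁ := this
  have hQ1 : (1:ℝ) < Q := by linarith
  set η : ℝ := (2 * Real.exp 1)⁻¹ with hηdef
  have hη0 : 0 < η := by positivity
  have hη1 : η ≤ 1 := by
    rw [hηdef]
    have h1 : (1:ℝ) ≤ 2 * Real.exp 1 := by
      have := Real.exp_one_gt_d9
      nlinarith
    rw [inv_le_one_iff₀]
    right; exact h1
  -- growth estimate builder
  have hGrow : ∀ (t r : ℝ) (n₀ n : ℕ), 0 < t → 0 < r →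
      ENNReal.ofReal (r / K ^ n₀) < R₁ →
      (φInv t⁻¹) ≤ K ^ n₀ / r →
      η * Q ^ (n - n₀) ≤ t * laplaceExp ν (K^n / r) + 1 := by
    intro t r n₀ n ht hr hbase hlow
    have hti : 0 < t⁻¹ := by positivity
    obtain ⟨hlpos, hlval⟩ := hφInv t⁻¹ hti
    rcases le_or_gt n₀ n with hn | hn
    · -- scaling case
      have hlam0 : 0 < K ^ n₀ / r := by positivity
      have hscale := phi_scale hν hpoly hc hβ₁ hK1 hlam0 (by
        rw [one_div, inv_div]
        exact hbase) (n - n₀)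
      have heq : K ^ (n - n₀) * (K ^ n₀ / r) = K ^ n / r := by
        rw [← mul_div_assoc, ← pow_add, Nat.sub_add_cancel hn]
      rw [heq] at hscale
      have hφbase : laplaceExp ν (φInv t⁻¹) ≤ laplaceExp ν (K ^ n₀ / r) :=
        laplaceExp_mono hν hlpos.le hlow
      rw [hlval] at hφbase
      have h2 : η * Q ^ (n - n₀) * t⁻¹ ≤ laplaceExp ν (K ^ n / r) := by
        calc η * Q ^ (n - n₀) * t⁻¹
            ≤ η * Q ^ (n - n₀) * laplaceExp ν (K ^ n₀ / r) := by
              refine mul_le_mul_of_nonneg_left hφbase ?_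
              have : (0:ℝ) ≤ Q ^ (n - n₀) := by positivity
              positivity
          _ ≤ laplaceExp ν (K ^ n / r) := hscale
      have h3 := mul_le_mul_of_nonneg_left h2 ht.le
      rw [show t * (η * Q ^ (n - n₀) * t⁻¹) = (t * t⁻¹) * (η * Q ^ (n - n₀)) by ring,
        mul_inv_cancel₀ ht.ne', one_mul] at h3
      have hφnn : 0 ≤ t * laplaceExp ν (K^n / r) :=
        mul_nonneg ht.le (laplaceExp_nonneg hν (by positivity))
      linarith
    · -- trivial case n < n₀
      have : n - n₀ = 0 := by omega
      rw [this, pow_zero, mul_one]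
      have hφnn : 0 ≤ t * laplaceExp ν (K^n / r) :=
        mul_nonneg ht.le (laplaceExp_nonneg hν (by positivity))
      linarith
  constructor
  · -- Part 1 : fixed horizon T
    intro T hT
    -- threshold scale
    set a₁ : ℝ := if R₁ = ⊤ then 1 else R₁.toReal / 2 with ha₁def
    have ha₁pos : 0 < a₁ := by
      rw [ha₁def]
      split_ifs with h
      · norm_num
      · have : 0 < R₁.toReal := ENNReal.toReal_pos hR₁.ne' h
        linarith
    have ha₁R : ENNReal.ofReal a₁ < R₁ := by
      rw [ha₁def]
      split_ifs with h
      · rw [h]; exact ENNReal.ofReal_lt_top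
      · have h1 : 0 < R₁.toReal := ENNReal.toReal_pos hR₁.ne' h
        calc ENNReal.ofReal (R₁.toReal / 2) < ENNReal.ofReal R₁.toReal := by
              rw [ENNReal.ofReal_lt_ofReal_iff h1]
              linarith
          _ = R₁ := ENNReal.ofReal_toReal h
    have hTi : 0 < T⁻¹ := by positivity
    obtain ⟨hlamT, hlamTval⟩ := hφInv T⁻¹ hTi
    set rT : ℝ := (φInv T⁻¹)⁻¹ with hrTdef
    have hrT : 0 < rT := by positivity
    obtain ⟨n₀, hn₀⟩ := pow_unbounded_of_one_lt (rT / a₁) hK1'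
    refine ⟨c₁ * K^p * ∑' n, vmaj K Q η p n₀ n, ?_, ?_⟩
    · have hKp : (0:ℝ) < K ^ p := Real.rpow_pos_of_pos hK0 p
      have htsum : 0 < ∑' n, vmaj K Q η p n₀ n :=
        lt_of_lt_of_le (vmaj_pos hK0 n₀ 0)
          (Summable.le_tsum (vmaj_summable hK2 hQ1 hη0 n₀) 0 (fun j _ => (vmaj_pos hK0 n₀ j).le))
      positivity
    · intro t r ht htT hr hrr
      have hti : 0 < t⁻¹ := by positivity
      obtain ⟨hlamt, hlamtval⟩ := hφInv t⁻¹ hti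
      have hlam_mono : φInv T⁻¹ ≤ φInv t⁻¹ := by
        refine phiInv_mono hν hφInv hTi ?_
        exact inv_anti₀ ht htT
      have hr_rT : r ≤ rT := by
        calc r ≤ (φInv t⁻¹)⁻¹ := hrr
          _ ≤ rT := by
            rw [hrTdef]
            exact inv_anti₀ hlamT hlam_mono
      have hlam_r : φInv t⁻¹ ≤ 1 / r := by
        rw [one_div]
        exact inv_swap hr hlamt hrr
      refine core_bound hsub hσ hf_meas hf_pos hc₁ hp hf hK2 hQ1 hη0 n₀ ht hr ?_
      intro n
      rcases le_or_gt r a₁ with hra | hra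
      · -- small r : use base scale r itself (n₀' = 0 effectively)
        have hbase : ENNReal.ofReal (r / K ^ 0) < R₁ := by
          rw [pow_zero, div_one]
          exact lt_of_le_of_lt (ENNReal.ofReal_le_ofReal hra) ha₁R
        have h := hGrow t r 0 n ht hr hbase (by
          rw [pow_zero]
          rw [one_div]
          exact inv_swap hr hlamt hrr)
        refine le_trans ?_ h
        refine mul_le_mul_of_nonneg_left ?_ hη0.le
        simp only [Nat.sub_zero]
        exact pow_le_pow_right₀ (by linarith) (Nat.sub_le n n₀)
      · -- large r : use base scale r / K^n₀
        have hbase : ENNReal.ofReal (r / K ^ n₀) < R₁ := by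
          refine lt_of_le_of_lt (ENNReal.ofReal_le_ofReal ?_) ha₁R
          calc r / K ^ n₀ ≤ rT / K ^ n₀ :=
                div_le_div_of_nonneg_right hr_rT (by positivity)
            _ ≤ a₁ := by
              rw [div_le_iff₀ (by positivity : (0:ℝ) < K ^ n₀)]
              calc rT = a₁ * (rT / a₁) := by field_simp
                _ ≤ a₁ * K ^ n₀ := mul_le_mul_of_nonneg_left hn₀.le ha₁pos.le
        refine hGrow t r n₀ n ht hr hbase ?_
        calc φInv t⁻¹ ≤ 1/r := hlam_r
          _ = 1 * r⁻¹ := by rw [one_div, one_mul]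
          _ ≤ K^n₀ * r⁻¹ := mul_le_mul_of_nonneg_right (one_le_pow₀ hK1) (by positivity)
          _ = K^n₀ / r := (div_eq_mul_inv _ _).symm
  · -- Part 2 : R₁ = ⊤
    intro hR₁top
    refine ⟨c₁ * K^p * ∑' n, vmaj K Q η p 0 n, ?_, ?_⟩
    · have hKp : (0:ℝ) < K ^ p := Real.rpow_pos_of_pos hK0 p
      have htsum : 0 < ∑' n, vmaj K Q η p 0 n :=
        lt_of_lt_of_le (vmaj_pos hK0 0 0)
          (Summable.le_tsum (vmaj_summable hK2 hQ1 hη0 0) 0 (fun j _ => (vmaj_pos hK0 0 j).le))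
      positivity
    · intro t r ht hr hrr
      have hti : 0 < t⁻¹ := by positivity
      obtain ⟨hlamt, hlamtval⟩ := hφInv t⁻¹ hti
      refine core_bound hsub hσ hf_meas hf_pos hc₁ hp hf hK2 hQ1 hη0 0 ht hr ?_
      intro n
      refine hGrow t r 0 n ht hr (by rw [hR₁top]; exact ENNReal.ofReal_lt_top) ?_
      rw [pow_zero, one_div]
      exact inv_swap hr hlamt hrr
end

section
/- Suppose (Poly-R₁) holds. Then for any T>0 there exist constants δ∈(0,1) (independent of T) and ε=ε(T)∈(0,1) such that P( ε/φ^{−1}(1/t) ≤ S_t ≤ 1/φ^{−1}(1/t) ) ≥ δ for all t∈(0,T). Moreover, if (Poly-∞) holds, then there exist ε,δ∈(0,1) such that this bound holds for all t>0. -/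
open MeasureTheory Real Set
open scoped ENNReal

set_option maxHeartbeats 1600000

namespace ModeAux

noncomputable def gfun (x : ℝ) : ℝ := 1 - Real.exp (-x) - x * Real.exp (-x)

lemma one_sub_exp_nonneg {x : ℝ} (hx : 0 ≤ x) : 0 ≤ 1 - Real.exp (-x) := by
  have := Real.exp_le_one_iff.mpr (by linarith : -x ≤ 0)
  linarith

lemma one_sub_exp_le_one {x : ℝ} : 1 - Real.exp (-x) ≤ 1 := by
  have := Real.exp_pos (-x); linarith

lemma one_sub_exp_le {x : ℝ} : 1 - Real.exp (-x) ≤ x := by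
  have := Real.add_one_le_exp (-x); linarith

lemma one_sub_exp_le_min {x : ℝ} : 1 - Real.exp (-x) ≤ min 1 x :=
  le_min one_sub_exp_le_one one_sub_exp_le

lemma exp_neg_le_inv_one_add {x : ℝ} (hx : 0 ≤ x) : Real.exp (-x) ≤ (1 + x)⁻¹ := by
  rw [Real.exp_neg]
  have h1 : (1:ℝ) + x ≤ Real.exp x := by have := Real.add_one_le_exp x; linarith
  have h2 : (0:ℝ) < 1 + x := by linarith
  exact inv_anti₀ h2 h1

lemma min_le_two_one_sub_exp {x : ℝ} (hx : 0 ≤ x) :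
    min 1 x ≤ 2 * (1 - Real.exp (-x)) := by
  rcases le_or_gt x 1 with h | h
  · rw [min_eq_right h]
    have h2 := exp_neg_le_inv_one_add hx
    have h3 : (0:ℝ) < 1 + x := by linarith
    have h4 : (1+x)⁻¹ ≤ 1 - x/2 := by
      rw [inv_le_iff_one_le_mul₀ h3]
      nlinarith
    nlinarith
  · rw [min_eq_left h.le]
    have h2 : Real.exp (-x) ≤ Real.exp (-1) := Real.exp_le_exp.mpr (by linarith)
    have h3 : Real.exp (-1) ≤ 1/2 := by
      rw [Real.exp_neg]
      have := Real.exp_one_gt_d9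
      rw [inv_le_comm₀ (Real.exp_pos 1) (by norm_num)]
      norm_num; linarith
    linarith

/-- concavity-type: `θ(1-e^{-b}) ≤ 1 - e^{-θb}` for `θ ∈ [0,1]`, `b ≥ 0`. -/
lemma scaled_concave {θ b : ℝ} (hθ0 : 0 ≤ θ) (hθ1 : θ ≤ 1) (hb : 0 ≤ b) :
    θ * (1 - Real.exp (-b)) ≤ 1 - Real.exp (-(θ * b)) := by
  have he : Real.exp (-(θ * b)) = (Real.exp (-b)) ^ θ := by
    rw [← Real.exp_mul]; ring_nf
  have hgm := Real.geom_mean_le_arith_mean2_weighted hθ0 (by linarith : (0:ℝ) ≤ 1 - θ)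
    (Real.exp_pos (-b)).le zero_le_one (by ring)
  rw [Real.one_rpow] at hgm
  have : (Real.exp (-b)) ^ θ ≤ θ * Real.exp (-b) + (1 - θ) := by
    calc (Real.exp (-b)) ^ θ = (Real.exp (-b)) ^ θ * 1 := by ring
    _ ≤ _ := by
        have := hgm; nlinarith [Real.rpow_nonneg (Real.exp_pos (-b)).le θ]
  rw [he]; nlinarith

lemma xexp_le_one {x : ℝ} (hx : 0 ≤ x) : x * Real.exp (-x) ≤ 1 := by
  have h := Real.add_one_le_exp x
  have h2 : x ≤ Real.exp x := by linarith
  rw [Real.exp_neg]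
  rw [mul_inv_le_iff₀ (Real.exp_pos x)]
  linarith

lemma gfun_hasDeriv (x : ℝ) : HasDerivAt gfun (x * Real.exp (-x)) x := by
  have h1 : HasDerivAt (fun y : ℝ => Real.exp (-y)) (-Real.exp (-x)) x := by
    simpa [Function.comp_def] using (Real.hasDerivAt_exp (-x)).comp x (hasDerivAt_neg x)
  have h2 : HasDerivAt (fun y : ℝ => y * Real.exp (-y))
      (1 * Real.exp (-x) + x * -Real.exp (-x)) x := (hasDerivAt_id x).mul h1
  have h3 : HasDerivAt gfun (0 - (-Real.exp (-x)) - (1 * Real.exp (-x) + x * -Real.exp (-x))) x :=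
    ((hasDerivAt_const x (1:ℝ)).sub h1).sub h2
  convert h3 using 1; ring

lemma gfun_zero : gfun 0 = 0 := by simp [gfun]

lemma gfun_monoOn : MonotoneOn gfun (Ici 0) := by
  have hca : ∀ x, ContinuousAt gfun x := fun x => (gfun_hasDeriv x).continuousAt
  apply monotoneOn_of_deriv_nonneg (convex_Ici 0)
    (Continuous.continuousOn (continuous_iff_continuousAt.mpr hca))
  · intro x hx
    exact ((gfun_hasDeriv x).differentiableAt).differentiableWithinAt
  · intro x hx
    rw [interior_Ici] at hx
    rw [mem_Ioi] at hx
    rw [(gfun_hasDeriv x).deriv]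
    exact mul_nonneg hx.le (Real.exp_pos _).le

lemma gfun_nonneg {x : ℝ} (hx : 0 ≤ x) : 0 ≤ gfun x := by
  have := gfun_monoOn (self_mem_Ici) (mem_Ici.mpr hx) hx
  rwa [gfun_zero] at this

lemma gfun_le_one {x : ℝ} (hx : 0 ≤ x) : gfun x ≤ 1 := by
  have h1 := (Real.exp_pos (-x)).le
  have h2 : 0 ≤ x * Real.exp (-x) := by positivity
  simp only [gfun]; linarith

lemma gfun_le_half_sq {x : ℝ} (hx : 0 ≤ x) : gfun x ≤ x^2 / 2 := by
  set f : ℝ → ℝ := fun y => y^2/2 - gfun y with hf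
  have hd : ∀ y, HasDerivAt f (y - y * Real.exp (-y)) y := by
    intro y
    have h1 : HasDerivAt (fun z : ℝ => z^2/2) y y := by
      have := (hasDerivAt_pow 2 y).div_const 2
      simpa using this
    exact h1.sub (gfun_hasDeriv y)
  have hmono : MonotoneOn f (Ici 0) := by
    apply monotoneOn_of_deriv_nonneg (convex_Ici 0)
      (Continuous.continuousOn (continuous_iff_continuousAt.mpr
        (fun y => (hd y).continuousAt)))
    · intro y hy; exact ((hd y).differentiableAt).differentiableWithinAt
    · intro y hy
      rw [interior_Ici, mem_Ioi] at hy
      rw [(hd y).deriv]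
      have : Real.exp (-y) ≤ 1 := Real.exp_le_one_iff.mpr (by linarith [hy.le] : -y ≤ 0)
      nlinarith [hy.le]
  have := hmono self_mem_Ici (mem_Ici.mpr hx) hx
  simp [hf, gfun_zero] at this
  linarith

lemma sq_exp_le_two_gfun {x : ℝ} (hx : 0 ≤ x) : x^2 * Real.exp (-x) ≤ 2 * gfun x := by
  set f : ℝ → ℝ := fun y => 2 * gfun y - y^2 * Real.exp (-y) with hf
  have hd : ∀ y, HasDerivAt f (y^2 * Real.exp (-y)) y := by
    intro y
    have h1 : HasDerivAt (fun z : ℝ => Real.exp (-z)) (-Real.exp (-y)) y := by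
      simpa [Function.comp_def] using (Real.hasDerivAt_exp (-y)).comp y (hasDerivAt_neg y)
    have h2 : HasDerivAt (fun z : ℝ => z^2 * Real.exp (-z))
        ((2 * y) * Real.exp (-y) + y^2 * -Real.exp (-y)) y := by
      have hp : HasDerivAt (fun z : ℝ => z^2) (2*y) y := by simpa using hasDerivAt_pow 2 y
      exact hp.mul h1
    have h3 := ((gfun_hasDeriv y).const_mul 2).sub h2
    exact h3.congr_deriv (by ring)
  have hmono : MonotoneOn f (Ici 0) := by
    apply monotoneOn_of_deriv_nonneg (convex_Ici 0)
      (Continuous.continuousOn (continuous_iff_continuousAt.mpr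
        (fun y => (hd y).continuousAt)))
    · intro y hy; exact ((hd y).differentiableAt).differentiableWithinAt
    · intro y hy
      rw [interior_Ici, mem_Ioi] at hy
      rw [(hd y).deriv]
      positivity
  have := hmono self_mem_Ici (mem_Ici.mpr hx) hx
  simp [hf, gfun_zero] at this
  linarith

lemma sq_exp_le_two {x : ℝ} (hx : 0 ≤ x) : x^2 * Real.exp (-x) ≤ 2 := by
  have := sq_exp_le_two_gfun hx
  have := gfun_le_one hx
  linarith

lemma gfun_one_ge : (1/4 : ℝ) ≤ gfun 1 := by
  simp only [gfun]
  have h := Real.exp_one_gt_d9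
  have h2 : Real.exp (-1) ≤ 3/8 := by
    rw [Real.exp_neg, inv_le_comm₀ (Real.exp_pos 1) (by norm_num)]
    norm_num; linarith
  linarith

lemma gfun_monotone_arg {a b : ℝ} (ha : 0 ≤ a) (hab : a ≤ b) : gfun a ≤ gfun b :=
  gfun_monoOn (mem_Ici.mpr ha) (mem_Ici.mpr (le_trans ha hab)) hab



variable {ν : Measure ℝ}

lemma ae_pos (hlv : IsLevyMeasure ν) : ∀ᵐ s ∂ν, 0 < s := by
  rw [ae_iff]
  have : {s : ℝ | ¬ 0 < s} = Iic 0 := by ext s; simp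
  rw [this]; exact hlv.supp

lemma integrable_piecewise (hlv : IsLevyMeasure ν) {f : ℝ → ℝ}
    (hm : AEStronglyMeasurable f ν) {C₁ C₂ : ℝ}
    (h1 : ∀ s ∈ Ioc (0:ℝ) 1, |f s| ≤ C₁ * s) (h2 : ∀ s ∈ Ioi (1:ℝ), |f s| ≤ C₂) :
    Integrable f ν := by
  have hu : (univ : Set ℝ) = Iic 0 ∪ (Ioc 0 1 ∪ Ioi 1) := by
    ext s
    simp only [mem_univ, mem_union, mem_Iic, mem_Ioc, mem_Ioi, true_iff]
    rcases le_or_gt s 0 with h | h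
    · exact Or.inl h
    · rcases le_or_gt s 1 with h' | h'
      · exact Or.inr (Or.inl ⟨h, h'⟩)
      · exact Or.inr (Or.inr h')
  rw [← integrableOn_univ, hu]
  apply IntegrableOn.union
  · rw [IntegrableOn, Measure.restrict_eq_zero.mpr hlv.supp]
    exact integrable_zero_measure
  apply IntegrableOn.union
  · apply Integrable.mono' (hlv.integ.const_mul C₁) (hm.restrict)
    refine (ae_restrict_iff' measurableSet_Ioc).mpr (Filter.Eventually.of_forall ?_)
    intro s hs
    calc ‖f s‖ = |f s| := rfl
    _ ≤ C₁ * s := h1 s hs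
  · have hfin : ν (Ioi (1:ℝ)) < ⊤ := hlv.tail_fin 1 one_pos
    apply Integrable.mono' (g := fun _ => C₂) _ (hm.restrict)
    · refine (ae_restrict_iff' measurableSet_Ioi).mpr (Filter.Eventually.of_forall ?_)
      intro s hs
      exact h2 s hs
    · rw [integrable_const_iff]
      right
      exact isFiniteMeasure_restrict.mpr hfin.ne

lemma int_one_sub_exp (hlv : IsLevyMeasure ν) {l : ℝ} (hl : 0 < l) :
    Integrable (fun s => 1 - Real.exp (-(l * s))) ν := by
  apply integrable_piecewise hlv (Continuous.aestronglyMeasurable (by continuity)) (C₁ := l) (C₂ := 1)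
  · intro s hs
    obtain ⟨hs0, hs1⟩ := hs
    rw [abs_of_nonneg (one_sub_exp_nonneg (by nlinarith : 0 ≤ l * s))]
    have := @one_sub_exp_le (l * s)
    linarith
  · intro s hs
    rw [abs_of_nonneg (one_sub_exp_nonneg (by nlinarith [mem_Ioi.mp hs] : 0 ≤ l * s))]
    exact one_sub_exp_le_one

lemma int_s_exp (hlv : IsLevyMeasure ν) {l : ℝ} (hl : 0 < l) :
    Integrable (fun s => s * Real.exp (-(l * s))) ν := by
  apply integrable_piecewise hlv (Continuous.aestronglyMeasurable (by continuity)) (C₁ := 1) (C₂ := l⁻¹)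
  · intro s hs
    obtain ⟨hs0, hs1⟩ := hs
    rw [abs_of_nonneg (by positivity)]
    have : Real.exp (-(l * s)) ≤ 1 := Real.exp_le_one_iff.mpr (by nlinarith)
    nlinarith
  · intro s hs
    have hs1 : (1:ℝ) < s := mem_Ioi.mp hs
    rw [abs_of_nonneg (by positivity)]
    have h := xexp_le_one (by nlinarith : (0:ℝ) ≤ l * s)
    rw [inv_eq_one_div, le_div_iff₀ hl]
    nlinarith

lemma int_s2_exp (hlv : IsLevyMeasure ν) {l : ℝ} (hl : 0 < l) :
    Integrable (fun s => s^2 * Real.exp (-(l * s))) ν := by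
  apply integrable_piecewise hlv (Continuous.aestronglyMeasurable (by continuity)) (C₁ := 1) (C₂ := 2 * l⁻¹^2)
  · intro s hs
    obtain ⟨hs0, hs1⟩ := hs
    rw [abs_of_nonneg (by positivity)]
    have : Real.exp (-(l * s)) ≤ 1 := Real.exp_le_one_iff.mpr (by nlinarith)
    nlinarith
  · intro s hs
    have hs1 : (1:ℝ) < s := mem_Ioi.mp hs
    rw [abs_of_nonneg (by positivity)]
    have h := sq_exp_le_two (by nlinarith : (0:ℝ) ≤ l * s)
    have hexpand : (l*s)^2 * Real.exp (-(l*s)) = l^2 * (s^2 * Real.exp (-(l * s))) := by ring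
    rw [hexpand] at h
    rw [show (2:ℝ) * l⁻¹^2 = 2 / l^2 by field_simp]
    rw [le_div_iff₀ (by positivity)]
    linarith

lemma int_g (hlv : IsLevyMeasure ν) {l : ℝ} (hl : 0 < l) :
    Integrable (fun s => gfun (l * s)) ν := by
  apply integrable_piecewise hlv ?_ (C₁ := l^2/2) (C₂ := 1)
  · intro s hs
    obtain ⟨hs0, hs1⟩ := hs
    rw [abs_of_nonneg (gfun_nonneg (by positivity))]
    have h := gfun_le_half_sq (by positivity : (0:ℝ) ≤ l * s)
    nlinarith
  · intro s hs
    have hs1 : (1:ℝ) < s := mem_Ioi.mp hs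
    rw [abs_of_nonneg (gfun_nonneg (by nlinarith))]
    exact gfun_le_one (by nlinarith)
  · have : Continuous (fun s => gfun (l * s)) := by
      simp only [gfun]; continuity
    exact this.aestronglyMeasurable


noncomputable def phi1 (ν : Measure ℝ) (l : ℝ) : ℝ := ∫ s, s * Real.exp (-(l * s)) ∂ν
noncomputable def phi2 (ν : Measure ℝ) (l : ℝ) : ℝ := ∫ s, s^2 * Real.exp (-(l * s)) ∂ν
noncomputable def HH (ν : Measure ℝ) (l : ℝ) : ℝ := laplaceExp ν l - l * phi1 ν l

lemma phi_nonneg (hlv : IsLevyMeasure ν) {l : ℝ} (hl : 0 < l) : 0 ≤ laplaceExp ν l := by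
  apply integral_nonneg_of_ae
  filter_upwards [ae_pos hlv] with s hs
  exact one_sub_exp_nonneg (by positivity)

lemma phi1_nonneg (hlv : IsLevyMeasure ν) {l : ℝ} (hl : 0 < l) : 0 ≤ phi1 ν l := by
  apply integral_nonneg_of_ae
  filter_upwards [ae_pos hlv] with s hs
  positivity

lemma phi2_nonneg (hlv : IsLevyMeasure ν) {l : ℝ} (hl : 0 < l) : 0 ≤ phi2 ν l := by
  apply integral_nonneg_of_ae
  filter_upwards [ae_pos hlv] with s hs
  positivity

lemma phi_mono (hlv : IsLevyMeasure ν) {l₁ l₂ : ℝ} (h1 : 0 < l₁) (h12 : l₁ ≤ l₂) :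
    laplaceExp ν l₁ ≤ laplaceExp ν l₂ := by
  apply integral_mono_ae (int_one_sub_exp hlv h1) (int_one_sub_exp hlv (lt_of_lt_of_le h1 h12))
  filter_upwards [ae_pos hlv] with s hs
  have : Real.exp (-(l₂ * s)) ≤ Real.exp (-(l₁ * s)) := by
    apply Real.exp_le_exp.mpr; nlinarith
  linarith

lemma phi_ratio (hlv : IsLevyMeasure ν) {l₁ l₂ : ℝ} (h1 : 0 < l₁) (h12 : l₁ ≤ l₂) :
    l₁ * laplaceExp ν l₂ ≤ l₂ * laplaceExp ν l₁ := by
  have h2 : 0 < l₂ := lt_of_lt_of_le h1 h12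
  rw [laplaceExp, laplaceExp, ← integral_const_mul, ← integral_const_mul]
  apply integral_mono_ae
    ((int_one_sub_exp hlv h2).const_mul l₁) ((int_one_sub_exp hlv h1).const_mul l₂)
  filter_upwards [ae_pos hlv] with s hs
  have hsc := scaled_concave (θ := l₁/l₂) (b := l₂ * s)
    (by positivity) (by rw [div_le_one h2]; exact h12) (by positivity)
  have harg : -(l₁/l₂ * (l₂ * s)) = -(l₁ * s) := by field_simp
  rw [harg] at hsc
  have := mul_le_mul_of_nonneg_left hsc h2.le
  calc l₁ * (1 - Real.exp (-(l₂ * s))) = l₂ * (l₁/l₂ * (1 - Real.exp (-(l₂ * s)))) := by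
        field_simp
  _ ≤ l₂ * (1 - Real.exp (-(l₁ * s))) := this

lemma hasDerivAt_phi (hlv : IsLevyMeasure ν) {l : ℝ} (hl : 0 < l) :
    HasDerivAt (laplaceExp ν) (phi1 ν l) l := by
  have key := hasDerivAt_integral_of_dominated_loc_of_deriv_le
    (μ := ν) (F := fun x s => 1 - Real.exp (-(x * s)))
    (F' := fun x s => s * Real.exp (-(x * s)))
    (x₀ := l) (bound := fun s => s * Real.exp (-(l/2 * s)))
    (Metric.ball_mem_nhds l (half_pos hl))
    (Filter.Eventually.of_forall (fun x =>
      Continuous.aestronglyMeasurable (by continuity)))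
    (int_one_sub_exp hlv hl)
    (Continuous.aestronglyMeasurable (by continuity))
    ?_ (int_s_exp hlv (half_pos hl)) ?_
  · exact key.2
  · filter_upwards [ae_pos hlv] with s hs
    intro x hx
    rw [Metric.mem_ball, Real.dist_eq, abs_lt] at hx
    have hx2 : l/2 < x := by linarith [hx.1]
    rw [Real.norm_eq_abs, abs_of_nonneg (by positivity)]
    have : Real.exp (-(x * s)) ≤ Real.exp (-(l/2 * s)) := by
      apply Real.exp_le_exp.mpr; nlinarith
    nlinarith
  · filter_upwards [ae_pos hlv] with s hs
    intro x hx
    have h1 : HasDerivAt (fun y : ℝ => -(y * s)) (-s) x := by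
      exact (hasDerivAt_mul_const s (x := x)).neg
    have h2 := (Real.hasDerivAt_exp (-(x * s))).comp x h1
    have h3 := (hasDerivAt_const x (1:ℝ)).sub h2
    exact h3.congr_deriv (by ring)

lemma hasDerivAt_phi1 (hlv : IsLevyMeasure ν) {l : ℝ} (hl : 0 < l) :
    HasDerivAt (phi1 ν) (-(phi2 ν l)) l := by
  have key := hasDerivAt_integral_of_dominated_loc_of_deriv_le
    (μ := ν) (F := fun x s => s * Real.exp (-(x * s)))
    (F' := fun x s => -(s^2 * Real.exp (-(x * s))))
    (x₀ := l) (bound := fun s => s^2 * Real.exp (-(l/2 * s)))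
    (Metric.ball_mem_nhds l (half_pos hl))
    (Filter.Eventually.of_forall (fun x =>
      Continuous.aestronglyMeasurable (by continuity)))
    (int_s_exp hlv hl)
    (Continuous.aestronglyMeasurable (by continuity))
    ?_ (int_s2_exp hlv (half_pos hl)) ?_
  · have h := key.2
    have : (∫ s, -(s^2 * Real.exp (-(l * s))) ∂ν) = -(phi2 ν l) := by
      rw [integral_neg]; rfl
    rwa [this] at h
  · filter_upwards [ae_pos hlv] with s hs
    intro x hx
    rw [Metric.mem_ball, Real.dist_eq, abs_lt] at hx
    have hx2 : l/2 < x := by linarith [hx.1]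
    rw [Real.norm_eq_abs, abs_neg, abs_of_nonneg (by positivity)]
    have : Real.exp (-(x * s)) ≤ Real.exp (-(l/2 * s)) := by
      apply Real.exp_le_exp.mpr; nlinarith
    nlinarith
  · filter_upwards [ae_pos hlv] with s hs
    intro x hx
    have h1 : HasDerivAt (fun y : ℝ => -(y * s)) (-s) x := by
      exact (hasDerivAt_mul_const s (x := x)).neg
    have h2 := (Real.hasDerivAt_exp (-(x * s))).comp x h1
    have h3 := h2.const_mul s
    exact h3.congr_deriv (by ring)

lemma HH_eq (hlv : IsLevyMeasure ν) {l : ℝ} (hl : 0 < l) :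
    HH ν l = ∫ s, gfun (l * s) ∂ν := by
  rw [HH, laplaceExp, phi1, ← integral_const_mul,
    ← integral_sub (int_one_sub_exp hlv hl) ((int_s_exp hlv hl).const_mul l)]
  congr 1
  funext s
  simp only [gfun]
  ring

lemma HH_nonneg (hlv : IsLevyMeasure ν) {l : ℝ} (hl : 0 < l) : 0 ≤ HH ν l := by
  rw [HH_eq hlv hl]
  apply integral_nonneg_of_ae
  filter_upwards [ae_pos hlv] with s hs
  exact gfun_nonneg (by positivity)

lemma HH_le_phi (hlv : IsLevyMeasure ν) {l : ℝ} (hl : 0 < l) : HH ν l ≤ laplaceExp ν l := by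
  have := phi1_nonneg hlv hl
  have : 0 ≤ l * phi1 ν l := by positivity
  rw [HH]; linarith

lemma int_g_on (hlv : IsLevyMeasure ν) {l : ℝ} (hl : 0 < l) (s : Set ℝ) :
    IntegrableOn (fun x => gfun (l * x)) s ν := (int_g hlv hl).integrableOn

lemma HH_tail (hlv : IsLevyMeasure ν) {l : ℝ} (hl : 0 < l) :
    gfun 1 * levyTail ν l⁻¹ ≤ HH ν l := by
  rw [HH_eq hlv hl]
  have h1 : ∫ s in Ioi l⁻¹, gfun 1 ∂ν ≤ ∫ s in Ioi l⁻¹, gfun (l * s) ∂ν := by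
    apply setIntegral_mono_on
    · exact integrableOn_const (hlv.tail_fin _ (by positivity)).ne
    · exact int_g_on hlv hl _
    · exact measurableSet_Ioi
    · intro s hs
      have hs' : l⁻¹ < s := mem_Ioi.mp hs
      apply gfun_monotone_arg zero_le_one
      rw [show (1:ℝ) = l * l⁻¹ by field_simp]
      apply mul_le_mul_of_nonneg_left hs'.le hl.le
  have h2 : ∫ s in Ioi l⁻¹, gfun (l * s) ∂ν ≤ ∫ s, gfun (l * s) ∂ν := by
    apply setIntegral_le_integral (int_g hlv hl)
    filter_upwards [ae_pos hlv] with s hs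
    exact gfun_nonneg (by positivity)
  rw [setIntegral_const] at h1
  calc gfun 1 * levyTail ν l⁻¹ = (ν (Ioi l⁻¹)).toReal • gfun 1 := by
        rw [smul_eq_mul, levyTail]; ring
  _ ≤ ∫ s in Ioi l⁻¹, gfun (l * s) ∂ν := h1
  _ ≤ _ := h2

lemma phi_tail (hlv : IsLevyMeasure ν) {l r : ℝ} (hl : 0 < l) (hr : 0 < r) :
    (1 - Real.exp (-(l * r))) * levyTail ν r ≤ laplaceExp ν l := by
  have h1 : ∫ s in Ioi r, (1 - Real.exp (-(l * r))) ∂ν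
      ≤ ∫ s in Ioi r, (1 - Real.exp (-(l * s))) ∂ν := by
    apply setIntegral_mono_on
    · exact integrableOn_const (hlv.tail_fin _ hr).ne
    · exact (int_one_sub_exp hlv hl).integrableOn
    · exact measurableSet_Ioi
    · intro s hs
      have hs' : r < s := mem_Ioi.mp hs
      have : Real.exp (-(l * s)) ≤ Real.exp (-(l * r)) := by
        apply Real.exp_le_exp.mpr; nlinarith
      linarith
  have h2 : ∫ s in Ioi r, (1 - Real.exp (-(l * s))) ∂ν ≤ laplaceExp ν l := by
    apply setIntegral_le_integral (int_one_sub_exp hlv hl)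
    filter_upwards [ae_pos hlv] with s hs
    exact one_sub_exp_nonneg (by positivity)
  rw [setIntegral_const] at h1
  calc (1 - Real.exp (-(l * r))) * levyTail ν r
      = (ν (Ioi r)).toReal • (1 - Real.exp (-(l * r))) := by rw [smul_eq_mul, levyTail]; ring
  _ ≤ _ := h1.trans h2

lemma lam_sq_phi2_le (hlv : IsLevyMeasure ν) {l : ℝ} (hl : 0 < l) :
    l^2 * phi2 ν l ≤ 2 * HH ν l := by
  rw [HH_eq hlv hl, phi2, ← integral_const_mul, ← integral_const_mul]
  apply integral_mono_ae ((int_s2_exp hlv hl).const_mul _) ((int_g hlv hl).const_mul _)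
  filter_upwards [ae_pos hlv] with s hs
  have h := sq_exp_le_two_gfun (x := l * s) (by positivity)
  nlinarith [h]

lemma levyTail_anti (hlv : IsLevyMeasure ν) {r₁ r₂ : ℝ} (h1 : 0 < r₁) (h12 : r₁ ≤ r₂) :
    levyTail ν r₂ ≤ levyTail ν r₁ :=
  ENNReal.toReal_mono (hlv.tail_fin r₁ h1).ne (measure_mono (Ioi_subset_Ioi h12))

section Poly
variable {R₁ : ℝ≥0∞} {c c' β₁ β₂ : ℝ}

lemma tail_pos (hpoly : PolyCond ν R₁ c c' β₁ β₂) (hc : 0 < c) {R : ℝ} (hR : 0 < R)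
    (hR1 : ENNReal.ofReal R < R₁) : 0 < levyTail ν R := by
  rcases lt_or_ge 0 (levyTail ν R) with h | h
  · exact h
  have h0 : levyTail ν R = 0 := le_antisymm h ENNReal.toReal_nonneg
  have hp := (hpoly R R hR le_rfl hR1).1
  rw [h0, div_zero, div_self hR.ne', Real.one_rpow, mul_one] at hp
  linarith

lemma tail_scaling (hpoly : PolyCond ν R₁ c c' β₁ β₂) (hc : 0 < c) {r R : ℝ}
    (hr : 0 < r) (hrR : r ≤ R) (hR1 : ENNReal.ofReal R < R₁) :
    c * (R / r) ^ β₁ * levyTail ν R ≤ levyTail ν r := by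
  have hwR := tail_pos hpoly hc (lt_of_lt_of_le hr hrR) hR1
  have hp := (hpoly r R hr hrR hR1).1
  rw [le_div_iff₀ hwR] at hp
  exact hp

lemma exists_R0 (hR₁ : 0 < R₁) : ∃ R₀ : ℝ, 0 < R₀ ∧ ENNReal.ofReal R₀ < R₁ := by
  rcases eq_or_ne R₁ ⊤ with h | h
  · exact ⟨1, one_pos, by simp [h]⟩
  · have htr : 0 < R₁.toReal := ENNReal.toReal_pos hR₁.ne' h
    refine ⟨R₁.toReal / 2, by positivity, ?_⟩
    calc ENNReal.ofReal (R₁.toReal / 2) < ENNReal.ofReal R₁.toReal := by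
          rw [ENNReal.ofReal_lt_ofReal_iff htr]; linarith
    _ = R₁ := ENNReal.ofReal_toReal h

lemma tail_unbounded (hpoly : PolyCond ν R₁ c c' β₁ β₂) (hc : 0 < c) (hβ₁ : 0 < β₁)
    (hR₁ : 0 < R₁) : ∀ A : ℝ, ∃ r : ℝ, 0 < r ∧ A ≤ levyTail ν r := by
  intro A
  obtain ⟨R₀, hR₀, hR₀1⟩ := exists_R0 hR₁
  have hw0 := tail_pos hpoly hc hR₀ hR₀1
  rcases le_or_gt A 0 with hA | hA
  · exact ⟨R₀, hR₀, le_trans hA hw0.le⟩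
  set q : ℝ := c * levyTail ν R₀ / A with hq
  have hqpos : 0 < q := by positivity
  set θ : ℝ := min 1 (q ^ β₁⁻¹) with hθ
  have hθpos : 0 < θ := lt_min one_pos (Real.rpow_pos_of_pos hqpos _)
  have hθ1 : θ ≤ 1 := min_le_left _ _
  set r : ℝ := R₀ * θ with hrdef
  have hrpos : 0 < r := by positivity
  have hrR : r ≤ R₀ := by nlinarith
  refine ⟨r, hrpos, ?_⟩
  have hsc := tail_scaling hpoly hc hrpos hrR hR₀1
  have hratio : R₀ / r = θ⁻¹ := by
    rw [hrdef]; field_simp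
  rw [hratio] at hsc
  have hθβ : θ ^ β₁ ≤ q := by
    calc θ ^ β₁ ≤ (q ^ β₁⁻¹) ^ β₁ :=
          Real.rpow_le_rpow hθpos.le (min_le_right _ _) hβ₁.le
    _ = q := by
        rw [← Real.rpow_mul hqpos.le, inv_mul_cancel₀ hβ₁.ne', Real.rpow_one]
  have hinv : (θ⁻¹ : ℝ) ^ β₁ = (θ ^ β₁)⁻¹ := Real.inv_rpow hθpos.le _
  rw [hinv] at hsc
  have hθβpos : 0 < θ ^ β₁ := Real.rpow_pos_of_pos hθpos _
  refine le_trans ?_ hsc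
  rw [hq, le_div_iff₀ hA] at hθβ
  calc A ≤ c * levyTail ν R₀ / θ ^ β₁ := by
        rw [le_div_iff₀ hθβpos]; nlinarith
  _ = c * (θ ^ β₁)⁻¹ * levyTail ν R₀ := by ring

lemma phi_scaling (hlv : IsLevyMeasure ν) (hpoly : PolyCond ν R₁ c c' β₁ β₂) (hc : 0 < c)
    {lam0 K : ℝ} (hlam0 : 0 < lam0)
    (hwin : ENNReal.ofReal lam0⁻¹ < R₁) (hK : 1 ≤ K) :
    c * K ^ β₁ * laplaceExp ν lam0 ≤ 2 * laplaceExp ν (K * lam0) := by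
  have hKpos : 0 < K := lt_of_lt_of_le one_pos hK
  have hKl : 0 < K * lam0 := by positivity
  have hcK : 0 ≤ c * K ^ β₁ := by positivity
  set Φ : ℝ → ℝ≥0∞ := fun l => ∫⁻ s, ENNReal.ofReal (1 - Real.exp (-(l * s))) ∂ν with hΦ
  set Ψ : ℝ → ℝ≥0∞ := fun l => ∫⁻ u in Ioo (0:ℝ) 1, ν (Ioi (u / l)) with hΨ
  have hPhi : ∀ l : ℝ, 0 < l → ENNReal.ofReal (laplaceExp ν l) = Φ l := by
    intro l hl
    apply ofReal_integral_eq_lintegral_ofReal (int_one_sub_exp hlv hl)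
    filter_upwards [ae_pos hlv] with s hs
    exact one_sub_exp_nonneg (by positivity)
  have hlayer : ∀ l : ℝ, 0 < l →
      (∫⁻ s, ENNReal.ofReal (min 1 (l * s)) ∂ν) = Ψ l := by
    intro l hl
    rw [lintegral_eq_lintegral_meas_lt ν ?_ ?_]
    · have hsplit : (Ioi (0:ℝ)) = Ioo (0:ℝ) 1 ∪ Ici (1:ℝ) := by
        rw [Ioo_union_Ici_eq_Ioi zero_lt_one]
      rw [hsplit, lintegral_union measurableSet_Ici
        (by rw [Set.disjoint_left]; intro a ha hb; exact absurd (mem_Ici.mp hb) (not_le.mpr ha.2))]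
      have hzero : ∫⁻ u in Ici (1:ℝ), ν {a | u < min 1 (l * a)} = 0 := by
        rw [setLIntegral_congr_fun measurableSet_Ici
          (fun u hu => ?_), lintegral_zero]
        have he : {a : ℝ | u < min 1 (l * a)} = ∅ := by
          ext a; simp only [mem_setOf_eq, mem_empty_iff_false, iff_false, not_lt]
          exact le_trans (min_le_left _ _) hu
        rw [he]; exact measure_empty
      rw [hzero, add_zero]
      apply setLIntegral_congr_fun measurableSet_Ioo
      intro u hu
      beta_reduce
      congr 1
      ext a
      simp only [mem_setOf_eq, mem_Ioi, lt_min_iff]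
      constructor
      · rintro ⟨-, h2⟩
        rwa [div_lt_iff₀ hl, mul_comm]
      · intro h
        exact ⟨hu.2, by rw [div_lt_iff₀ hl, mul_comm] at h; exact h⟩
    · filter_upwards [ae_pos hlv] with s hs
      exact le_min zero_le_one (by positivity)
    · exact (Continuous.aemeasurable (continuous_const.min (continuous_const.mul continuous_id)))
  have hlow : ∀ l : ℝ, 0 < l → Φ l ≤ ∫⁻ s, ENNReal.ofReal (min 1 (l * s)) ∂ν := by
    intro l hl
    apply lintegral_mono_ae
    filter_upwards [ae_pos hlv] with s hs
    exact ENNReal.ofReal_le_ofReal one_sub_exp_le_min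
  have hup : ∀ l : ℝ, 0 < l →
      (∫⁻ s, ENNReal.ofReal (min 1 (l * s)) ∂ν) ≤ 2 * Φ l := by
    intro l hl
    rw [hΦ, ← lintegral_const_mul' 2 _ (by norm_num)]
    apply lintegral_mono_ae
    filter_upwards [ae_pos hlv] with s hs
    calc ENNReal.ofReal (min 1 (l * s)) ≤ ENNReal.ofReal (2 * (1 - Real.exp (-(l * s)))) :=
          ENNReal.ofReal_le_ofReal (min_le_two_one_sub_exp (by positivity))
    _ = 2 * ENNReal.ofReal (1 - Real.exp (-(l * s))) := by
        rw [ENNReal.ofReal_mul (by norm_num)]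
        norm_num
  have hscale : ENNReal.ofReal (c * K ^ β₁) * Ψ lam0 ≤ Ψ (K * lam0) := by
    rw [hΨ]
    simp only
    rw [← lintegral_const_mul' _ _ ENNReal.ofReal_ne_top]
    refine lintegral_mono_ae ((ae_restrict_iff' measurableSet_Ioo).mpr
      (Filter.Eventually.of_forall (fun u hu => ?_)))
    have hu0 : 0 < u := hu.1
    have hu1 : u < 1 := hu.2
    have hr : 0 < u / (K * lam0) := by positivity
    have hRpos : 0 < u / lam0 := by positivity
    have hrR : u / (K * lam0) ≤ u / lam0 := by
      apply div_le_div_of_nonneg_left hu0.le hlam0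
      nlinarith
    have hR1' : ENNReal.ofReal (u / lam0) < R₁ := by
      refine lt_of_le_of_lt (ENNReal.ofReal_le_ofReal ?_) hwin
      rw [div_le_iff₀ hlam0, inv_mul_cancel₀ hlam0.ne']
      exact hu1.le
    have hsc := tail_scaling hpoly hc hr hrR hR1'
    have hratio : (u / lam0) / (u / (K * lam0)) = K := by
      field_simp
    rw [hratio] at hsc
    have e1 : ν (Ioi (u / lam0)) = ENNReal.ofReal (levyTail ν (u / lam0)) :=
      (ENNReal.ofReal_toReal (hlv.tail_fin _ hRpos).ne).symm
    have e2 : ν (Ioi (u / (K * lam0))) = ENNReal.ofReal (levyTail ν (u / (K * lam0))) :=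
      (ENNReal.ofReal_toReal (hlv.tail_fin _ hr).ne).symm
    rw [e1, e2, ← ENNReal.ofReal_mul hcK]
    exact ENNReal.ofReal_le_ofReal hsc
  have hfinal : ENNReal.ofReal (c * K ^ β₁ * laplaceExp ν lam0)
      ≤ ENNReal.ofReal (2 * laplaceExp ν (K * lam0)) := by
    calc ENNReal.ofReal (c * K ^ β₁ * laplaceExp ν lam0)
        = ENNReal.ofReal (c * K ^ β₁) * ENNReal.ofReal (laplaceExp ν lam0) :=
          ENNReal.ofReal_mul hcK
    _ = ENNReal.ofReal (c * K ^ β₁) * Φ lam0 := by rw [hPhi lam0 hlam0]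
    _ ≤ ENNReal.ofReal (c * K ^ β₁) * Ψ lam0 := by
        apply mul_le_mul_right
        rw [← hlayer lam0 hlam0]
        exact hlow lam0 hlam0
    _ ≤ Ψ (K * lam0) := hscale
    _ = ∫⁻ s, ENNReal.ofReal (min 1 (K * lam0 * s)) ∂ν := (hlayer _ hKl).symm
    _ ≤ 2 * Φ (K * lam0) := hup _ hKl
    _ = ENNReal.ofReal 2 * ENNReal.ofReal (laplaceExp ν (K * lam0)) := by
        rw [hPhi _ hKl]
        norm_num
    _ = ENNReal.ofReal (2 * laplaceExp ν (K * lam0)) := (ENNReal.ofReal_mul (by norm_num)).symm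
  rwa [ENNReal.ofReal_le_ofReal_iff (by nlinarith [phi_nonneg hlv hKl])] at hfinal

end Poly

lemma exists_tilt (hlv : IsLevyMeasure ν)
    (htail : ∀ A : ℝ, ∃ r : ℝ, 0 < r ∧ A ≤ levyTail ν r)
    {t lam0 : ℝ} (ht : 0 < t) (hlam0 : 0 < lam0) (hphi1 : t * laplaceExp ν lam0 = 1) :
    ∃ Λ : ℝ, lam0 ≤ Λ ∧ t * HH ν Λ = 8 := by
  obtain ⟨r, hr, hrw⟩ := htail (32 / t)
  set M : ℝ := max lam0 r⁻¹ with hM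
  have hM0 : 0 < M := lt_of_lt_of_le hlam0 (le_max_left _ _)
  have hMl : lam0 ≤ M := le_max_left _ _
  have hcont : ContinuousOn (fun Λ => t * HH ν Λ) (Icc lam0 M) := by
    intro Λ hΛ
    have hΛ0 : 0 < Λ := lt_of_lt_of_le hlam0 hΛ.1
    apply ContinuousAt.continuousWithinAt
    have h1 := (hasDerivAt_phi hlv hΛ0).continuousAt
    have h2 := (hasDerivAt_phi1 hlv hΛ0).continuousAt
    exact (continuousAt_const.mul ((h1.sub (continuousAt_id.mul h2)))).congr
      (Filter.EventuallyEq.of_eq rfl)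
  have hlo : t * HH ν lam0 ≤ 8 := by
    have h1 := HH_le_phi hlv hlam0
    have h2 : t * HH ν lam0 ≤ t * laplaceExp ν lam0 :=
      mul_le_mul_of_nonneg_left h1 ht.le
    rw [hphi1] at h2
    linarith
  have hhi : 8 ≤ t * HH ν M := by
    have h1 := HH_tail hlv hM0
    have h2 : levyTail ν r ≤ levyTail ν M⁻¹ := by
      apply levyTail_anti hlv (by positivity)
      rw [inv_le_comm₀ hM0 hr]
      exact le_max_right _ _
    have h3 : 32 / t ≤ levyTail ν M⁻¹ := le_trans hrw h2
    have h4 := gfun_one_ge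
    have h5 : (0:ℝ) ≤ levyTail ν M⁻¹ := ENNReal.toReal_nonneg
    have h6 : (1/4 : ℝ) * (32 / t) ≤ gfun 1 * levyTail ν M⁻¹ := by
      apply mul_le_mul h4 h3 (by positivity) (by linarith [gfun_nonneg (zero_le_one : (0:ℝ) ≤ 1)])
    have h7 : (1/4 : ℝ) * (32 / t) ≤ HH ν M := le_trans h6 h1
    calc (8:ℝ) = t * ((1/4) * (32 / t)) := by field_simp; ring
    _ ≤ t * HH ν M := mul_le_mul_of_nonneg_left h7 ht.le
  have h8 : (8:ℝ) ∈ Icc ((fun Λ => t * HH ν Λ) lam0) ((fun Λ => t * HH ν Λ) M) :=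
    ⟨hlo, hhi⟩
  obtain ⟨Λ, hΛmem, hΛeq⟩ := intermediate_value_Icc hMl hcont h8
  exact ⟨Λ, hΛmem.1, hΛeq⟩

section MuSide
variable {μfam : ℝ → Measure ℝ}

lemma mu_ae_nonneg (hsub : IsSubordinatorLaw ν μfam) {t : ℝ} (ht : 0 < t) :
    ∀ᵐ s ∂(μfam t), 0 ≤ s := by
  rw [ae_iff]
  have h : {s : ℝ | ¬ 0 ≤ s} = Iio 0 := by ext s; simp
  rw [h]; exact hsub.nonneg t ht

lemma mu_int (hsub : IsSubordinatorLaw ν μfam) {t : ℝ} (ht : 0 < t) {f : ℝ → ℝ}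
    (hm : AEStronglyMeasurable f (μfam t)) {C : ℝ}
    (hbound : ∀ s, 0 ≤ s → ‖f s‖ ≤ C) : Integrable f (μfam t) := by
  haveI := hsub.prob t ht
  apply Integrable.mono' (integrable_const C) hm
  filter_upwards [mu_ae_nonneg hsub ht] with s hs
  exact hbound s hs

lemma bnd_exp {l s : ℝ} (hl : 0 < l) (hs : 0 ≤ s) : ‖Real.exp (-(l * s))‖ ≤ 1 := by
  rw [Real.norm_eq_abs, abs_of_pos (Real.exp_pos _)]
  exact Real.exp_le_one_iff.mpr (by nlinarith)

lemma bnd_s_exp {l s : ℝ} (hl : 0 < l) (hs : 0 ≤ s) : ‖s * Real.exp (-(l * s))‖ ≤ l⁻¹ := by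
  rw [Real.norm_eq_abs, abs_of_nonneg (by positivity)]
  have h := xexp_le_one (x := l * s) (by positivity)
  rw [inv_eq_one_div, le_div_iff₀ hl]
  nlinarith

lemma bnd_s2_exp {l s : ℝ} (hl : 0 < l) (hs : 0 ≤ s) :
    ‖s ^ 2 * Real.exp (-(l * s))‖ ≤ 2 * l⁻¹ ^ 2 := by
  rw [Real.norm_eq_abs, abs_of_nonneg (by positivity)]
  have h := sq_exp_le_two (x := l * s) (by positivity)
  have hexpand : (l * s) ^ 2 * Real.exp (-(l * s)) = l ^ 2 * (s ^ 2 * Real.exp (-(l * s))) := by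
    ring
  rw [hexpand] at h
  rw [show (2:ℝ) * l⁻¹ ^ 2 = 2 / l ^ 2 by field_simp, le_div_iff₀ (by positivity)]
  linarith

lemma int_mu_exp (hsub : IsSubordinatorLaw ν μfam) {t : ℝ} (ht : 0 < t) {l : ℝ} (hl : 0 < l) :
    Integrable (fun s => Real.exp (-(l * s))) (μfam t) :=
  mu_int hsub ht (Continuous.aestronglyMeasurable (by continuity))
    (fun s hs => bnd_exp hl hs)

lemma int_mu_s_exp (hsub : IsSubordinatorLaw ν μfam) {t : ℝ} (ht : 0 < t) {l : ℝ} (hl : 0 < l) :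
    Integrable (fun s => s * Real.exp (-(l * s))) (μfam t) :=
  mu_int hsub ht (Continuous.aestronglyMeasurable (by continuity))
    (fun s hs => bnd_s_exp hl hs)

lemma int_mu_s2_exp (hsub : IsSubordinatorLaw ν μfam) {t : ℝ} (ht : 0 < t) {l : ℝ} (hl : 0 < l) :
    Integrable (fun s => s ^ 2 * Real.exp (-(l * s))) (μfam t) :=
  mu_int hsub ht (Continuous.aestronglyMeasurable (by continuity))
    (fun s hs => bnd_s2_exp hl hs)

lemma hasDerivAt_N (hsub : IsSubordinatorLaw ν μfam) {t : ℝ} (ht : 0 < t) {l : ℝ} (hl : 0 < l) :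
    HasDerivAt (fun x => ∫ s, Real.exp (-(x * s)) ∂(μfam t))
      (∫ s, -(s * Real.exp (-(l * s))) ∂(μfam t)) l := by
  haveI := hsub.prob t ht
  have key := hasDerivAt_integral_of_dominated_loc_of_deriv_le
    (μ := μfam t) (F := fun x s => Real.exp (-(x * s)))
    (F' := fun x s => -(s * Real.exp (-(x * s))))
    (x₀ := l) (bound := fun _ => 2 * l⁻¹)
    (Metric.ball_mem_nhds l (half_pos hl))
    (Filter.Eventually.of_forall (fun x =>
      Continuous.aestronglyMeasurable (by continuity)))
    (int_mu_exp hsub ht hl)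
    (Continuous.aestronglyMeasurable (by continuity))
    ?_ (integrable_const _) ?_
  · exact key.2
  · filter_upwards [mu_ae_nonneg hsub ht] with s hs
    intro x hx
    rw [Metric.mem_ball, Real.dist_eq, abs_lt] at hx
    have hx2 : l / 2 < x := by linarith [hx.1]
    rw [norm_neg]
    calc ‖s * Real.exp (-(x * s))‖ = s * Real.exp (-(x * s)) := by
          rw [Real.norm_eq_abs, abs_of_nonneg (by positivity)]
    _ ≤ s * Real.exp (-(l / 2 * s)) := by
        apply mul_le_mul_of_nonneg_left _ hs
        apply Real.exp_le_exp.mpr; nlinarith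
    _ ≤ (l / 2)⁻¹ := by
        have := bnd_s_exp (l := l / 2) (half_pos hl) hs
        rwa [Real.norm_eq_abs, abs_of_nonneg (by positivity)] at this
    _ = 2 * l⁻¹ := by field_simp
  · filter_upwards [mu_ae_nonneg hsub ht] with s hs
    intro x hx
    have h1 : HasDerivAt (fun y : ℝ => -(y * s)) (-s) x := by
      exact (hasDerivAt_mul_const s (x := x)).neg
    have h2 := (Real.hasDerivAt_exp (-(x * s))).comp x h1
    exact h2.congr_deriv (by ring)

lemma hasDerivAt_N1 (hsub : IsSubordinatorLaw ν μfam) {t : ℝ} (ht : 0 < t) {l : ℝ} (hl : 0 < l) :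
    HasDerivAt (fun x => ∫ s, s * Real.exp (-(x * s)) ∂(μfam t))
      (∫ s, -(s ^ 2 * Real.exp (-(l * s))) ∂(μfam t)) l := by
  haveI := hsub.prob t ht
  have key := hasDerivAt_integral_of_dominated_loc_of_deriv_le
    (μ := μfam t) (F := fun x s => s * Real.exp (-(x * s)))
    (F' := fun x s => -(s ^ 2 * Real.exp (-(x * s))))
    (x₀ := l) (bound := fun _ => 2 * (l / 2)⁻¹ ^ 2)
    (Metric.ball_mem_nhds l (half_pos hl))
    (Filter.Eventually.of_forall (fun x =>
      Continuous.aestronglyMeasurable (by continuity)))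
    (int_mu_s_exp hsub ht hl)
    (Continuous.aestronglyMeasurable (by continuity))
    ?_ (integrable_const _) ?_
  · exact key.2
  · filter_upwards [mu_ae_nonneg hsub ht] with s hs
    intro x hx
    rw [Metric.mem_ball, Real.dist_eq, abs_lt] at hx
    have hx2 : l / 2 < x := by linarith [hx.1]
    rw [norm_neg]
    calc ‖s ^ 2 * Real.exp (-(x * s))‖ = s ^ 2 * Real.exp (-(x * s)) := by
          rw [Real.norm_eq_abs, abs_of_nonneg (by positivity)]
    _ ≤ s ^ 2 * Real.exp (-(l / 2 * s)) := by
        apply mul_le_mul_of_nonneg_left _ (by positivity)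
        apply Real.exp_le_exp.mpr; nlinarith
    _ ≤ 2 * (l / 2)⁻¹ ^ 2 := by
        have := bnd_s2_exp (l := l / 2) (half_pos hl) hs
        rwa [Real.norm_eq_abs, abs_of_nonneg (by positivity)] at this
  · filter_upwards [mu_ae_nonneg hsub ht] with s hs
    intro x hx
    have h1 : HasDerivAt (fun y : ℝ => -(y * s)) (-s) x := by
      exact (hasDerivAt_mul_const s (x := x)).neg
    have h2 := ((Real.hasDerivAt_exp (-(x * s))).comp x h1).const_mul s
    exact h2.congr_deriv (by ring)

lemma hasDerivAt_R (hlv : IsLevyMeasure ν) {t : ℝ} {l : ℝ} (hl : 0 < l) :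
    HasDerivAt (fun x => Real.exp (-(t * laplaceExp ν x)))
      (Real.exp (-(t * laplaceExp ν l)) * (-(t * phi1 ν l))) l := by
  have hinner : HasDerivAt (fun x => -(t * laplaceExp ν x)) (-(t * phi1 ν l)) l :=
    ((hasDerivAt_phi hlv hl).const_mul t).neg
  exact (Real.hasDerivAt_exp (-(t * laplaceExp ν l))).comp l hinner

lemma M1_eq (hsub : IsSubordinatorLaw ν μfam) {t : ℝ} (ht : 0 < t) {l : ℝ} (hl : 0 < l) :
    ∫ s, s * Real.exp (-(l * s)) ∂(μfam t)
      = t * phi1 ν l * Real.exp (-(t * laplaceExp ν l)) := by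
  have hlv := hsub.levy
  have hE : (fun x => ∫ s, Real.exp (-(x * s)) ∂(μfam t))
      =ᶠ[nhds l] (fun x => Real.exp (-(t * laplaceExp ν x))) := by
    filter_upwards [Ioi_mem_nhds hl] with x hx
    exact hsub.laplace t x ht (le_of_lt hx)
  have hN := hasDerivAt_N hsub ht hl
  have hR := (hasDerivAt_R hlv hl (t := t)).congr_of_eventuallyEq hE
  have huniq := hN.unique hR
  rw [integral_neg] at huniq
  linear_combination -huniq

lemma M2_eq (hsub : IsSubordinatorLaw ν μfam) {t : ℝ} (ht : 0 < t) {l : ℝ} (hl : 0 < l) :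
    ∫ s, s ^ 2 * Real.exp (-(l * s)) ∂(μfam t)
      = (t * phi2 ν l + (t * phi1 ν l) ^ 2) * Real.exp (-(t * laplaceExp ν l)) := by
  have hlv := hsub.levy
  have hE : (fun x => ∫ s, s * Real.exp (-(x * s)) ∂(μfam t))
      =ᶠ[nhds l] (fun x => t * phi1 ν x * Real.exp (-(t * laplaceExp ν x))) := by
    filter_upwards [Ioi_mem_nhds hl] with x hx
    exact M1_eq hsub ht hx
  have hN1 := hasDerivAt_N1 hsub ht hl
  have hRHS : HasDerivAt (fun x => t * phi1 ν x * Real.exp (-(t * laplaceExp ν x)))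
      ((t * -(phi2 ν l)) * Real.exp (-(t * laplaceExp ν l))
        + (t * phi1 ν l) * (Real.exp (-(t * laplaceExp ν l)) * (-(t * phi1 ν l)))) l :=
    HasDerivAt.mul ((hasDerivAt_phi1 hlv hl).const_mul t) (hasDerivAt_R hlv hl (t := t))
  have hR := hRHS.congr_of_eventuallyEq hE
  have huniq := hN1.unique hR
  rw [integral_neg] at huniq
  linear_combination -huniq

end MuSide

section Core
variable {μfam : ℝ → Measure ℝ}

lemma core (hsub : IsSubordinatorLaw ν μfam) {t lam0 K : ℝ}
    (ht : 0 < t) (hlam0 : 0 < lam0) (hphi : t * laplaceExp ν lam0 = 1)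
    (hK : 2 ≤ K) (hKphi : 19 ≤ t * laplaceExp ν (K * lam0))
    (htilt : ∃ Λ : ℝ, lam0 ≤ Λ ∧ t * HH ν Λ = 8) :
    1 / 2 * Real.exp (-16) ≤ (μfam t (Icc (K⁻¹ * lam0⁻¹) lam0⁻¹)).toReal := by
  have hlv := hsub.levy
  haveI := hsub.prob t ht
  obtain ⟨Λ, hΛl, hΛ8⟩ := htilt
  have hΛ0 : 0 < Λ := lt_of_lt_of_le hlam0 hΛl
  set E := Real.exp (-(t * laplaceExp ν Λ)) with hEdef
  have hEpos : 0 < E := Real.exp_pos _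
  set x := t * phi1 ν Λ with hxdef
  have hxnn : 0 ≤ x := mul_nonneg ht.le (phi1_nonneg hlv hΛ0)
  set V := t * phi2 ν Λ with hVdef
  have hVnn : 0 ≤ V := mul_nonneg ht.le (phi2_nonneg hlv hΛ0)
  have hHH8 : t * (laplaceExp ν Λ - Λ * phi1 ν Λ) = 8 := by rw [← HH]; exact hΛ8
  have hVpos : 0 < V := by
    rcases lt_or_ge 0 V with h | h
    · exact h
    have hzero : phi2 ν Λ = 0 := by
      have h1 := phi2_nonneg hlv hΛ0
      have : t * phi2 ν Λ ≤ 0 := h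
      nlinarith
    have hae : (fun s => s ^ 2 * Real.exp (-(Λ * s))) =ᵐ[ν] 0 := by
      rw [← integral_eq_zero_iff_of_nonneg_ae ?_ (int_s2_exp hlv hΛ0)]
      · exact hzero
      · filter_upwards [ae_pos hlv] with s hs
        positivity
    have hFalse : ∀ᵐ s ∂ν, False := by
      filter_upwards [hae, ae_pos hlv] with s h1 h2
      have hpos := Real.exp_pos (-(Λ * s))
      simp only [Pi.zero_apply] at h1
      exact absurd h1 (ne_of_gt (mul_pos (pow_pos h2 2) hpos))
    have huniv : ν univ = 0 := by
      rw [ae_iff] at hFalse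
      simpa using hFalse
    have hν0 : ν = 0 := Measure.measure_univ_eq_zero.mp huniv
    rw [hν0] at hHH8
    simp only [laplaceExp, phi1, integral_zero_measure] at hHH8
    norm_num at hHH8
  set sd := Real.sqrt V with hsddef
  have hsdpos : 0 < sd := Real.sqrt_pos.mpr hVpos
  have hsd2 : sd ^ 2 = V := Real.sq_sqrt hVnn
  set ρ := 2 * sd with hρdef
  have hρpos : 0 < ρ := by positivity
  have hρ2 : ρ ^ 2 = 4 * V := by rw [hρdef]; nlinarith
  -- moment identities
  have hp : ∫ s, Real.exp (-(Λ * s)) ∂(μfam t) = E := hsub.laplace t Λ ht hΛ0.le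
  have hM1 : ∫ s, s * Real.exp (-(Λ * s)) ∂(μfam t) = x * E := by
    rw [M1_eq hsub ht hΛ0]
  have hM2 : ∫ s, s ^ 2 * Real.exp (-(Λ * s)) ∂(μfam t) = (V + x ^ 2) * E := by
    rw [M2_eq hsub ht hΛ0]
  have ie := int_mu_exp hsub ht hΛ0
  have ise := int_mu_s_exp hsub ht hΛ0
  have is2e := int_mu_s2_exp hsub ht hΛ0
  have hfun : (fun s => (s - x) ^ 2 * Real.exp (-(Λ * s)))
      = fun s => s ^ 2 * Real.exp (-(Λ * s)) - 2 * x * (s * Real.exp (-(Λ * s)))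
        + x ^ 2 * Real.exp (-(Λ * s)) := by
    funext s; ring
  have ivar : Integrable (fun s => (s - x) ^ 2 * Real.exp (-(Λ * s))) (μfam t) := by
    rw [hfun]
    exact (is2e.sub (ise.const_mul _)).add (ie.const_mul _)
  have hvar : ∫ s, (s - x) ^ 2 * Real.exp (-(Λ * s)) ∂(μfam t) = V * E := by
    have h1 : ∫ s, (s ^ 2 * Real.exp (-(Λ * s)) - 2 * x * (s * Real.exp (-(Λ * s)))
        + x ^ 2 * Real.exp (-(Λ * s))) ∂(μfam t)
        = (V + x ^ 2) * E - 2 * x * (x * E) + x ^ 2 * E := by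
      have hsubInt : Integrable
          (fun s => s ^ 2 * Real.exp (-(Λ * s)) - 2 * x * (s * Real.exp (-(Λ * s))))
          (μfam t) := by
        have := Integrable.sub is2e (ise.const_mul (2 * x))
        exact this
      have hmulInt : Integrable (fun s => 2 * x * (s * Real.exp (-(Λ * s)))) (μfam t) :=
        ise.const_mul (2 * x)
      rw [integral_add hsubInt (ie.const_mul (x ^ 2)),
        integral_sub is2e hmulInt, integral_const_mul, integral_const_mul,
        hM1, hM2, hp]
    rw [hfun, h1]
    ring
  -- Chebyshev
  set I : Set ℝ := Icc (x - ρ) (x + ρ) with hIdef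
  have hImeas : MeasurableSet I := measurableSet_Icc
  have hcheb : ∫ s in Iᶜ, Real.exp (-(Λ * s)) ∂(μfam t) ≤ E / 4 := by
    have h1 : ∫ s in Iᶜ, Real.exp (-(Λ * s)) ∂(μfam t)
        ≤ ∫ s in Iᶜ, ρ⁻¹ ^ 2 * ((s - x) ^ 2 * Real.exp (-(Λ * s))) ∂(μfam t) := by
      apply setIntegral_mono_on ie.integrableOn ((ivar.const_mul _).integrableOn)
        hImeas.compl
      intro s hs
      rw [mem_compl_iff, hIdef, mem_Icc, not_and_or] at hs
      have hρ2le : ρ ^ 2 ≤ (s - x) ^ 2 := by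
        rcases hs with h | h
        · push_neg at h; nlinarith
        · push_neg at h; nlinarith
      have he := Real.exp_pos (-(Λ * s))
      have hone : 1 ≤ ρ⁻¹ ^ 2 * (s - x) ^ 2 := by
        have hid : ρ⁻¹ ^ 2 * ρ ^ 2 = 1 := by field_simp
        calc (1:ℝ) = ρ⁻¹ ^ 2 * ρ ^ 2 := hid.symm
        _ ≤ ρ⁻¹ ^ 2 * (s - x) ^ 2 := by
            apply mul_le_mul_of_nonneg_left hρ2le (by positivity)
      calc Real.exp (-(Λ * s)) = 1 * Real.exp (-(Λ * s)) := (one_mul _).symm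
      _ ≤ (ρ⁻¹ ^ 2 * (s - x) ^ 2) * Real.exp (-(Λ * s)) :=
          mul_le_mul_of_nonneg_right hone he.le
      _ = ρ⁻¹ ^ 2 * ((s - x) ^ 2 * Real.exp (-(Λ * s))) := by ring
    have h2 : ∫ s in Iᶜ, ρ⁻¹ ^ 2 * ((s - x) ^ 2 * Real.exp (-(Λ * s))) ∂(μfam t)
        ≤ ∫ s, ρ⁻¹ ^ 2 * ((s - x) ^ 2 * Real.exp (-(Λ * s))) ∂(μfam t) := by
      apply setIntegral_le_integral (ivar.const_mul _)
      apply Filter.Eventually.of_forall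
      intro s
      positivity
    have h3 : ∫ s, ρ⁻¹ ^ 2 * ((s - x) ^ 2 * Real.exp (-(Λ * s))) ∂(μfam t)
        = ρ⁻¹ ^ 2 * (V * E) := by rw [integral_const_mul, hvar]
    have h4 : ρ⁻¹ ^ 2 * (V * E) = E / 4 := by
      rw [inv_pow, hρ2]
      field_simp
    calc ∫ s in Iᶜ, Real.exp (-(Λ * s)) ∂(μfam t) ≤ _ := h1
    _ ≤ _ := h2
    _ = E / 4 := by rw [h3, h4]
  have hIint : 3 / 4 * E ≤ ∫ s in I, Real.exp (-(Λ * s)) ∂(μfam t) := by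
    have hsplit := integral_add_compl hImeas ie
    rw [hp] at hsplit
    linarith
  have hIub : ∫ s in I, Real.exp (-(Λ * s)) ∂(μfam t)
      ≤ Real.exp (-(Λ * (x - ρ))) * (μfam t I).toReal := by
    calc ∫ s in I, Real.exp (-(Λ * s)) ∂(μfam t)
        ≤ ∫ _s in I, Real.exp (-(Λ * (x - ρ))) ∂(μfam t) := by
          apply setIntegral_mono_on ie.integrableOn
            (integrableOn_const (measure_ne_top _ _)) hImeas
          intro s hs
          apply Real.exp_le_exp.mpr
          have := hs.1
          nlinarith
    _ = (μfam t I).toReal • Real.exp (-(Λ * (x - ρ))) := setIntegral_const _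
    _ = Real.exp (-(Λ * (x - ρ))) * (μfam t I).toReal := by rw [smul_eq_mul]; ring
  -- exponent bounds
  have hLx : Λ * x = t * laplaceExp ν Λ - 8 := by
    rw [hxdef]; linear_combination -hHH8
  have hΛρ : Λ * ρ ≤ 8 := by
    have h5 := lam_sq_phi2_le hlv hΛ0
    have h6 : t * (Λ ^ 2 * phi2 ν Λ) ≤ t * (2 * HH ν Λ) :=
      mul_le_mul_of_nonneg_left h5 ht.le
    have h7 : Λ ^ 2 * V ≤ 16 := by
      have : t * (2 * HH ν Λ) = 2 * (t * HH ν Λ) := by ring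
      rw [this, hΛ8] at h6
      rw [hVdef]; nlinarith
    have h8 : Λ * sd = Real.sqrt (Λ ^ 2 * V) := by
      rw [Real.sqrt_mul (sq_nonneg Λ), Real.sqrt_sq hΛ0.le, hsddef]
    have h9 : Real.sqrt (Λ ^ 2 * V) ≤ 4 := by
      rw [show (4:ℝ) = Real.sqrt 16 by
        rw [show (16:ℝ) = 4 ^ 2 by norm_num, Real.sqrt_sq (by norm_num : (0:ℝ) ≤ 4)]]
      exact Real.sqrt_le_sqrt h7
    calc Λ * ρ = 2 * (Λ * sd) := by rw [hρdef]; ring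
    _ ≤ 2 * 4 := by rw [h8]; linarith
    _ = 8 := by norm_num
  have hmass : 3 / 4 * Real.exp (-16) ≤ (μfam t I).toReal := by
    have h1 : 3 / 4 * E ≤ Real.exp (-(Λ * (x - ρ))) * (μfam t I).toReal :=
      le_trans hIint hIub
    have h2 := mul_le_mul_of_nonneg_left h1 (Real.exp_pos (Λ * (x - ρ))).le
    have h3 : Real.exp (Λ * (x - ρ)) * (Real.exp (-(Λ * (x - ρ))) * (μfam t I).toReal)
        = (μfam t I).toReal := by
      rw [← mul_assoc, ← Real.exp_add]
      simp
    rw [h3] at h2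
    have h4 : Real.exp (Λ * (x - ρ)) * (3 / 4 * E)
        = 3 / 4 * Real.exp (Λ * (x - ρ) - t * laplaceExp ν Λ) := by
      rw [hEdef, Real.exp_sub, Real.exp_neg]
      ring
    rw [h4] at h2
    refine le_trans ?_ h2
    have h5 : -16 ≤ Λ * (x - ρ) - t * laplaceExp ν Λ := by
      have : Λ * (x - ρ) = Λ * x - Λ * ρ := by ring
      rw [this, hLx]
      linarith
    have := Real.exp_le_exp.mpr h5
    linarith
  -- right endpoint
  have hub : x + ρ ≤ lam0⁻¹ := by
    have hratio := phi_ratio hlv hlam0 hΛl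
    have h11 : t * (lam0 * laplaceExp ν Λ) ≤ Λ := by
      have h := mul_le_mul_of_nonneg_left hratio ht.le
      calc t * (lam0 * laplaceExp ν Λ) ≤ t * (Λ * laplaceExp ν lam0) := h
      _ = Λ * (t * laplaceExp ν lam0) := by ring
      _ = Λ := by rw [hphi]; ring
    have h10 : t * laplaceExp ν Λ ≤ Λ * lam0⁻¹ := by
      have hinv : lam0 * lam0⁻¹ = 1 := mul_inv_cancel₀ hlam0.ne'
      have h12 := mul_le_mul_of_nonneg_left h11 (by positivity : (0:ℝ) ≤ lam0⁻¹)
      calc t * laplaceExp ν Λ = lam0⁻¹ * (t * (lam0 * laplaceExp ν Λ)) := by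
            field_simp
      _ ≤ lam0⁻¹ * Λ := h12
      _ = Λ * lam0⁻¹ := by ring
    have h12 : Λ * (x + ρ) ≤ Λ * lam0⁻¹ := by
      have he : Λ * (x + ρ) = Λ * x + Λ * ρ := by ring
      rw [he, hLx]
      linarith
    exact le_of_mul_le_mul_left h12 hΛ0
  -- Markov lower tail
  set b := K⁻¹ * lam0⁻¹ with hbdef
  have hKpos : 0 < K := by linarith
  have hbpos : 0 < b := by positivity
  have hKl0 : 0 < K * lam0 := by positivity
  have hmk : (μfam t (Iio b)).toReal ≤ Real.exp (-18) := by
    have hind : ∀ s : ℝ, (Iio b).indicator (fun _ => (1:ℝ)) s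
        ≤ Real.exp (K * lam0 * b) * Real.exp (-(K * lam0 * s)) := by
      intro s
      rcases lt_or_ge s b with h | h
      · rw [indicator_of_mem (mem_Iio.mpr h)]
        rw [← Real.exp_add]
        apply Real.one_le_exp
        nlinarith
      · rw [indicator_of_notMem (by simpa [mem_Iio] using h)]
        positivity
    have hId : Integrable ((Iio b).indicator (fun _ => (1:ℝ))) (μfam t) :=
      (integrable_const 1).indicator measurableSet_Iio
    have hIe : Integrable (fun s => Real.exp (K * lam0 * b) * Real.exp (-(K * lam0 * s)))
        (μfam t) := (int_mu_exp hsub ht hKl0).const_mul _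
    have h13 := integral_mono hId hIe hind
    have hint : ∫ s, (Iio b).indicator (fun _ => (1:ℝ)) s ∂(μfam t)
        = (μfam t (Iio b)).toReal := by
      exact integral_indicator_one (measurableSet_Iio (a := b)) (μ := μfam t)
    rw [hint, integral_const_mul, hsub.laplace t _ ht hKl0.le] at h13
    have h14 : K * lam0 * b = 1 := by rw [hbdef]; field_simp
    rw [h14, ← Real.exp_add] at h13
    refine le_trans h13 ?_
    apply Real.exp_le_exp.mpr
    linarith
  -- combine
  have hsubset : I ⊆ Icc b lam0⁻¹ ∪ Iio b := by
    intro s hs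
    rcases le_or_gt b s with h | h
    · exact Or.inl ⟨h, le_trans hs.2 hub⟩
    · exact Or.inr h
  have hμle : μfam t I ≤ μfam t (Icc b lam0⁻¹) + μfam t (Iio b) :=
    (measure_mono hsubset).trans (measure_union_le _ _)
  have htr : (μfam t I).toReal
      ≤ (μfam t (Icc b lam0⁻¹)).toReal + (μfam t (Iio b)).toReal := by
    have h15 := ENNReal.toReal_mono
      (ENNReal.add_ne_top.mpr ⟨measure_ne_top _ _, measure_ne_top _ _⟩) hμle
    rwa [ENNReal.toReal_add (measure_ne_top _ _) (measure_ne_top _ _)] at h15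
  have hexp4 : Real.exp (-18) ≤ 1 / 4 * Real.exp (-16) := by
    have h2 : (4:ℝ) < Real.exp 2 := by
      have := Real.exp_one_gt_d9
      rw [show (2:ℝ) = 1 + 1 by norm_num, Real.exp_add]
      nlinarith
    have h3 : Real.exp (-18) * Real.exp 2 = Real.exp (-16) := by
      rw [← Real.exp_add]; norm_num
    nlinarith [Real.exp_pos (-18)]
  linarith

end Core

end ModeAux

/-- Proposition 2.7: under (Poly-R₁), for any `T > 0` there are `δ ∈ (0,1)`
(independent of `T`) and `ε = ε(T) ∈ (0,1)` with
`P(ε/φ⁻¹(1/t) ≤ S_t ≤ 1/φ⁻¹(1/t)) ≥ δ` for `t ∈ (0,T)`; under (Poly-∞) there are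
`ε, δ ∈ (0,1)` such that this bound holds for all `t > 0`. -/
theorem mode_estimate
    (ν : Measure ℝ) (μ : ℝ → Measure ℝ) (hsub : IsSubordinatorLaw ν μ)
    (φInv : ℝ → ℝ) (hφInv : IsPhiInv ν φInv)
    (R₁ : ℝ≥0∞) (c c' β₁ β₂ : ℝ)
    (hR₁ : 0 < R₁) (hc : 0 < c) (hc' : 0 < c') (hβ₁ : 0 < β₁) (hβ : β₁ ≤ β₂)
    (hpoly : PolyCond ν R₁ c c' β₁ β₂) :
    (∃ δ : ℝ, δ ∈ Set.Ioo (0:ℝ) 1 ∧ ∀ T : ℝ, 0 < T → ∃ ε : ℝ, ε ∈ Set.Ioo (0:ℝ) 1 ∧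
      ∀ t : ℝ, 0 < t → t < T →
        δ ≤ (μ t (Set.Icc (ε * (φInv (t⁻¹))⁻¹) ((φInv (t⁻¹))⁻¹))).toReal) ∧
    (R₁ = ⊤ → ∃ ε δ : ℝ, ε ∈ Set.Ioo (0:ℝ) 1 ∧ δ ∈ Set.Ioo (0:ℝ) 1 ∧
      ∀ t : ℝ, 0 < t →
        δ ≤ (μ t (Set.Icc (ε * (φInv (t⁻¹))⁻¹) ((φInv (t⁻¹))⁻¹))).toReal) := by
  have hlv := hsub.levy
  have hδpos : 0 < 1 / 2 * Real.exp (-16) := by positivity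
  have hδlt1 : 1 / 2 * Real.exp (-16) < 1 := by
    have h1 : Real.exp (-16) ≤ 1 := Real.exp_le_one_iff.mpr (by norm_num)
    linarith
  have htail := ModeAux.tail_unbounded hpoly hc hβ₁ hR₁
  -- monotonicity of φInv
  have hφmono : ∀ u v : ℝ, 0 < u → u ≤ v → φInv u ≤ φInv v := by
    intro u v hu huv
    by_contra hlt
    push_neg at hlt
    have hv : 0 < v := lt_of_lt_of_le hu huv
    have h1 := ModeAux.phi_mono hlv (hφInv v hv).1 hlt.le
    rw [(hφInv v hv).2, (hφInv u hu).2] at h1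
    have heq : u = v := le_antisymm huv h1
    rw [heq] at hlt
    exact lt_irrefl _ hlt
  set Kp : ℝ := (38 / c) ^ β₁⁻¹ with hKpdef
  have hKpnn : 0 ≤ Kp := Real.rpow_nonneg (by positivity) _
  -- branch 1 scaling bound
  have hbr1 : ∀ t K : ℝ, 0 < t → max 2 Kp ≤ K →
      ENNReal.ofReal ((φInv t⁻¹)⁻¹) < R₁ →
      19 ≤ t * laplaceExp ν (K * φInv t⁻¹) := by
    intro t K ht hKK hwin
    have hti : 0 < t⁻¹ := by positivity
    obtain ⟨hl0, hle⟩ := hφInv t⁻¹ hti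
    have hK1 : (1:ℝ) ≤ K := le_trans (by norm_num) (le_trans (le_max_left 2 Kp) hKK)
    have hsc := ModeAux.phi_scaling hlv hpoly hc hl0 hwin hK1
    rw [hle] at hsc
    have hKb : 38 / c ≤ K ^ β₁ := by
      have h1 : Kp ≤ K := le_trans (le_max_right _ _) hKK
      calc 38 / c = Kp ^ β₁ := by
            rw [hKpdef, ← Real.rpow_mul (by positivity), inv_mul_cancel₀ hβ₁.ne',
              Real.rpow_one]
      _ ≤ K ^ β₁ := Real.rpow_le_rpow hKpnn h1 hβ₁.le
    have h2 : 38 ≤ c * K ^ β₁ := by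
      rw [div_le_iff₀ hc] at hKb
      nlinarith
    have htinv : t * t⁻¹ = 1 := mul_inv_cancel₀ (ne_of_gt ht)
    have h3 := mul_le_mul_of_nonneg_left hsc ht.le
    have hKβnn : 0 ≤ K ^ β₁ := Real.rpow_nonneg (by positivity) _
    nlinarith
  -- generic application of core
  have happly : ∀ t K : ℝ, 0 < t → 2 ≤ K →
      19 ≤ t * laplaceExp ν (K * φInv t⁻¹) →
      1 / 2 * Real.exp (-16)
        ≤ (μ t (Set.Icc (K⁻¹ * (φInv t⁻¹)⁻¹) ((φInv t⁻¹)⁻¹))).toReal := by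
    intro t K ht hK2 hKphi
    have hti : 0 < t⁻¹ := by positivity
    obtain ⟨hl0, hle⟩ := hφInv t⁻¹ hti
    have hphi1 : t * laplaceExp ν (φInv t⁻¹) = 1 := by
      rw [hle]; exact mul_inv_cancel₀ (ne_of_gt ht)
    exact ModeAux.core hsub ht hl0 hphi1 hK2 hKphi
      (ModeAux.exists_tilt hlv htail ht hl0 hphi1)
  have hKmax2 : (2:ℝ) ≤ max 2 Kp := le_max_left _ _
  have hepsmem : ∀ K : ℝ, 2 ≤ K → K⁻¹ ∈ Set.Ioo (0:ℝ) 1 := by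
    intro K hK2
    constructor
    · positivity
    · rw [inv_lt_one_iff₀]
      right; linarith
  constructor
  · -- first conjunct
    refine ⟨1 / 2 * Real.exp (-16), ⟨hδpos, hδlt1⟩, ?_⟩
    intro T hT
    by_cases htop : R₁ = ⊤
    · refine ⟨(max 2 Kp)⁻¹, hepsmem _ hKmax2, ?_⟩
      intro t ht _
      exact happly t _ ht hKmax2
        (hbr1 t _ ht le_rfl (by rw [htop]; exact ENNReal.ofReal_lt_top))
    · -- R₁ finite : need T-dependent K
      have hR1r : 0 < R₁.toReal := ENNReal.toReal_pos hR₁.ne' htop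
      set z : ℝ := (R₁.toReal)⁻¹ with hzdef
      have hz : 0 < z := by positivity
      obtain ⟨R₀, hR₀, hR₀1⟩ := ModeAux.exists_R0 hR₁
      have hwR₀ := ModeAux.tail_pos hpoly hc hR₀ hR₀1
      have hφz : 0 < laplaceExp ν z := by
        have h1 := ModeAux.phi_tail hlv hz hR₀
        have h2 : Real.exp (-(z * R₀)) < 1 := by
          rw [Real.exp_lt_one_iff]
          nlinarith
        nlinarith
      set t₁ : ℝ := (laplaceExp ν z)⁻¹ with ht₁def
      have ht₁ : 0 < t₁ := by positivity
      have hbr2t : ∀ t : ℝ, 0 < t → ¬(ENNReal.ofReal ((φInv t⁻¹)⁻¹) < R₁) → t₁ ≤ t := by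
        intro t ht hno
        have hti : 0 < t⁻¹ := by positivity
        obtain ⟨hl0, hle⟩ := hφInv t⁻¹ hti
        push_neg at hno
        have h1 : R₁.toReal ≤ (φInv t⁻¹)⁻¹ := by
          have h2 := ENNReal.toReal_mono ENNReal.ofReal_ne_top hno
          rwa [ENNReal.toReal_ofReal (by positivity)] at h2
        have h3 : φInv t⁻¹ ≤ z := by
          rw [hzdef]
          rw [← inv_inv (φInv t⁻¹)]
          exact inv_anti₀ hR1r h1
        have h4 : t⁻¹ ≤ laplaceExp ν z := by
          rw [← hle]
          exact ModeAux.phi_mono hlv hl0 h3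
        rw [ht₁def, ← inv_inv t]
        exact inv_anti₀ hti h4
      set ΛT : ℝ := φInv T⁻¹ with hΛTdef
      have hΛT0 : 0 < ΛT := (hφInv T⁻¹ (by positivity)).1
      have h19t₁ : 0 < 19 / t₁ := by positivity
      set KT : ℝ := max 2 (φInv (19 / t₁) / ΛT) with hKTdef
      set K : ℝ := max (max 2 Kp) KT with hKdef
      have hK2 : (2:ℝ) ≤ K := le_trans hKmax2 (le_max_left _ _)
      refine ⟨K⁻¹, hepsmem _ hK2, ?_⟩
      intro t ht htT
      have hti : 0 < t⁻¹ := by positivity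
      obtain ⟨hl0, hle⟩ := hφInv t⁻¹ hti
      apply happly t K ht hK2
      by_cases hwin : ENNReal.ofReal ((φInv t⁻¹)⁻¹) < R₁
      · exact hbr1 t K ht (le_max_left _ _) hwin
      · have ht1 := hbr2t t ht hwin
        have hTmono : ΛT ≤ φInv t⁻¹ := by
          rw [hΛTdef]
          apply hφmono T⁻¹ t⁻¹ (by positivity)
          exact inv_anti₀ ht htT.le
        obtain ⟨hφ19pos, hφ19⟩ := hφInv (19 / t₁) h19t₁
        have hKΛ : φInv (19 / t₁) ≤ K * φInv t⁻¹ := by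
          have hKT : φInv (19 / t₁) / ΛT ≤ KT := le_max_right _ _
          calc φInv (19 / t₁) = (φInv (19 / t₁) / ΛT) * ΛT := by
                field_simp
          _ ≤ KT * ΛT := mul_le_mul_of_nonneg_right hKT hΛT0.le
          _ ≤ K * φInv t⁻¹ := by
              apply mul_le_mul (le_max_right _ _) hTmono hΛT0.le
              linarith
        have hφge : 19 / t₁ ≤ laplaceExp ν (K * φInv t⁻¹) := by
          rw [← hφ19]
          exact ModeAux.phi_mono hlv hφ19pos hKΛ
        calc (19:ℝ) = t₁ * (19 / t₁) := by field_simp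
        _ ≤ t * laplaceExp ν (K * φInv t⁻¹) :=
            mul_le_mul ht1 hφge (by positivity) ht.le
  · -- second conjunct
    intro htop
    refine ⟨(max 2 Kp)⁻¹, 1 / 2 * Real.exp (-16), hepsmem _ hKmax2,
      ⟨hδpos, hδlt1⟩, ?_⟩
    intro t ht
    exact happly t _ ht hKmax2
      (hbr1 t _ ht le_rfl (by rw [htop]; exact ENNReal.ofReal_lt_top))
end

section
/- Suppose (Poly-R₁) holds. Then for any κ>0 there exists a constant a₁=a₁(κ)>0 such that exp(−κ s H^{−1}(1/t)) ≤ a₁ t w(s) for all t>0 and all s with 1/φ^{−1}(1/t) ≤ s < R₁/2. -/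
open MeasureTheory Real Set
open scoped ENNReal

-- g(x) = 1 - e^{-x} - x e^{-x}
lemma my_g_le_one {x : ℝ} (hx : 0 ≤ x) :
    1 - Real.exp (-x) - x * Real.exp (-x) ≤ 1 := by
  nlinarith [Real.exp_pos (-x), mul_nonneg hx (Real.exp_pos (-x)).le]

lemma my_g_hasDeriv (z : ℝ) :
    HasDerivAt (fun z : ℝ => 1 - Real.exp (-z) - z * Real.exp (-z))
      (z * Real.exp (-z)) z := by
  have h1 : HasDerivAt (fun z : ℝ => Real.exp (-z)) (-Real.exp (-z)) z := by
    simpa [Function.comp_def] using (Real.hasDerivAt_exp (-z)).comp z (hasDerivAt_neg z)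
  have h2 : HasDerivAt (fun z : ℝ => z * Real.exp (-z))
      (Real.exp (-z) + z * -Real.exp (-z)) z := by
    simpa [Pi.mul_def] using (hasDerivAt_id z).mul h1
  have := ((hasDerivAt_const z (1:ℝ)).sub h1).sub h2
  simp only [Pi.sub_def] at this
  exact this.congr_deriv (by ring)

lemma my_g_mono : MonotoneOn (fun x : ℝ => 1 - Real.exp (-x) - x * Real.exp (-x)) (Set.Ici 0) := by
  apply monotoneOn_of_deriv_nonneg (convex_Ici 0)
  · exact (Continuous.continuousOn (by continuity))
  · intro x _
    exact (my_g_hasDeriv x).differentiableAt.differentiableWithinAt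
  · intro x hx
    rw [interior_Ici] at hx
    rw [(my_g_hasDeriv x).deriv]
    exact mul_nonneg (le_of_lt hx) (Real.exp_pos _).le

lemma my_g_nonneg {x : ℝ} (hx : 0 ≤ x) :
    0 ≤ 1 - Real.exp (-x) - x * Real.exp (-x) := by
  have := my_g_mono (Set.self_mem_Ici) hx hx
  simpa using this

lemma my_g_le_half_sq {x : ℝ} (hx : 0 ≤ x) :
    1 - Real.exp (-x) - x * Real.exp (-x) ≤ x ^ 2 / 2 := by
  set F : ℝ → ℝ := fun z => z ^ 2 / 2 - (1 - Real.exp (-z) - z * Real.exp (-z)) with hF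
  have hd : ∀ z : ℝ, HasDerivAt F (z - z * Real.exp (-z)) z := by
    intro z
    have h3 : HasDerivAt (fun z : ℝ => z ^ 2 / 2) z z := by
      simpa using ((hasDerivAt_pow 2 z).div_const 2)
    exact h3.sub (my_g_hasDeriv z)
  have mono : MonotoneOn F (Set.Ici (0:ℝ)) := by
    apply monotoneOn_of_deriv_nonneg (convex_Ici 0)
    · exact (Continuous.continuousOn (by continuity))
    · intro x _
      exact (hd x).differentiableAt.differentiableWithinAt
    · intro x hx'
      rw [interior_Ici] at hx'
      have hx0 : (0:ℝ) < x := hx'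
      rw [(hd x).deriv]
      have : Real.exp (-x) ≤ 1 := by
        rw [show (1:ℝ) = Real.exp 0 by simp]
        exact Real.exp_le_exp.2 (by linarith)
      nlinarith [mul_nonneg hx0.le (sub_nonneg.2 this)]
  have h0 : F 0 = 0 := by simp [hF]
  have := mono (Set.self_mem_Ici) hx hx
  rw [h0] at this
  simpa [hF] using this

lemma my_exp_convex {x : ℝ} (hx : 0 ≤ x) (hx1 : x ≤ 1) :
    (1 - Real.exp (-1)) * x ≤ 1 - Real.exp (-x) := by
  have h := convexOn_exp.2 (Set.mem_univ (0:ℝ)) (Set.mem_univ (-1:ℝ))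
    (by linarith : (0:ℝ) ≤ 1 - x) hx (by ring)
  simp only [smul_eq_mul, mul_zero, mul_neg, mul_one, zero_add, Real.exp_zero] at h
  have h' : Real.exp (-x) ≤ (1 - x) + x * Real.exp (-1) := by
    convert h using 2 <;> ring
  nlinarith

lemma my_xexp_le {x : ℝ} : x * Real.exp (-x) ≤ 1 := by
  rcases le_or_gt x 0 with h | h
  · have := Real.exp_pos (-x); nlinarith
  · have h1 : x ≤ Real.exp x := (Real.add_one_le_exp x).trans' (by linarith)
    have h2 : Real.exp (-x) = (Real.exp x)⁻¹ := Real.exp_neg x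
    rw [h2]
    calc x * (Real.exp x)⁻¹ ≤ Real.exp x * (Real.exp x)⁻¹ :=
          mul_le_mul_of_nonneg_right h1 (inv_nonneg.2 (Real.exp_pos x).le)
      _ = 1 := mul_inv_cancel₀ (Real.exp_pos x).ne'

variable {ν : Measure ℝ}
lemma my_ae_pos (hν : IsLevyMeasure ν) : ∀ᵐ u ∂ν, 0 < u := by
  rw [ae_iff]
  convert hν.supp using 2
  ext x
  simp [not_lt]

lemma my_int_aux (hν : IsLevyMeasure ν) {f : ℝ → ℝ} (hf : Continuous f)
    {C₁ C₂ : ℝ} (h1 : ∀ u ∈ Set.Ioc (0:ℝ) 1, ‖f u‖ ≤ C₁ * u)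
    (h2 : ∀ u ∈ Set.Ioi (1:ℝ), ‖f u‖ ≤ C₂) : Integrable f ν := by
  have hIic : IntegrableOn f (Set.Iic 0) ν := by
    have : ν.restrict (Set.Iic 0) = 0 := Measure.restrict_eq_zero.mpr hν.supp
    rw [IntegrableOn, this]
    exact integrable_zero_measure
  have hIoc : IntegrableOn f (Set.Ioc 0 1) ν := by
    refine Integrable.mono (hν.integ.const_mul C₁) hf.aestronglyMeasurable.restrict ?_
    filter_upwards [ae_restrict_mem measurableSet_Ioc] with u hu
    refine (h1 u hu).trans ?_
    rw [Real.norm_eq_abs]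
    exact le_abs_self _
  have hIoi : IntegrableOn f (Set.Ioi 1) ν := by
    refine Integrable.mono (g := fun _ => C₂) ?_ hf.aestronglyMeasurable.restrict ?_
    · exact integrableOn_const (C := C₂) (hν.tail_fin 1 one_pos).ne
    · filter_upwards [ae_restrict_mem measurableSet_Ioi] with u hu
      refine (h2 u hu).trans ?_
      rw [Real.norm_eq_abs]
      exact le_abs_self _
  have : IntegrableOn f (Set.Iic 0 ∪ (Set.Ioc 0 1 ∪ Set.Ioi 1)) ν :=
    hIic.union (hIoc.union hIoi)
  apply integrableOn_univ.mp
  apply this.mono_set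
  intro x _
  rcases le_or_gt x 0 with h | h
  · exact Or.inl h
  · rcases le_or_gt x 1 with h' | h'
    · exact Or.inr (Or.inl ⟨h, h'⟩)
    · exact Or.inr (Or.inr h')

lemma my_int_one_sub_exp (hν : IsLevyMeasure ν) {l : ℝ} (hl : 0 < l) :
    Integrable (fun u => 1 - Real.exp (-(l * u))) ν := by
  apply my_int_aux hν (by continuity) (C₁ := l) (C₂ := 1)
  · intro u hu
    have h1 : Real.exp (-(l*u)) ≤ 1 := by
      rw [show (1:ℝ) = Real.exp 0 by simp]
      exact Real.exp_le_exp.2 (by nlinarith [hu.1])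
    have h2 : 1 - l*u ≤ Real.exp (-(l*u)) := by
      have := Real.add_one_le_exp (-(l*u)); linarith
    rw [Real.norm_eq_abs, abs_of_nonneg (by linarith)]
    linarith
  · intro u hu
    have hu0 : (0:ℝ) < u := lt_trans one_pos hu
    have h1 : Real.exp (-(l*u)) ≤ 1 := by
      rw [show (1:ℝ) = Real.exp 0 by simp]
      exact Real.exp_le_exp.2 (by nlinarith)
    rw [Real.norm_eq_abs, abs_of_nonneg (by linarith [(Real.exp_pos (-(l*u))).le])]
    linarith [(Real.exp_pos (-(l*u))).le]

lemma my_xexp_le' {x : ℝ} : x * Real.exp (-x) ≤ 1 := by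
  rcases le_or_gt x 0 with h | h
  · have := Real.exp_pos (-x); nlinarith
  · have h1 : x ≤ Real.exp x := (Real.add_one_le_exp x).trans' (by linarith)
    rw [Real.exp_neg x]
    calc x * (Real.exp x)⁻¹ ≤ Real.exp x * (Real.exp x)⁻¹ :=
          mul_le_mul_of_nonneg_right h1 (inv_nonneg.2 (Real.exp_pos x).le)
      _ = 1 := mul_inv_cancel₀ (Real.exp_pos x).ne'

lemma my_int_xexp (hν : IsLevyMeasure ν) {l : ℝ} (hl : 0 < l) :
    Integrable (fun u => u * Real.exp (-(l * u))) ν := by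
  apply my_int_aux hν (by continuity) (C₁ := 1) (C₂ := 1/l)
  · intro u hu
    have h1 : Real.exp (-(l*u)) ≤ 1 := by
      rw [show (1:ℝ) = Real.exp 0 by simp]
      exact Real.exp_le_exp.2 (by nlinarith [hu.1])
    rw [Real.norm_eq_abs, abs_of_nonneg (mul_nonneg hu.1.le (Real.exp_pos _).le), one_mul]
    nlinarith [hu.1, (Real.exp_pos (-(l*u))).le]
  · intro u hu
    have hu0 : (0:ℝ) < u := lt_trans one_pos hu
    rw [Real.norm_eq_abs, abs_of_nonneg (mul_nonneg hu0.le (Real.exp_pos _).le)]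
    rw [le_div_iff₀ hl]
    calc u * Real.exp (-(l*u)) * l = (l*u) * Real.exp (-(l*u)) := by ring
      _ ≤ 1 := my_xexp_le'

lemma my_phi_mono (hν : IsLevyMeasure ν) {a b : ℝ} (ha : 0 < a) (hab : a ≤ b) :
    laplaceExp ν a ≤ laplaceExp ν b := by
  apply integral_mono_ae (my_int_one_sub_exp hν ha) (my_int_one_sub_exp hν (ha.trans_le hab))
  filter_upwards [my_ae_pos hν] with u hu
  have : Real.exp (-(b*u)) ≤ Real.exp (-(a*u)) := Real.exp_le_exp.2 (by nlinarith)
  linarith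

lemma my_hasDeriv (hν : IsLevyMeasure ν) {l : ℝ} (hl : 0 < l) :
    HasDerivAt (laplaceExp ν) (∫ u, u * Real.exp (-(l * u)) ∂ν) l := by
  have key := hasDerivAt_integral_of_dominated_loc_of_deriv_le
    (F := fun (x : ℝ) (a : ℝ) => 1 - Real.exp (-(x * a)))
    (F' := fun (x : ℝ) (a : ℝ) => a * Real.exp (-(x * a)))
    (x₀ := l) (s := Metric.ball l (l/2)) (μ := ν)
    (bound := fun a => a * Real.exp (-(l/2 * a)))
    (Metric.ball_mem_nhds _ (by positivity))
    (Filter.Eventually.of_forall fun x => (Continuous.aestronglyMeasurable (by continuity)))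
    (my_int_one_sub_exp hν hl)
    (Continuous.aestronglyMeasurable (by continuity))
    ?_ (my_int_xexp hν (by positivity)) ?_
  · exact key.2
  · filter_upwards [my_ae_pos hν] with a ha
    intro x hx
    have hx' : l/2 < x := by
      have := abs_lt.1 (mem_ball_iff_norm.1 hx)
      linarith [this.1]
    rw [Real.norm_eq_abs, abs_of_nonneg (mul_nonneg ha.le (Real.exp_pos _).le)]
    exact mul_le_mul_of_nonneg_left (Real.exp_le_exp.2 (by nlinarith)) ha.le
  · apply Filter.Eventually.of_forall
    intro a x _
    have h1 : HasDerivAt (fun x : ℝ => -(x * a)) (-a) x := by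
      simpa [Pi.neg_def] using (hasDerivAt_mul_const a (x := x)).neg
    have h2 : HasDerivAt (fun x : ℝ => Real.exp (-(x * a)))
        (Real.exp (-(x * a)) * (-a)) x := (Real.hasDerivAt_exp _).comp x h1
    have := (hasDerivAt_const x (1:ℝ)).sub h2
    convert this using 1
    · funext y; simp [mul_comm]
    · ring

lemma my_Hfun_repr (hν : IsLevyMeasure ν) {l : ℝ} (hl : 0 < l) :
    Hfun ν l = ∫ u, (1 - Real.exp (-(l * u)) - l * (u * Real.exp (-(l * u)))) ∂ν := by
  have hder := (my_hasDeriv hν hl).deriv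
  rw [Hfun, hder, laplaceExp]
  rw [← integral_const_mul]
  exact (integral_sub (my_int_one_sub_exp hν hl) ((my_int_xexp hν hl).const_mul l)).symm

lemma my_Hfun_mono (hν : IsLevyMeasure ν) {a b : ℝ} (ha : 0 < a) (hab : a ≤ b) :
    Hfun ν a ≤ Hfun ν b := by
  have hb : 0 < b := ha.trans_le hab
  rw [my_Hfun_repr hν ha, my_Hfun_repr hν hb]
  have hia : Integrable (fun u => 1 - Real.exp (-(a * u)) - a * (u * Real.exp (-(a * u)))) ν :=
    (my_int_one_sub_exp hν ha).sub ((my_int_xexp hν ha).const_mul a)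
  have hib : Integrable (fun u => 1 - Real.exp (-(b * u)) - b * (u * Real.exp (-(b * u)))) ν :=
    (my_int_one_sub_exp hν hb).sub ((my_int_xexp hν hb).const_mul b)
  apply integral_mono_ae hia hib
  filter_upwards [my_ae_pos hν] with u hu
  have h1 : a * u ≤ b * u := by nlinarith
  have h2 : (0:ℝ) ≤ a * u := by positivity
  have := my_g_mono (Set.mem_Ici.2 h2) (Set.mem_Ici.2 (h2.trans h1)) h1
  simp only at this
  calc 1 - Real.exp (-(a * u)) - a * (u * Real.exp (-(a * u)))
      = 1 - Real.exp (-(a*u)) - (a*u) * Real.exp (-(a*u)) := by ring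
    _ ≤ 1 - Real.exp (-(b*u)) - (b*u) * Real.exp (-(b*u)) := by simpa using this
    _ = 1 - Real.exp (-(b * u)) - b * (u * Real.exp (-(b * u))) := by ring

lemma my_int_id_Ioc (hν : IsLevyMeasure ν) {s : ℝ} (hs : 0 < s) :
    IntegrableOn (fun u : ℝ => u) (Set.Ioc 0 s) ν := by
  rcases le_or_gt s 1 with h | h
  · exact hν.integ.mono_set (Set.Ioc_subset_Ioc_right h)
  · have h2 : IntegrableOn (fun u : ℝ => u) (Set.Ioc 1 s) ν := by
      refine Integrable.mono (g := fun _ => s)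
        (integrableOn_const (lt_of_le_of_lt
          (measure_mono Set.Ioc_subset_Ioi_self) (hν.tail_fin 1 one_pos)).ne)
        continuous_id.aestronglyMeasurable.restrict ?_
      filter_upwards [ae_restrict_mem measurableSet_Ioc] with u hu
      rw [Real.norm_eq_abs, Real.norm_eq_abs, abs_of_nonneg (by linarith [hu.1] : (0:ℝ) ≤ u),
        abs_of_nonneg (by linarith [hu.1, hu.2] : (0:ℝ) ≤ s)]
      exact hu.2
    refine (hν.integ.union h2).mono_set ?_
    intro x hx
    rcases le_or_gt x 1 with h' | h'
    · exact Or.inl ⟨hx.1, h'⟩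
    · exact Or.inr ⟨h', hx.2⟩

lemma my_alg1 {y s E T : ℝ} (hy : y ≠ 0) (hs : s ≠ 0) (hE : E ≠ 0) :
    (y / s) ^ 2 * (s / (3 * y ^ 2)) / 2 * (T / (E / s)) = 1 / (6 * E) * T := by
  field_simp
  ring

lemma my_alg2 {Kv a t w : ℝ} (ha : a ≠ 0) (ht : t ≠ 0) (hw : w ≠ 0) :
    Kv * (a * (t * w))⁻¹ * w = Kv / a * t⁻¹ := by
  field_simp

set_option maxHeartbeats 2000000 in
/-- Lemma 2.8: under (Poly-R₁), for any `κ > 0` there is `a₁ > 0` such that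
`exp(-κ s H⁻¹(1/t)) ≤ a₁ t w(s)` for all `t > 0` and `1/φ⁻¹(1/t) ≤ s < R₁/2`. -/
theorem exp_poly_tail_bound
    (ν : Measure ℝ) (hν : IsLevyMeasure ν)
    (φInv : ℝ → ℝ) (hφInv : IsPhiInv ν φInv)
    (HInv : ℝ → ℝ) (hHInv : IsHInv ν HInv)
    (R₁ : ℝ≥0∞) (c c' β₁ β₂ : ℝ)
    (hR₁ : 0 < R₁) (hc : 0 < c) (hc' : 0 < c') (hβ₁ : 0 < β₁) (hβ : β₁ ≤ β₂)
    (hpoly : PolyCond ν R₁ c c' β₁ β₂) :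
    ∀ κ : ℝ, 0 < κ → ∃ a₁ : ℝ, 0 < a₁ ∧
      ∀ t s : ℝ, 0 < t → (φInv (t⁻¹))⁻¹ ≤ s → ENNReal.ofReal s < R₁ / 2 →
        Real.exp (-(κ * (s * HInv (t⁻¹)))) ≤ a₁ * (t * levyTail ν s) := by
  intro κ hκ
  set n : ℕ := ⌈2 * β₂⌉₊ with hn
  set K : ℝ := c' * 3 ^ β₂ * ((n.factorial : ℝ) / κ ^ n) with hKdef
  have hK : 0 < K := by
    have h3 : (0:ℝ) < 3 ^ β₂ := Real.rpow_pos_of_pos (by norm_num) _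
    have hf : (0:ℝ) < (n.factorial : ℝ) := by exact_mod_cast Nat.factorial_pos n
    positivity
  set a : ℝ := 3 * (K + 1) with hadef
  have ha0 : 0 < a := by positivity
  refine ⟨Real.exp κ * a, by positivity, ?_⟩
  intro t s ht hs1 hs2
  have hφ := hφInv t⁻¹ (by positivity)
  have hH := hHInv t⁻¹ (by positivity)
  have hs0 : 0 < s := lt_of_lt_of_le (inv_pos.2 hφ.1) hs1
  have hsR : ENNReal.ofReal s < R₁ := lt_of_lt_of_le hs2 (ENNReal.half_le_self)
  have hws : 0 < levyTail ν s := by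
    have h := (hpoly s s hs0 le_rfl hsR).1
    rw [div_self hs0.ne', Real.one_rpow, mul_one] at h
    by_contra hcon
    push_neg at hcon
    have h0 : levyTail ν s = 0 := le_antisymm hcon ENNReal.toReal_nonneg
    rw [h0, div_zero] at h
    linarith
  have htw : 0 < t * levyTail ν s := mul_pos ht hws
  have hexpκ : (1:ℝ) ≤ Real.exp κ := Real.one_le_exp hκ.le
  by_cases hbig : Real.exp (-κ) ≤ a * (t * levyTail ν s)
  · have hLHS : Real.exp (-(κ * (s * HInv t⁻¹))) ≤ 1 := by
      rw [show (1:ℝ) = Real.exp 0 by simp]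
      refine Real.exp_le_exp.2 ?_
      exact neg_nonpos.2 (mul_pos hκ (mul_pos hs0 hH.1)).le
    have h1 : Real.exp κ * Real.exp (-κ) = 1 := by rw [← Real.exp_add]; simp
    calc Real.exp (-(κ * (s * HInv t⁻¹))) ≤ 1 := hLHS
      _ = Real.exp κ * Real.exp (-κ) := h1.symm
      _ ≤ Real.exp κ * (a * (t * levyTail ν s)) :=
          mul_le_mul_of_nonneg_left hbig (Real.exp_pos _).le
      _ = Real.exp κ * a * (t * levyTail ν s) := by ring
  · push_neg at hbig
    set A : ℝ := a * (t * levyTail ν s) with hAdef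
    have hA0 : 0 < A := mul_pos ha0 htw
    set y : ℝ := -Real.log A / κ with hydef
    have hy1 : 1 < y := by
      have hlog : Real.log A < -κ := by
        have := Real.log_lt_log hA0 hbig
        rwa [Real.log_exp] at this
      rw [hydef, lt_div_iff₀ hκ, one_mul]
      linarith
    have hy0 : 0 < y := by linarith
    have hexpy : Real.exp (-(κ * y)) = A := by
      rw [show -(κ * y) = Real.log A by rw [hydef]; field_simp]
      exact Real.exp_log hA0
    set lam' : ℝ := y / s with hlam'def
    have hlam'0 : 0 < lam' := div_pos hy0 hs0
    set σ : ℝ := s / (3 * y ^ 2) with hσdef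
    have hσ0 : 0 < σ := by positivity
    have hσs : σ ≤ s := by
      rw [hσdef, div_le_iff₀ (by positivity)]
      have h3 : (1:ℝ) ≤ 3 * y ^ 2 := by nlinarith [sq_nonneg (y - 1), hy1]
      calc s = s * 1 := (mul_one s).symm
        _ ≤ s * (3 * y ^ 2) := mul_le_mul_of_nonneg_left h3 hs0.le
    -- G and its bounds
    set G : ℝ → ℝ := fun u => 1 - Real.exp (-(lam' * u)) - lam' * (u * Real.exp (-(lam' * u))) with hGdef
    have hGint : Integrable G ν :=
      (my_int_one_sub_exp hν hlam'0).sub ((my_int_xexp hν hlam'0).const_mul lam')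
    have hGle1 : ∀ u : ℝ, 0 < u → G u ≤ 1 := by
      intro u hu
      have h := my_g_le_one (x := lam' * u) (by positivity)
      calc G u = 1 - Real.exp (-(lam' * u)) - (lam' * u) * Real.exp (-(lam' * u)) := by
            rw [hGdef]; ring
        _ ≤ 1 := h
    have hGsq : ∀ u : ℝ, 0 < u → G u ≤ (lam' * u) ^ 2 / 2 := by
      intro u hu
      have h := my_g_le_half_sq (x := lam' * u) (by positivity)
      calc G u = 1 - Real.exp (-(lam' * u)) - (lam' * u) * Real.exp (-(lam' * u)) := by
            rw [hGdef]; ring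
        _ ≤ (lam' * u) ^ 2 / 2 := h
    -- decomposition
    have hres : ν.restrict (Set.Ioi 0) = ν :=
      Measure.restrict_eq_self_of_ae_mem (by filter_upwards [my_ae_pos hν] with u hu using hu)
    have d2 : Disjoint (Set.Ioc (0:ℝ) s) (Set.Ioi s) := by
      rw [Set.disjoint_left]; rintro x ⟨_, hx2⟩ hx3; exact absurd hx3 (not_lt.2 hx2)
    have d1 : Disjoint (Set.Ioc (0:ℝ) σ) (Set.Ioc σ s) := by
      rw [Set.disjoint_left]; rintro x ⟨_, hx2⟩ ⟨hx3, _⟩; exact absurd hx3 (not_lt.2 hx2)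
    have e1 : Set.Ioc (0:ℝ) σ ∪ Set.Ioc σ s = Set.Ioc 0 s := Set.Ioc_union_Ioc_eq_Ioc hσ0.le hσs
    have e2 : Set.Ioc (0:ℝ) s ∪ Set.Ioi s = Set.Ioi 0 := Set.Ioc_union_Ioi_eq_Ioi hs0.le
    have hdecomp : ∫ u, G u ∂ν =
        (∫ u in Set.Ioc 0 σ, G u ∂ν) + (∫ u in Set.Ioc σ s, G u ∂ν)
          + (∫ u in Set.Ioi s, G u ∂ν) := by
      calc ∫ u, G u ∂ν = ∫ u in Set.Ioi 0, G u ∂ν := by rw [hres]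
        _ = (∫ u in Set.Ioc 0 s, G u ∂ν) + (∫ u in Set.Ioi s, G u ∂ν) := by
            rw [← e2, setIntegral_union d2 measurableSet_Ioi hGint.integrableOn hGint.integrableOn]
        _ = _ := by
            rw [← e1, setIntegral_union d1 measurableSet_Ioc hGint.integrableOn hGint.integrableOn]
    -- piece 1
    have hid_s : IntegrableOn (fun u : ℝ => u) (Set.Ioc 0 s) ν := my_int_id_Ioc hν hs0
    have hid_σ : IntegrableOn (fun u : ℝ => u) (Set.Ioc 0 σ) ν :=
      hid_s.mono_set (Set.Ioc_subset_Ioc_right hσs)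
    have hB1a : ∫ u in Set.Ioc 0 σ, G u ∂ν ≤ ∫ u in Set.Ioc 0 σ, (lam' ^ 2 * σ / 2) * u ∂ν := by
      refine setIntegral_mono_on hGint.integrableOn (hid_σ.const_mul _) measurableSet_Ioc ?_
      intro x hx
      refine (hGsq x hx.1).trans ?_
      have h2 : lam' ^ 2 * x * (σ - x) ≥ 0 :=
        mul_nonneg (mul_nonneg (sq_nonneg lam') hx.1.le) (sub_nonneg.2 hx.2)
      have hexpand : (lam' * x) ^ 2 / 2 + lam' ^ 2 * x * (σ - x) / 2
          = lam' ^ 2 * σ / 2 * x := by ring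
      linarith [h2, hexpand.le, hexpand.ge]
    have hB1b : ∫ u in Set.Ioc 0 σ, (lam' ^ 2 * σ / 2) * u ∂ν
        = (lam' ^ 2 * σ / 2) * ∫ u in Set.Ioc 0 σ, u ∂ν := integral_const_mul _ _
    have hB1c : ∫ u in Set.Ioc 0 σ, (u:ℝ) ∂ν ≤ ∫ u in Set.Ioc 0 s, (u:ℝ) ∂ν := by
      refine setIntegral_mono_set hid_s ?_ (HasSubset.Subset.eventuallyLE
        (Set.Ioc_subset_Ioc_right hσs))
      filter_upwards [ae_restrict_mem measurableSet_Ioc] with x hx using hx.1.le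
    -- m bound
    have hinv_le : s⁻¹ ≤ φInv t⁻¹ := by
      have h := inv_anti₀ (inv_pos.2 hφ.1) hs1
      rwa [inv_inv] at h
    have he1 : Real.exp (-1) < 1/2 := by
      have h2 : (2:ℝ) < Real.exp 1 := by
        have := Real.exp_one_gt_d9; linarith
      rw [Real.exp_neg, inv_lt_comm₀ (Real.exp_pos 1) (by norm_num : (0:ℝ) < 1/2)]
      norm_num
      linarith
    have hepos : (0:ℝ) < 1 - Real.exp (-1) := by linarith
    have hm : ((1 - Real.exp (-1)) / s) * ∫ u in Set.Ioc 0 s, (u:ℝ) ∂ν ≤ t⁻¹ := by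
      have step1 : ∫ u in Set.Ioc 0 s, ((1 - Real.exp (-1)) / s) * u ∂ν
          ≤ ∫ u in Set.Ioc 0 s, (1 - Real.exp (-(s⁻¹ * u))) ∂ν := by
        refine setIntegral_mono_on (hid_s.const_mul _)
          (my_int_one_sub_exp hν (inv_pos.2 hs0)).integrableOn measurableSet_Ioc ?_
        intro x hx
        have hx1 : x / s ≤ 1 := (div_le_one hs0).2 hx.2
        have hx0 : 0 ≤ x / s := div_nonneg hx.1.le hs0.le
        have h := my_exp_convex hx0 hx1
        have hrw : s⁻¹ * x = x / s := by rw [inv_mul_eq_div]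
        rw [hrw]
        calc ((1 - Real.exp (-1)) / s) * x = (1 - Real.exp (-1)) * (x / s) := by ring
          _ ≤ 1 - Real.exp (-(x / s)) := h
      have step2 : ∫ u in Set.Ioc 0 s, (1 - Real.exp (-(s⁻¹ * u))) ∂ν
          ≤ laplaceExp ν s⁻¹ := by
        refine setIntegral_le_integral (my_int_one_sub_exp hν (inv_pos.2 hs0)) ?_
        filter_upwards [my_ae_pos hν] with u hu
        have : Real.exp (-(s⁻¹ * u)) ≤ 1 := by
          rw [show (1:ℝ) = Real.exp 0 by simp]
          refine Real.exp_le_exp.2 ?_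
          have : 0 ≤ s⁻¹ * u := by positivity
          linarith
        simp only [Pi.zero_apply]
        linarith
      have step3 : laplaceExp ν s⁻¹ ≤ t⁻¹ := by
        rw [← hφ.2]
        exact my_phi_mono hν (inv_pos.2 hs0) hinv_le
      calc ((1 - Real.exp (-1)) / s) * ∫ u in Set.Ioc 0 s, (u:ℝ) ∂ν
          = ∫ u in Set.Ioc 0 s, ((1 - Real.exp (-1)) / s) * u ∂ν := (integral_const_mul _ _).symm
        _ ≤ laplaceExp ν s⁻¹ := step1.trans step2
        _ ≤ t⁻¹ := step3
    have hmint : ∫ u in Set.Ioc 0 s, (u:ℝ) ∂ν ≤ t⁻¹ / ((1 - Real.exp (-1)) / s) := by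
      rw [le_div_iff₀ (div_pos hepos hs0)]
      calc (∫ u in Set.Ioc 0 s, (u:ℝ) ∂ν) * ((1 - Real.exp (-1)) / s)
          = ((1 - Real.exp (-1)) / s) * ∫ u in Set.Ioc 0 s, (u:ℝ) ∂ν := by ring
        _ ≤ t⁻¹ := hm
    have hmid_nonneg : (0:ℝ) ≤ ∫ u in Set.Ioc 0 σ, (u:ℝ) ∂ν := by
      refine setIntegral_nonneg measurableSet_Ioc ?_
      intro x hx; exact hx.1.le
    have hB1 : ∫ u in Set.Ioc 0 σ, G u ∂ν ≤ 1 / (6 * (1 - Real.exp (-1))) * t⁻¹ := by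
      have hcoef : (0:ℝ) ≤ lam' ^ 2 * σ / 2 :=
        div_nonneg (mul_nonneg (sq_nonneg lam') hσ0.le) (by norm_num)
      have h1 : ∫ u in Set.Ioc 0 σ, G u ∂ν
          ≤ (lam' ^ 2 * σ / 2) * (t⁻¹ / ((1 - Real.exp (-1)) / s)) := by
        calc ∫ u in Set.Ioc 0 σ, G u ∂ν
            ≤ (lam' ^ 2 * σ / 2) * ∫ u in Set.Ioc 0 σ, (u:ℝ) ∂ν := by rw [← hB1b]; exact hB1a
          _ ≤ (lam' ^ 2 * σ / 2) * (t⁻¹ / ((1 - Real.exp (-1)) / s)) :=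
              mul_le_mul_of_nonneg_left (hB1c.trans hmint) hcoef
      refine h1.trans (le_of_eq ?_)
      rw [hlam'def, hσdef]
      exact my_alg1 hy0.ne' hs0.ne' hepos.ne'
    -- piece 2
    have hν_Ioc_fin : ν (Set.Ioc σ s) < ⊤ :=
      lt_of_le_of_lt (measure_mono Set.Ioc_subset_Ioi_self) (hν.tail_fin σ hσ0)
    have hB2a : ∫ u in Set.Ioc σ s, G u ∂ν ≤ levyTail ν σ := by
      calc ∫ u in Set.Ioc σ s, G u ∂ν ≤ ∫ _ in Set.Ioc σ s, (1:ℝ) ∂ν := by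
            refine setIntegral_mono_on hGint.integrableOn
              (integrableOn_const hν_Ioc_fin.ne) measurableSet_Ioc ?_
            intro x hx
            exact hGle1 x (hσ0.trans hx.1)
        _ = (ν (Set.Ioc σ s)).toReal := by rw [setIntegral_const]; simp [Measure.real]
        _ ≤ levyTail ν σ := by
            refine ENNReal.toReal_mono (hν.tail_fin σ hσ0).ne
              (measure_mono Set.Ioc_subset_Ioi_self)
    have hp2 := (hpoly σ s hσ0 hσs hsR).2
    have hwσ : levyTail ν σ ≤ c' * (s / σ) ^ β₂ * levyTail ν s := by
      have h := (div_le_iff₀ hws).1 hp2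
      exact h
    have hratio : s / σ = 3 * y ^ 2 := by
      rw [hσdef]
      field_simp
    have hpow : (3 * y ^ 2 : ℝ) ^ β₂ ≤ 3 ^ β₂ * ((n.factorial : ℝ) / κ ^ n) * Real.exp (κ * y) := by
      have h3y : (3 * y ^ 2 : ℝ) ^ β₂ = 3 ^ β₂ * (y ^ 2 : ℝ) ^ β₂ :=
        Real.mul_rpow (by norm_num) (sq_nonneg y)
      have hy2 : ((y ^ 2 : ℝ)) ^ β₂ = y ^ (2 * β₂) := by
        rw [← Real.rpow_natCast y 2, ← Real.rpow_mul hy0.le]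
        norm_num
      have hyn : y ^ (2 * β₂) ≤ y ^ (n : ℝ) :=
        Real.rpow_le_rpow_of_exponent_le hy1.le (Nat.le_ceil _)
      have hyn' : y ^ (n : ℝ) = y ^ n := Real.rpow_natCast y n
      have hfact : y ^ n ≤ (n.factorial : ℝ) / κ ^ n * Real.exp (κ * y) := by
        have hsum : (κ * y) ^ n / (n.factorial : ℝ) ≤ Real.exp (κ * y) := by
          calc (κ * y) ^ n / (n.factorial : ℝ)
              ≤ ∑ i ∈ Finset.range (n + 1), (κ * y) ^ i / (i.factorial : ℝ) := by
                refine Finset.single_le_sum (f := fun i => (κ * y) ^ i / (i.factorial : ℝ)) ?_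
                  (Finset.self_mem_range_succ n)
                intro i _
                positivity
            _ ≤ Real.exp (κ * y) := Real.sum_le_exp_of_nonneg (by positivity) _
        have hnf : (0:ℝ) < (n.factorial : ℝ) := by exact_mod_cast Nat.factorial_pos n
        rw [div_le_iff₀ hnf, mul_pow] at hsum
        rw [div_mul_eq_mul_div, le_div_iff₀ (by positivity : (0:ℝ) < κ ^ n)]
        linarith [hsum]
      have h3pos : (0:ℝ) ≤ (3:ℝ) ^ β₂ := (Real.rpow_pos_of_pos (by norm_num) _).le
      calc (3 * y ^ 2 : ℝ) ^ β₂ = 3 ^ β₂ * (y ^ 2 : ℝ) ^ β₂ := h3y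
        _ = 3 ^ β₂ * y ^ (2 * β₂) := by rw [hy2]
        _ ≤ 3 ^ β₂ * y ^ n := by
            refine mul_le_mul_of_nonneg_left ?_ h3pos
            rw [← hyn']; exact hyn
        _ ≤ 3 ^ β₂ * ((n.factorial : ℝ) / κ ^ n * Real.exp (κ * y)) :=
            mul_le_mul_of_nonneg_left hfact h3pos
        _ = 3 ^ β₂ * ((n.factorial : ℝ) / κ ^ n) * Real.exp (κ * y) := by ring
    have hexpy' : Real.exp (κ * y) = A⁻¹ := by
      rw [← hexpy, Real.exp_neg, inv_inv]
    have hB2 : ∫ u in Set.Ioc σ s, G u ∂ν ≤ K / a * t⁻¹ := by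
      have h1 : ∫ u in Set.Ioc σ s, G u ∂ν ≤ c' * (3 * y ^ 2) ^ β₂ * levyTail ν s := by
        rw [← hratio]
        exact hB2a.trans hwσ
      have h2 : c' * (3 * y ^ 2) ^ β₂ * levyTail ν s
          ≤ K * Real.exp (κ * y) * levyTail ν s := by
        refine mul_le_mul_of_nonneg_right ?_ hws.le
        calc c' * (3 * y ^ 2) ^ β₂ ≤ c' * (3 ^ β₂ * ((n.factorial : ℝ) / κ ^ n) * Real.exp (κ * y)) :=
              mul_le_mul_of_nonneg_left hpow hc'.le
          _ = K * Real.exp (κ * y) := by rw [hKdef]; ring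
      have h3 : K * Real.exp (κ * y) * levyTail ν s = K / a * t⁻¹ := by
        rw [hexpy', hAdef]
        exact my_alg2 ha0.ne' ht.ne' hws.ne'
      linarith
    -- piece 3
    have hB3 : ∫ u in Set.Ioi s, G u ∂ν ≤ 1 / a * t⁻¹ := by
      have h1 : ∫ u in Set.Ioi s, G u ∂ν ≤ ∫ _ in Set.Ioi s, (1:ℝ) ∂ν := by
        refine setIntegral_mono_on hGint.integrableOn
          (integrableOn_const (hν.tail_fin s hs0).ne) measurableSet_Ioi ?_
        intro x hx
        exact hGle1 x (hs0.trans hx)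
      have h2 : ∫ _ in Set.Ioi s, (1:ℝ) ∂ν = levyTail ν s := by
        rw [setIntegral_const]; simp [levyTail, Measure.real]
      have h3 : levyTail ν s ≤ 1 / a * t⁻¹ := by
        have hsm : a * (t * levyTail ν s) ≤ 1 := by
          have : Real.exp (-κ) ≤ Real.exp 0 := Real.exp_le_exp.2 (by linarith)
          rw [Real.exp_zero] at this
          linarith
        have h4 : levyTail ν s * (a * t) ≤ 1 := by
          calc levyTail ν s * (a * t) = a * (t * levyTail ν s) := by ring
            _ ≤ 1 := hsm
        have h5 : levyTail ν s ≤ 1 / (a * t) :=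
          (le_div_iff₀ (mul_pos ha0 ht)).2 h4
        have heq : (1:ℝ) / (a * t) = 1 / a * t⁻¹ := by field_simp
        linarith [h5, heq.le, heq.ge]
      linarith [h1, h2.le, h2.ge, h3]
    -- final assembly
    have hrepr : Hfun ν lam' = ∫ u, G u ∂ν := by
      rw [hGdef]; exact my_Hfun_repr hν hlam'0
    have htinv : (0:ℝ) < t⁻¹ := by positivity
    have hco : 1 / (6 * (1 - Real.exp (-1))) < 1/3 := by
      have h6 : (3:ℝ) < 6 * (1 - Real.exp (-1)) := by linarith
      rw [div_lt_div_iff₀ (by linarith) (by norm_num)]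
      linarith
    have hK1 : K + 1 ≠ 0 := by positivity
    have hKa : K / a * t⁻¹ + 1 / a * t⁻¹ = 1/3 * t⁻¹ := by
      rw [hadef]
      field_simp
    have hmain : Hfun ν lam' < t⁻¹ := by
      have e := hrepr.trans hdecomp
      have hco' : 1/(6*(1 - Real.exp (-1))) * t⁻¹ < 1/3 * t⁻¹ :=
        mul_lt_mul_of_pos_right hco htinv
      linarith [hB1, hB2, hB3, hKa, e.le, e.ge, hco', htinv]
    have hle : lam' ≤ HInv t⁻¹ := by
      by_contra hlt
      push_neg at hlt
      have hmono := my_Hfun_mono hν hH.1 hlt.le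
      rw [hH.2] at hmono
      linarith
    have hsy : y ≤ s * HInv t⁻¹ := by
      have h1 : s * lam' = y := by
        rw [hlam'def]
        field_simp
      calc y = s * lam' := h1.symm
        _ ≤ s * HInv t⁻¹ := mul_le_mul_of_nonneg_left hle hs0.le
    have hfinal1 : Real.exp (-(κ * (s * HInv t⁻¹))) ≤ A := by
      rw [← hexpy]
      exact Real.exp_le_exp.2 (neg_le_neg (mul_le_mul_of_nonneg_left hsy hκ.le))
    calc Real.exp (-(κ * (s * HInv t⁻¹))) ≤ A := hfinal1
      _ = 1 * (a * (t * levyTail ν s)) := by rw [hAdef]; ring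
      _ ≤ Real.exp κ * (a * (t * levyTail ν s)) :=
          mul_le_mul_of_nonneg_right hexpκ (mul_pos ha0 htw).le
      _ = Real.exp κ * a * (t * levyTail ν s) := by ring
end
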